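/- arXiv:2302.01711 — 10 statements merged into one kernel-verified Lean document; each statement's English description precedes it below -/
import Mathlib

section
/- Let c > 0, let z = x + iv ∈ ℂ with v > 0, and suppose (z, m, g) satisfies system (S) with Im m ≥ 0, Im g > 0, and A₂ < ∞, B₂ < ∞. Then V₀ = |g|⁻² − c·A₂ > 0, and moreover (Im g)·V₀ = c·B₂·(Im m) + v. -/
open MeasureTheory Complex Filter Topology

noncomputable section

/-- The denominator `1 + s·g + t·m` appearing in system (S). -/
def den (m g : ℂ) (p : ℝ × ℝ) : ℂ := 1 + p.1 * g + p.2 * m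

/-- `A₁ = ∫ s/|1+s·g+t·m|² dH`. -/
def A1 (H : Measure (ℝ × ℝ)) (m g : ℂ) : ℝ :=
  ∫ p, p.1 / ‖den m g p‖ ^ 2 ∂H

/-- `A₂ = ∫ s·t/|1+s·g+t·m|² dH`. -/
def A2 (H : Measure (ℝ × ℝ)) (m g : ℂ) : ℝ :=
  ∫ p, p.1 * p.2 / ‖den m g p‖ ^ 2 ∂H

/-- `B_j = ∫ t^j/|1+s·g+t·m|² dH`. -/
def B (H : Measure (ℝ × ℝ)) (m g : ℂ) (j : ℕ) : ℝ :=
  ∫ p, p.2 ^ j / ‖den m g p‖ ^ 2 ∂H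

/-- `V₀ = |g|⁻² − c·A₂`. -/
def V0 (H : Measure (ℝ × ℝ)) (c : ℝ) (m g : ℂ) : ℝ :=
  (‖g‖ ^ 2)⁻¹ - c * A2 H m g

/-- `V = c²·A₁·B₂/V₀ + c·B₁`. -/
def V (H : Measure (ℝ × ℝ)) (c : ℝ) (m g : ℂ) : ℝ :=
  c ^ 2 * A1 H m g * B H m g 2 / V0 H c m g + c * B H m g 1

/-- `(z, m, g)` satisfies system (S): `g ≠ 0`, the denominator is a.e. nonzero, the two
integrands are integrable, and the two equations hold. -/
def SatS (H : Measure (ℝ × ℝ)) (c : ℝ) (z m g : ℂ) : Prop :=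
  g ≠ 0 ∧ (∀ᵐ p ∂H, den m g p ≠ 0) ∧
    Integrable (fun p => (den m g p)⁻¹) H ∧
    Integrable (fun p => (p.2 : ℂ) / den m g p) H ∧
    z * m + (1 - (c : ℂ)) + c * ∫ p, (den m g p)⁻¹ ∂H = 0 ∧
    z + 1 / g - c * ∫ p, (p.2 : ℂ) / den m g p ∂H = 0

/-- Integrability of the integrand of `A₁`. -/
def IntA1 (H : Measure (ℝ × ℝ)) (m g : ℂ) : Prop :=
  Integrable (fun p : ℝ × ℝ => p.1 / ‖den m g p‖ ^ 2) H

/-- Integrability of the integrand of `A₂`. -/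
def IntA2 (H : Measure (ℝ × ℝ)) (m g : ℂ) : Prop :=
  Integrable (fun p : ℝ × ℝ => p.1 * p.2 / ‖den m g p‖ ^ 2) H

/-- Integrability of the integrand of `B_j`. -/
def IntB (H : Measure (ℝ × ℝ)) (m g : ℂ) (j : ℕ) : Prop :=
  Integrable (fun p : ℝ × ℝ => p.2 ^ j / ‖den m g p‖ ^ 2) H


lemma im_div_den (m g : ℂ) (p : ℝ × ℝ) :
    ((p.2 : ℂ) / den m g p).im =
      -g.im * (p.1 * p.2 / ‖den m g p‖ ^ 2)
        - m.im * (p.2 ^ 2 / ‖den m g p‖ ^ 2) := by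
  rw [Complex.div_im, Complex.sq_norm]
  simp only [den, Complex.add_im, Complex.add_re, Complex.mul_im, Complex.mul_re,
    Complex.one_im, Complex.one_re, Complex.ofReal_re, Complex.ofReal_im]
  ring

theorem stmt0 (H : Measure (ℝ × ℝ)) [IsProbabilityMeasure H]
    (hHsupp : ∀ᵐ p ∂H, 0 ≤ p.1 ∧ 0 ≤ p.2)
    (c : ℝ) (hc : 0 < c)
    (z m g : ℂ) (hz : 0 < z.im)
    (hS : SatS H c z m g)
    (hm : 0 ≤ m.im) (hg : 0 < g.im)
    (hA2 : IntA2 H m g) (hB2 : IntB H m g 2) :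
    0 < V0 H c m g ∧
      g.im * V0 H c m g = c * B H m g 2 * m.im + z.im := by
  obtain ⟨hg0, hae, hint1, hint2, heq1, heq2⟩ := hS
  have hB2nn : 0 ≤ B H m g 2 := by
    refine integral_nonneg fun p => ?_
    exact div_nonneg (sq_nonneg _) (sq_nonneg _)
  have hIim : (∫ p, (p.2 : ℂ) / den m g p ∂H).im
      = -g.im * A2 H m g - m.im * B H m g 2 := by
    have h := Complex.imCLM.integral_comp_comm hint2
    simp only [Complex.imCLM_apply] at h
    rw [← h]
    simp only [im_div_den]
    rw [integral_sub ((hA2.const_mul _)) ((hB2.const_mul _)),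
      integral_const_mul, integral_const_mul]
    rfl
  have him := congrArg Complex.im heq2
  simp only [Complex.add_im, Complex.sub_im, Complex.mul_im, Complex.zero_im,
    Complex.ofReal_re, Complex.ofReal_im, one_div, Complex.inv_im,
    hIim] at him
  have hkey : g.im * V0 H c m g = c * B H m g 2 * m.im + z.im := by
    have hsq : ‖g‖ ^ 2 = Complex.normSq g := Complex.sq_norm g
    simp only [V0, hsq]
    have hns : Complex.normSq g ≠ 0 := Complex.normSq_pos.2 hg0 |>.ne'
    simp only [zero_mul, add_zero] at him
    linear_combination -him
  refine ⟨?_, hkey⟩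
  have hpos : 0 < c * B H m g 2 * m.im + z.im := by
    have : 0 ≤ c * B H m g 2 * m.im := mul_nonneg (mul_nonneg hc.le hB2nn) hm
    linarith
  nlinarith [hkey, hpos, hg]


end
end

section
/- Let c > 0, let z = x + iv ∈ ℂ with v > 0, and suppose (z, m, g) satisfies system (S) with Im m ≥ 0, Im g > 0, and with A₁, A₂, B₀, B₁, B₂ all finite. Then V₀ > 0 and the identity (Im m)·|z|² = V²·(Im m) + (V·c·A₁ + c²·A₁·B₁)·v/V₀ + (1 − c)·v + c·B₀·v holds. -/
open MeasureTheory Complex Filter Topology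

noncomputable section

lemma im_mul_inv (α d : ℂ) : (α * d⁻¹).im = (α * (starRingEnd ℂ) d).im / ‖d‖ ^ 2 := by
  rcases eq_or_ne d 0 with h | h
  · simp [h]
  · have hn : Complex.normSq d ≠ 0 := (Complex.normSq_pos.mpr h).ne'
    rw [Complex.inv_def, Complex.sq_norm, ← mul_assoc]
    simp only [Complex.mul_im, div_eq_mul_inv, Complex.ofReal_re, Complex.ofReal_im]
    simp [Complex.mul_im]

lemma im_mul_conj_den (α m g : ℂ) (p : ℝ × ℝ) :
    (α * (starRingEnd ℂ) (den m g p)).im =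
      α.im + p.1 * (α * (starRingEnd ℂ) g).im + p.2 * (α * (starRingEnd ℂ) m).im := by
  simp [den, map_add, map_mul, Complex.conj_ofReal, mul_add, Complex.add_im, Complex.mul_im]
  ring

lemma key1 {H : Measure (ℝ × ℝ)} {m g : ℂ} (α : ℂ)
    (hInt : Integrable (fun p => (den m g p)⁻¹) H)
    (hA1 : IntA1 H m g) (hB0 : IntB H m g 0) (hB1 : IntB H m g 1) :
    (α * ∫ p, (den m g p)⁻¹ ∂H).im =
      α.im * B H m g 0 + (α * (starRingEnd ℂ) g).im * A1 H m g
        + (α * (starRingEnd ℂ) m).im * B H m g 1 := by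
  have hI : ∫ p, (α * (den m g p)⁻¹).im ∂H = (∫ p, α * (den m g p)⁻¹ ∂H).im := by
    have h := integral_im (μ := H) (f := fun p => α * (den m g p)⁻¹) (hInt.const_mul α)
    simpa [← RCLike.im_eq_complex_im] using h
  rw [← integral_const_mul, ← hI]
  have hpt : ∀ p : ℝ × ℝ, (α * (den m g p)⁻¹).im =
      α.im * (p.2 ^ (0:ℕ) / ‖den m g p‖ ^ 2)
        + ((α * (starRingEnd ℂ) g).im * (p.1 / ‖den m g p‖ ^ 2)
          + (α * (starRingEnd ℂ) m).im * (p.2 ^ (1:ℕ) / ‖den m g p‖ ^ 2)) := by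
    intro p
    rw [im_mul_inv, im_mul_conj_den]
    rw [pow_zero, pow_one]
    ring
  rw [integral_congr_ae (Filter.Eventually.of_forall hpt)]
  have hsum : Integrable (fun a : ℝ × ℝ =>
      (α * (starRingEnd ℂ) g).im * (a.1 / ‖den m g a‖ ^ 2)
        + (α * (starRingEnd ℂ) m).im * (a.2 ^ (1:ℕ) / ‖den m g a‖ ^ 2)) H :=
    (hA1.const_mul _).add (hB1.const_mul _)
  rw [integral_add (hB0.const_mul _) hsum,
      integral_add (hA1.const_mul _) (hB1.const_mul _),
      integral_const_mul, integral_const_mul, integral_const_mul]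
  simp [A1, B]
  ring

lemma key2 {H : Measure (ℝ × ℝ)} {m g : ℂ} (α : ℂ)
    (hInt : Integrable (fun p => (p.2 : ℂ) / den m g p) H)
    (hA2 : IntA2 H m g) (hB1 : IntB H m g 1) (hB2 : IntB H m g 2) :
    (α * ∫ p, (p.2 : ℂ) / den m g p ∂H).im =
      α.im * B H m g 1 + (α * (starRingEnd ℂ) g).im * A2 H m g
        + (α * (starRingEnd ℂ) m).im * B H m g 2 := by
  have hI : ∫ p, (α * ((p.2 : ℂ) / den m g p)).im ∂H = (∫ p, α * ((p.2 : ℂ) / den m g p) ∂H).im := by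
    have h := integral_im (μ := H) (f := fun p => α * ((p.2 : ℂ) / den m g p)) (hInt.const_mul α)
    simpa [← RCLike.im_eq_complex_im] using h
  rw [← integral_const_mul, ← hI]
  have hpt : ∀ p : ℝ × ℝ, (α * ((p.2 : ℂ) / den m g p)).im =
      α.im * (p.2 ^ (1:ℕ) / ‖den m g p‖ ^ 2)
        + ((α * (starRingEnd ℂ) g).im * (p.1 * p.2 / ‖den m g p‖ ^ 2)
          + (α * (starRingEnd ℂ) m).im * (p.2 ^ (2:ℕ) / ‖den m g p‖ ^ 2)) := by
    intro p
    have hrw : α * ((p.2 : ℂ) / den m g p) = (α * (p.2:ℂ)) * (den m g p)⁻¹ := by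
      rw [div_eq_mul_inv]; ring
    rw [hrw, im_mul_inv, im_mul_conj_den]
    have h1 : (α * (p.2:ℂ)).im = p.2 * α.im := by simp [Complex.mul_im, mul_comm]
    have h2 : (α * (p.2:ℂ) * (starRingEnd ℂ) g).im = p.2 * (α * (starRingEnd ℂ) g).im := by
      have : α * (p.2:ℂ) * (starRingEnd ℂ) g = (p.2:ℂ) * (α * (starRingEnd ℂ) g) := by ring
      rw [this]; simp [Complex.mul_im]
    have h3 : (α * (p.2:ℂ) * (starRingEnd ℂ) m).im = p.2 * (α * (starRingEnd ℂ) m).im := by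
      have : α * (p.2:ℂ) * (starRingEnd ℂ) m = (p.2:ℂ) * (α * (starRingEnd ℂ) m) := by ring
      rw [this]; simp [Complex.mul_im]
    rw [h1, h2, h3]
    ring
  rw [integral_congr_ae (Filter.Eventually.of_forall hpt)]
  have hsum : Integrable (fun a : ℝ × ℝ =>
      (α * (starRingEnd ℂ) g).im * (a.1 * a.2 / ‖den m g a‖ ^ 2)
        + (α * (starRingEnd ℂ) m).im * (a.2 ^ (2:ℕ) / ‖den m g a‖ ^ 2)) H :=
    (hA2.const_mul _).add (hB2.const_mul _)
  rw [integral_add (hB1.const_mul _) hsum,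
      integral_add (hA2.const_mul _) (hB2.const_mul _),
      integral_const_mul, integral_const_mul, integral_const_mul]
  simp [A2, B]
  ring

theorem stmt1 (H : Measure (ℝ × ℝ)) [IsProbabilityMeasure H]
    (hHsupp : ∀ᵐ p ∂H, 0 ≤ p.1 ∧ 0 ≤ p.2)
    (c : ℝ) (hc : 0 < c)
    (z m g : ℂ) (hz : 0 < z.im)
    (hS : SatS H c z m g)
    (hm : 0 ≤ m.im) (hg : 0 < g.im)
    (hA1 : IntA1 H m g) (hA2 : IntA2 H m g)
    (hB0 : IntB H m g 0) (hB1 : IntB H m g 1) (hB2 : IntB H m g 2) :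
    0 < V0 H c m g ∧
      m.im * ‖z‖ ^ 2 =
        V H c m g ^ 2 * m.im +
          (V H c m g * c * A1 H m g + c ^ 2 * A1 H m g * B H m g 1) * z.im / V0 H c m g +
          (1 - c) * z.im + c * B H m g 0 * z.im := by
  obtain ⟨hgne, _hae, hIint, hJint, heq1, heq2⟩ := hS
  have hb2 : 0 ≤ B H m g 2 := integral_nonneg fun p => by positivity
  -- E1
  have h1 := congrArg Complex.im heq1
  rw [Complex.add_im, Complex.add_im, key1 (c:ℂ) hIint hA1 hB0 hB1] at h1
  simp only [Complex.mul_im, Complex.mul_re, Complex.sub_im, Complex.one_im, Complex.ofReal_im,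
    Complex.ofReal_re, Complex.conj_re, Complex.conj_im, Complex.zero_im] at h1
  have E1 : z.re * m.im + z.im * m.re = c * g.im * A1 H m g + c * m.im * B H m g 1 := by
    linear_combination h1
  -- E2
  have h2 := congrArg Complex.im heq2
  rw [Complex.sub_im, Complex.add_im, key2 (c:ℂ) hJint hA2 hB1 hB2, one_div,
    Complex.inv_im, ← Complex.sq_norm] at h2
  simp only [Complex.mul_im, Complex.mul_re, Complex.ofReal_im, Complex.ofReal_re,
    Complex.conj_re, Complex.conj_im, Complex.zero_im] at h2
  have hng : (‖g‖) ^ 2 ≠ 0 := pow_ne_zero 2 (norm_ne_zero_iff.mpr hgne)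
  have E2 : g.im * V0 H c m g = z.im + c * m.im * B H m g 2 := by
    simp only [V0]
    linear_combination -h2
  -- E3
  have hg1 : g * g⁻¹ = 1 := mul_inv_cancel₀ hgne
  have h3c : z * g + 1 - ((c:ℂ) * g) * (∫ p, (p.2 : ℂ) / den m g p ∂H) = 0 := by
    linear_combination g * heq2 - hg1
  have h3 := congrArg Complex.im h3c
  rw [Complex.sub_im, Complex.add_im, key2 ((c:ℂ) * g) hJint hA2 hB1 hB2] at h3
  simp only [Complex.mul_im, Complex.mul_re, Complex.one_im, Complex.ofReal_im,
    Complex.ofReal_re, Complex.conj_re, Complex.conj_im, Complex.zero_im] at h3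
  have E3 : z.re * g.im + z.im * g.re
      = c * g.im * B H m g 1 + c * (g.im * m.re - g.re * m.im) * B H m g 2
        + c * 0 * A2 H m g := by
    linear_combination h3
  -- E4
  have h4c : (starRingEnd ℂ) m * z + (starRingEnd ℂ) m * g⁻¹
      - ((starRingEnd ℂ) m * (c:ℂ)) * (∫ p, (p.2 : ℂ) / den m g p ∂H) = 0 := by
    linear_combination (starRingEnd ℂ) m * heq2
  have h4 := congrArg Complex.im h4c
  rw [Complex.sub_im, Complex.add_im, im_mul_inv ((starRingEnd ℂ) m) g,
    key2 ((starRingEnd ℂ) m * (c:ℂ)) hJint hA2 hB1 hB2] at h4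
  simp only [Complex.mul_im, Complex.mul_re, Complex.ofReal_im, Complex.ofReal_re,
    Complex.conj_re, Complex.conj_im, Complex.zero_im] at h4
  have E4 : z.im * m.re - z.re * m.im + c * m.im * B H m g 1
      + 2 * c * m.re * m.im * B H m g 2 = (m.re * g.im + m.im * g.re) * V0 H c m g := by
    simp only [V0]
    linear_combination h4
  -- E5
  have h5c : (starRingEnd ℂ) z * (z * m) + (starRingEnd ℂ) z * (1 - (c:ℂ))
      + ((starRingEnd ℂ) z * (c:ℂ)) * (∫ p, (den m g p)⁻¹ ∂H) = 0 := by
    linear_combination (starRingEnd ℂ) z * heq1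
  have h5 := congrArg Complex.im h5c
  rw [Complex.add_im, Complex.add_im,
    key1 ((starRingEnd ℂ) z * (c:ℂ)) hIint hA1 hB0 hB1] at h5
  simp only [Complex.mul_im, Complex.mul_re, Complex.sub_im, Complex.sub_re, Complex.one_im,
    Complex.one_re, Complex.ofReal_im, Complex.ofReal_re, Complex.conj_re, Complex.conj_im,
    Complex.zero_im] at h5
  have E5 : m.im * (z.re ^ 2 + z.im ^ 2)
      = (1 - c) * z.im + c * z.im * B H m g 0
        + c * (z.re * g.im + z.im * g.re) * A1 H m g
        + c * (z.re * m.im + z.im * m.re) * B H m g 1 := by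
    linear_combination h5
  -- positivity of V0
  have hprod : 0 < g.im * V0 H c m g := by
    rw [E2]; positivity
  have hK : 0 < V0 H c m g := by
    rcases mul_pos_iff.mp hprod with ⟨_, h⟩ | ⟨h, _⟩
    · exact h
    · linarith
  refine ⟨hK, ?_⟩
  have hKne : V0 H c m g ≠ 0 := hK.ne'
  -- algebra
  have I4 : (m.re * g.im - m.im * g.re) * V0 H c m g = c * g.im * A1 H m g := by
    linear_combination E1 + E4 + 2 * m.re * E2
  have H3 : (z.re * g.im + z.im * g.re) * V0 H c m g
      = c * g.im * B H m g 1 * V0 H c m g + c ^ 2 * g.im * A1 H m g * B H m g 2 := by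
    linear_combination V0 H c m g * E3 + c * B H m g 2 * I4
  have H5 : m.im * (z.re ^ 2 + z.im ^ 2) * V0 H c m g
      = ((1 - c) * z.im + c * z.im * B H m g 0) * V0 H c m g
        + 2 * c ^ 2 * A1 H m g * B H m g 1 * g.im * V0 H c m g
        + c ^ 3 * A1 H m g ^ 2 * B H m g 2 * g.im
        + c ^ 2 * m.im * B H m g 1 ^ 2 * V0 H c m g := by
    linear_combination V0 H c m g * E5 + c * A1 H m g * H3 + c * B H m g 1 * V0 H c m g * E1
  have KEY : m.im * (z.re ^ 2 + z.im ^ 2) * V0 H c m g ^ 2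
      = (c ^ 2 * A1 H m g * B H m g 2 + c * B H m g 1 * V0 H c m g) ^ 2 * m.im
        + ((c ^ 2 * A1 H m g * B H m g 2 + c * B H m g 1 * V0 H c m g) * c * A1 H m g
            + c ^ 2 * A1 H m g * B H m g 1 * V0 H c m g) * z.im
        + (1 - c) * z.im * V0 H c m g ^ 2 + c * B H m g 0 * z.im * V0 H c m g ^ 2 := by
    linear_combination V0 H c m g * H5
      + (2 * c ^ 2 * A1 H m g * B H m g 1 * V0 H c m g + c ^ 3 * A1 H m g ^ 2 * B H m g 2) * E2
  have habs : ‖z‖ ^ 2 = z.re ^ 2 + z.im ^ 2 := by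
    rw [Complex.sq_norm, Complex.normSq_apply]; ring
  have hK2 : V0 H c m g ^ 2 ≠ 0 := pow_ne_zero 2 hKne
  have expand : V H c m g ^ 2 * m.im +
        (V H c m g * c * A1 H m g + c ^ 2 * A1 H m g * B H m g 1) * z.im / V0 H c m g +
        (1 - c) * z.im + c * B H m g 0 * z.im
      = ((c ^ 2 * A1 H m g * B H m g 2 + c * B H m g 1 * V0 H c m g) ^ 2 * m.im
        + ((c ^ 2 * A1 H m g * B H m g 2 + c * B H m g 1 * V0 H c m g) * c * A1 H m g
            + c ^ 2 * A1 H m g * B H m g 1 * V0 H c m g) * z.im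
        + (1 - c) * z.im * V0 H c m g ^ 2 + c * B H m g 0 * z.im * V0 H c m g ^ 2)
          / V0 H c m g ^ 2 := by
    simp only [V]
    field_simp
  rw [habs, expand, eq_div_iff hK2]
  linear_combination KEY


end
end

section
/- Let 0 < c ≤ 1, let z = x + iv ∈ ℂ with v > 0, and suppose (z, m, g) satisfies system (S) with Im m > 0, Im g > 0, and with A₁, A₂, B₀, B₁, B₂ all finite. Then V₀ > 0 and V < |z|; in particular c·B₁ < |z|. -/
open MeasureTheory Complex Filter Topology

noncomputable section

/- ### Auxiliary pointwise lemmas -/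

lemma den_inv_re (m g : ℂ) (p : ℝ × ℝ) :
    ((den m g p)⁻¹).re = p.2 ^ 0 / ‖den m g p‖ ^ 2
      + g.re * (p.1 / ‖den m g p‖ ^ 2)
      + m.re * (p.2 ^ 1 / ‖den m g p‖ ^ 2) := by
  rw [Complex.inv_re, ← Complex.sq_norm]
  simp only [den, Complex.add_re, Complex.one_re, Complex.mul_re, Complex.ofReal_re,
    Complex.ofReal_im]
  ring

lemma den_inv_im (m g : ℂ) (p : ℝ × ℝ) :
    ((den m g p)⁻¹).im = -(g.im * (p.1 / ‖den m g p‖ ^ 2)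
      + m.im * (p.2 ^ 1 / ‖den m g p‖ ^ 2)) := by
  rw [Complex.inv_im, ← Complex.sq_norm]
  simp only [den, Complex.add_im, Complex.one_im, Complex.mul_im, Complex.ofReal_re,
    Complex.ofReal_im]
  ring

lemma den_div_re (m g : ℂ) (p : ℝ × ℝ) :
    ((p.2 : ℂ) / den m g p).re = p.2 ^ 1 / ‖den m g p‖ ^ 2
      + g.re * (p.1 * p.2 / ‖den m g p‖ ^ 2)
      + m.re * (p.2 ^ 2 / ‖den m g p‖ ^ 2) := by
  rw [div_eq_mul_inv, Complex.mul_re, Complex.ofReal_re, Complex.ofReal_im,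
    Complex.inv_re, Complex.inv_im, ← Complex.sq_norm]
  simp only [den, Complex.add_re, Complex.add_im, Complex.one_re, Complex.one_im,
    Complex.mul_re, Complex.mul_im, Complex.ofReal_re, Complex.ofReal_im]
  ring

lemma den_div_im (m g : ℂ) (p : ℝ × ℝ) :
    ((p.2 : ℂ) / den m g p).im = -(g.im * (p.1 * p.2 / ‖den m g p‖ ^ 2)
      + m.im * (p.2 ^ 2 / ‖den m g p‖ ^ 2)) := by
  rw [div_eq_mul_inv, Complex.mul_im, Complex.ofReal_re, Complex.ofReal_im,
    Complex.inv_re, Complex.inv_im, ← Complex.sq_norm]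
  simp only [den, Complex.add_re, Complex.add_im, Complex.one_re, Complex.one_im,
    Complex.mul_re, Complex.mul_im, Complex.ofReal_re, Complex.ofReal_im]
  ring

/- ### Real and imaginary parts of the two integrals -/

lemma K1_re (H : Measure (ℝ × ℝ)) (m g : ℂ)
    (hA1 : IntA1 H m g) (hB0 : IntB H m g 0) (hB1 : IntB H m g 1)
    (hI1 : Integrable (fun p => (den m g p)⁻¹) H) :
    (∫ p, (den m g p)⁻¹ ∂H).re = B H m g 0 + g.re * A1 H m g + m.re * B H m g 1 := by
  have hB0' : Integrable (fun p : ℝ × ℝ => p.2 ^ (0:ℕ) / ‖den m g p‖ ^ 2) H := hB0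
  have hB1' : Integrable (fun p : ℝ × ℝ => p.2 ^ (1:ℕ) / ‖den m g p‖ ^ 2) H := hB1
  have hA1' : Integrable (fun p : ℝ × ℝ => p.1 / ‖den m g p‖ ^ 2) H := hA1
  have h := integral_re hI1
  simp only [RCLike.re_to_complex] at h
  rw [← h]
  simp only [den_inv_re]
  have hs1 : Integrable (fun p : ℝ × ℝ => p.2 ^ (0:ℕ) / ‖den m g p‖ ^ 2
      + g.re * (p.1 / ‖den m g p‖ ^ 2)) H := hB0'.add (hA1'.const_mul g.re)
  rw [integral_add hs1 (hB1'.const_mul m.re),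
    integral_add hB0' (hA1'.const_mul g.re), integral_const_mul, integral_const_mul]
  rfl

lemma K1_im (H : Measure (ℝ × ℝ)) (m g : ℂ)
    (hA1 : IntA1 H m g) (hB1 : IntB H m g 1)
    (hI1 : Integrable (fun p => (den m g p)⁻¹) H) :
    (∫ p, (den m g p)⁻¹ ∂H).im = -(g.im * A1 H m g + m.im * B H m g 1) := by
  have hB1' : Integrable (fun p : ℝ × ℝ => p.2 ^ (1:ℕ) / ‖den m g p‖ ^ 2) H := hB1
  have hA1' : Integrable (fun p : ℝ × ℝ => p.1 / ‖den m g p‖ ^ 2) H := hA1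
  have h := integral_im hI1
  simp only [RCLike.im_to_complex] at h
  rw [← h]
  simp only [den_inv_im]
  rw [integral_neg, integral_add (hA1'.const_mul g.im) (hB1'.const_mul m.im),
    integral_const_mul, integral_const_mul]
  rfl

lemma K2_re (H : Measure (ℝ × ℝ)) (m g : ℂ)
    (hA2 : IntA2 H m g) (hB1 : IntB H m g 1) (hB2 : IntB H m g 2)
    (hI2 : Integrable (fun p => (p.2 : ℂ) / den m g p) H) :
    (∫ p, (p.2 : ℂ) / den m g p ∂H).re
      = B H m g 1 + g.re * A2 H m g + m.re * B H m g 2 := by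
  have hB1' : Integrable (fun p : ℝ × ℝ => p.2 ^ (1:ℕ) / ‖den m g p‖ ^ 2) H := hB1
  have hB2' : Integrable (fun p : ℝ × ℝ => p.2 ^ (2:ℕ) / ‖den m g p‖ ^ 2) H := hB2
  have hA2' : Integrable (fun p : ℝ × ℝ => p.1 * p.2 / ‖den m g p‖ ^ 2) H := hA2
  have h := integral_re hI2
  simp only [RCLike.re_to_complex] at h
  rw [← h]
  simp only [den_div_re]
  have hs1 : Integrable (fun p : ℝ × ℝ => p.2 ^ (1:ℕ) / ‖den m g p‖ ^ 2
      + g.re * (p.1 * p.2 / ‖den m g p‖ ^ 2)) H := hB1'.add (hA2'.const_mul g.re)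
  rw [integral_add hs1 (hB2'.const_mul m.re),
    integral_add hB1' (hA2'.const_mul g.re), integral_const_mul, integral_const_mul]
  rfl

lemma K2_im (H : Measure (ℝ × ℝ)) (m g : ℂ)
    (hA2 : IntA2 H m g) (hB2 : IntB H m g 2)
    (hI2 : Integrable (fun p => (p.2 : ℂ) / den m g p) H) :
    (∫ p, (p.2 : ℂ) / den m g p ∂H).im = -(g.im * A2 H m g + m.im * B H m g 2) := by
  have hB2' : Integrable (fun p : ℝ × ℝ => p.2 ^ (2:ℕ) / ‖den m g p‖ ^ 2) H := hB2
  have hA2' : Integrable (fun p : ℝ × ℝ => p.1 * p.2 / ‖den m g p‖ ^ 2) H := hA2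
  have h := integral_im hI2
  simp only [RCLike.im_to_complex] at h
  rw [← h]
  simp only [den_div_im]
  rw [integral_neg, integral_add (hA2'.const_mul g.im) (hB2'.const_mul m.im),
    integral_const_mul, integral_const_mul]
  rfl

theorem stmt2 (H : Measure (ℝ × ℝ)) [IsProbabilityMeasure H]
    (hHsupp : ∀ᵐ p ∂H, 0 ≤ p.1 ∧ 0 ≤ p.2)
    (c : ℝ) (hc : 0 < c) (hc1 : c ≤ 1)
    (z m g : ℂ) (hz : 0 < z.im)
    (hS : SatS H c z m g)
    (hm : 0 < m.im) (hg : 0 < g.im)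
    (hA1 : IntA1 H m g) (hA2 : IntA2 H m g)
    (hB0 : IntB H m g 0) (hB1 : IntB H m g 1) (hB2 : IntB H m g 2) :
    0 < V0 H c m g ∧ V H c m g < ‖z‖ ∧ c * B H m g 1 < ‖z‖ := by
  obtain ⟨hg0, hden0, hI1, hI2, heq1, heq2⟩ := hS
  have hB0' : Integrable (fun p : ℝ × ℝ => p.2 ^ (0:ℕ) / ‖den m g p‖ ^ 2) H := hB0
  have hB1' : Integrable (fun p : ℝ × ℝ => p.2 ^ (1:ℕ) / ‖den m g p‖ ^ 2) H := hB1
  have hB2' : Integrable (fun p : ℝ × ℝ => p.2 ^ (2:ℕ) / ‖den m g p‖ ^ 2) H := hB2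
  -- nonnegativity of the integrals
  have ha1 : 0 ≤ A1 H m g :=
    integral_nonneg_of_ae (hHsupp.mono fun p hp => div_nonneg hp.1 (by positivity))
  have ha2 : 0 ≤ A2 H m g :=
    integral_nonneg_of_ae (hHsupp.mono fun p hp =>
      div_nonneg (mul_nonneg hp.1 hp.2) (by positivity))
  have hb0 : 0 ≤ B H m g 0 :=
    integral_nonneg fun p => by simp only [pow_zero]; positivity
  have hb1 : 0 ≤ B H m g 1 :=
    integral_nonneg_of_ae (hHsupp.mono fun p hp =>
      div_nonneg (by simpa using hp.2) (by positivity))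
  have hb2 : 0 ≤ B H m g 2 :=
    integral_nonneg fun p => by positivity
  -- Cauchy–Schwarz : B₁² ≤ B₀ B₂
  have hquad : ∀ lam : ℝ,
      0 ≤ B H m g 0 * (lam * lam) + (2 * B H m g 1) * lam + B H m g 2 := by
    intro lam
    have hpt : (fun p : ℝ × ℝ => (p.2 + lam) ^ 2 / ‖den m g p‖ ^ 2)
        = fun p : ℝ × ℝ => p.2 ^ (2:ℕ) / ‖den m g p‖ ^ 2
          + (2 * lam) * (p.2 ^ (1:ℕ) / ‖den m g p‖ ^ 2)
          + (lam * lam) * (p.2 ^ (0:ℕ) / ‖den m g p‖ ^ 2) :=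
      funext fun p => by ring
    have h0 : 0 ≤ ∫ p, (p.2 + lam) ^ 2 / ‖den m g p‖ ^ 2 ∂H :=
      integral_nonneg fun p => by positivity
    rw [hpt] at h0
    have hs1 : Integrable (fun p : ℝ × ℝ => p.2 ^ (2:ℕ) / ‖den m g p‖ ^ 2
        + 2 * lam * (p.2 ^ (1:ℕ) / ‖den m g p‖ ^ 2)) H :=
      hB2'.add (hB1'.const_mul (2 * lam))
    rw [integral_add hs1 (hB0'.const_mul (lam * lam)),
      integral_add hB2' (hB1'.const_mul (2 * lam)), integral_const_mul, integral_const_mul] at h0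
    have e2 : (∫ p, p.2 ^ (2:ℕ) / ‖den m g p‖ ^ 2 ∂H) = B H m g 2 := rfl
    have e1 : (∫ p, p.2 ^ (1:ℕ) / ‖den m g p‖ ^ 2 ∂H) = B H m g 1 := rfl
    have e0 : (∫ p, p.2 ^ (0:ℕ) / ‖den m g p‖ ^ 2 ∂H) = B H m g 0 := rfl
    rw [e2, e1, e0] at h0
    linarith
  have hCS : (B H m g 1) ^ 2 ≤ B H m g 0 * B H m g 2 := by
    have hd := discrim_le_zero hquad
    rw [discrim] at hd
    nlinarith [hd]
  -- real and imaginary parts of integrals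
  have hK1re := K1_re H m g hA1 hB0 hB1 hI1
  have hK1im := K1_im H m g hA1 hB1 hI1
  have hK2re := K2_re H m g hA2 hB1 hB2 hI2
  have hK2im := K2_im H m g hA2 hB2 hI2
  -- real form of the equations
  have E1r : z.re * m.re - z.im * m.im + (1 - c)
      + c * (B H m g 0 + g.re * A1 H m g + m.re * B H m g 1) = 0 := by
    have h := congrArg Complex.re heq1
    simp only [Complex.add_re, Complex.mul_re, Complex.sub_re, Complex.one_re,
      Complex.ofReal_re, Complex.ofReal_im, Complex.zero_re, zero_mul, mul_zero,
      sub_zero] at h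
    rw [hK1re] at h
    linear_combination h
  have E1i : z.re * m.im + z.im * m.re - c * (g.im * A1 H m g + m.im * B H m g 1) = 0 := by
    have h := congrArg Complex.im heq1
    simp only [Complex.add_im, Complex.mul_im, Complex.sub_im, Complex.one_im,
      Complex.ofReal_re, Complex.ofReal_im, Complex.zero_im, zero_mul, mul_zero,
      add_zero, sub_zero, sub_self] at h
    rw [hK1im] at h
    linear_combination h
  have E2r : z.re + g.re * (‖g‖ ^ 2)⁻¹
      - c * (B H m g 1 + g.re * A2 H m g + m.re * B H m g 2) = 0 := by
    have h := congrArg Complex.re heq2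
    simp only [Complex.add_re, Complex.sub_re, one_div, Complex.inv_re, Complex.mul_re,
      Complex.ofReal_re, Complex.ofReal_im, Complex.zero_re, zero_mul, sub_zero] at h
    rw [hK2re, ← Complex.sq_norm] at h
    linear_combination h
  have E2i : z.im - g.im * (‖g‖ ^ 2)⁻¹
      + c * (g.im * A2 H m g + m.im * B H m g 2) = 0 := by
    have h := congrArg Complex.im heq2
    simp only [Complex.add_im, Complex.sub_im, one_div, Complex.inv_im, Complex.mul_im,
      Complex.ofReal_re, Complex.ofReal_im, Complex.zero_im, zero_mul, mul_zero,
      add_zero] at h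
    rw [hK2im, ← Complex.sq_norm] at h
    linear_combination h
  -- basic positivity
  have hz0 : z ≠ 0 := by
    intro h
    rw [h] at hz
    simp at hz
  have hrpos : 0 < ‖z‖ := norm_pos_iff.mpr hz0
  -- abbreviations
  unfold V V0
  set a1 := A1 H m g with ha1d
  set a2 := A2 H m g with ha2d
  set b0 := B H m g 0 with hb0d
  set b1 := B H m g 1 with hb1d
  set b2 := B H m g 2 with hb2d
  set n := (‖g‖ ^ 2)⁻¹ with hnd
  set r := ‖z‖ with hrd
  set x := z.re with hxd
  set v := z.im with hvd
  set m1 := m.re with hm1d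
  set m2 := m.im with hm2d
  set g1 := g.re with hg1d
  set g2 := g.im with hg2d
  have hr2 : r ^ 2 = x * x + v * v := by
    rw [hrd, hxd, hvd, Complex.sq_norm, Complex.normSq_apply]
  clear_value a1 a2 b0 b1 b2 n r x v m1 m2 g1 g2
  -- key identities
  have h1 : g2 * (n - c * a2) = v + c * m2 * b2 := by linear_combination -E2i
  have hV0pos : 0 < n - c * a2 := by
    have h9 : 0 < g2 * (n - c * a2) := by
      rw [h1]
      have h10 : 0 ≤ c * m2 * b2 := mul_nonneg (mul_nonneg hc.le hm.le) hb2
      linarith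
    rcases mul_pos_iff.mp h9 with ⟨_, h⟩ | ⟨h, _⟩
    · exact h
    · linarith
  have h3 : (x * g2 + v * g1) * (n - c * a2)
      = c * v * b1 + c * (x * m2 + v * m1) * b2 := by
    linear_combination (-x) * E2i + v * E2r
  have hQK : (r * g2 - (x * g2 + v * g1))
      * ((n - c * a2) * (r + c * b1) + c ^ 2 * a1 * b2)
      = v * (r ^ 2 - c ^ 2 * b1 ^ 2 + c * (1 - c) * b2 + c ^ 2 * b0 * b2) := by
    linear_combination ((r + c * b1) * (x - r)) * E2i - ((r + c * b1) * v) * E2r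
      + (c * b2 * (x - r)) * E1i - (c * b2 * v) * E1r + (c * b2 * m2) * hr2
  have hKpos : 0 < (n - c * a2) * (r + c * b1) + c ^ 2 * a1 * b2 := by
    have h5 : 0 < r + c * b1 := by
      have := mul_nonneg hc.le hb1
      linarith
    have h6 := mul_pos hV0pos h5
    have h7 : 0 ≤ c ^ 2 * a1 * b2 := mul_nonneg (mul_nonneg (sq_nonneg c) ha1) hb2
    linarith
  have hRpos : 0 < v * (r ^ 2 - c ^ 2 * b1 ^ 2 + c * (1 - c) * b2 + c ^ 2 * b0 * b2) := by
    have h6 : 0 ≤ c * (1 - c) * b2 := mul_nonneg (mul_nonneg hc.le (by linarith)) hb2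
    have h7 : c ^ 2 * b1 ^ 2 ≤ c ^ 2 * (b0 * b2) :=
      mul_le_mul_of_nonneg_left hCS (sq_nonneg c)
    have h7' : c ^ 2 * b1 ^ 2 ≤ c ^ 2 * b0 * b2 := by rw [mul_assoc]; exact h7
    have h8 : 0 < r ^ 2 := pow_pos hrpos 2
    have hR : 0 < r ^ 2 - c ^ 2 * b1 ^ 2 + c * (1 - c) * b2 + c ^ 2 * b0 * b2 := by linarith
    exact mul_pos hz hR
  have hGpos : 0 < r * g2 - (x * g2 + v * g1) := by
    have h9 : 0 < (r * g2 - (x * g2 + v * g1))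
        * ((n - c * a2) * (r + c * b1) + c ^ 2 * a1 * b2) := by
      rw [hQK]; exact hRpos
    rcases mul_pos_iff.mp h9 with ⟨h, _⟩ | ⟨_, h⟩
    · exact h
    · linarith
  have hg2ne : g2 ≠ 0 := ne_of_gt hg
  have hv0ne : n - c * a2 ≠ 0 := ne_of_gt hV0pos
  refine ⟨hV0pos, ?_, ?_⟩
  · -- V < |z|
    have h5 : c ^ 2 * a1 * b2 / (n - c * a2) = (x * g2 + v * g1 - c * b1 * g2) / g2 := by
      rw [div_eq_div_iff hv0ne hg2ne]
      linear_combination -h3 + (c * b1) * h1 - (c * b2) * E1i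
    rw [h5]
    have h6 : (x * g2 + v * g1 - c * b1 * g2) / g2 + c * b1 = (x * g2 + v * g1) / g2 := by
      field_simp [hg2ne]
      ring
    rw [h6, div_lt_iff₀ hg]
    linarith
  · -- c·B₁ < |z|
    have h7 : 0 ≤ c ^ 2 * a1 * b2 / (n - c * a2) :=
      div_nonneg (mul_nonneg (mul_nonneg (sq_nonneg c) ha1) hb2) hV0pos.le
    have h8 : c ^ 2 * a1 * b2 / (n - c * a2) + c * b1 < r := by
      have h5 : c ^ 2 * a1 * b2 / (n - c * a2) = (x * g2 + v * g1 - c * b1 * g2) / g2 := by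
        rw [div_eq_div_iff hv0ne hg2ne]
        linear_combination -h3 + (c * b1) * h1 - (c * b2) * E1i
      rw [h5]
      have h6 : (x * g2 + v * g1 - c * b1 * g2) / g2 + c * b1 = (x * g2 + v * g1) / g2 := by
        field_simp [hg2ne]
        ring
      rw [h6, div_lt_iff₀ hg]
      linarith
    linarith
  
end
end

section
/- (Theorem, part (c).) Let c > 0 and let z_n be a sequence in the open upper half-plane converging to z ∈ ℂ with Im z ≥ 0 and z ≠ 0. Suppose for each n the triple (z_n, m_n, g_n) satisfies system (S), that m_n → m̃ and g_n → g̃ in ℂ, that |g_n| ≥ δ for all n for some δ > 0, and that the quantities A₁(n), A₂(n), B₁(n), B₂(n) computed from (m_n, g_n) are bounded by a constant M uniformly in n. Then |g̃| ≥ δ, 1 + s·g̃ + t·m̃ ≠ 0 for H-almost every (s,t), the corresponding integrals ∫ dH(s,t)/(1 + s·g̃ + t·m̃) and ∫ t dH(s,t)/(1 + s·g̃ + t·m̃) are finite, and the limiting triple (z, m̃, g̃) satisfies system (S). -/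
open MeasureTheory Complex Filter Topology

noncomputable section

lemma measurable_den_fun (m g : ℂ) : Measurable (den m g) := by
  unfold den; fun_prop

lemma tendsto_den (mn gn : ℕ → ℂ) (mt gt : ℂ) (hmn : Tendsto mn atTop (𝓝 mt))
    (hgn : Tendsto gn atTop (𝓝 gt)) (p : ℝ × ℝ) :
    Tendsto (fun n => den (mn n) (gn n) p) atTop (𝓝 (den mt gt p)) := by
  unfold den
  exact (tendsto_const_nhds.add (tendsto_const_nhds.mul hgn)).add
    (tendsto_const_nhds.mul hmn)

lemma fatou_key (H : Measure (ℝ × ℝ)) (ψ : ℝ × ℝ → ℝ) (hψm : Measurable ψ)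
    (hψ0 : ∀ᵐ p ∂H, 0 ≤ ψ p)
    (Dn : ℕ → ℝ × ℝ → ℂ) (D : ℝ × ℝ → ℂ)
    (hDnm : ∀ n, Measurable (Dn n)) (hDm : Measurable D)
    (hne : ∀ᵐ p ∂H, ∀ n, Dn n p ≠ 0)
    (hconv : ∀ p, Tendsto (fun n => Dn n p) atTop (𝓝 (D p)))
    (M : ℝ)
    (hint : ∀ n, Integrable (fun p => ψ p / ‖Dn n p‖ ^ 2) H)
    (hbd : ∀ n, ∫ p, ψ p / ‖Dn n p‖ ^ 2 ∂H ≤ M) :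
    (∫⁻ p, ENNReal.ofReal (ψ p / ‖D p‖ ^ 2) ∂H ≤ ENNReal.ofReal M) ∧
      (∀ᵐ p ∂H, D p = 0 → ψ p ≤ 0) := by
  set f : ℕ → ℝ × ℝ → ENNReal :=
    fun n p => ENNReal.ofReal (ψ p / ‖Dn n p‖ ^ 2) with hf
  have hfm : ∀ n, Measurable (f n) := by
    intro n
    exact ENNReal.measurable_ofReal.comp
      (hψm.div ((continuous_norm.measurable.comp (hDnm n)).pow_const 2))
  set L : ℝ × ℝ → ENNReal := fun p => liminf (fun n => f n p) atTop with hL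
  have hLm : Measurable L := Measurable.liminf hfm
  have hfnonneg : ∀ n, ∀ᵐ p ∂H, 0 ≤ ψ p / ‖Dn n p‖ ^ 2 := by
    intro n
    filter_upwards [hψ0] with p hp
    exact div_nonneg hp (by positivity)
  have hLint : ∫⁻ p, L p ∂H ≤ ENNReal.ofReal M := by
    refine le_trans (lintegral_liminf_le hfm) ?_
    refine Filter.liminf_le_of_frequently_le (Frequently.of_forall fun n => ?_)
    rw [← ofReal_integral_eq_lintegral_ofReal (hint n) (hfnonneg n)]
    exact ENNReal.ofReal_le_ofReal (hbd n)
  have hLlt : ∀ᵐ p ∂H, L p < ⊤ :=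
    ae_lt_top hLm (lt_of_le_of_lt hLint ENNReal.ofReal_lt_top).ne
  have key2 : ∀ᵐ p ∂H, D p = 0 → ψ p ≤ 0 := by
    filter_upwards [hψ0, hne, hLlt] with p hp hne' hlt hD0
    by_contra hψpos
    push_neg at hψpos
    -- f n p → ∞
    have habs : Tendsto (fun n => ‖Dn n p‖ ^ 2) atTop (𝓝 0) := by
      have := (continuous_norm.tendsto (D p)).comp (hconv p)
      rw [hD0] at this
      simpa using (this.pow 2)
    have hpos : ∀ n, 0 < ‖Dn n p‖ ^ 2 := fun n => by
      have h := norm_ne_zero_iff.mpr (hne' n)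
      positivity
    have h1 : Tendsto (fun n => ‖Dn n p‖ ^ 2) atTop (𝓝[>] 0) :=
      tendsto_nhdsWithin_of_tendsto_nhds_of_eventually_within _ habs
        (Eventually.of_forall hpos)
    have h2 : Tendsto (fun n => ψ p / ‖Dn n p‖ ^ 2) atTop atTop := by
      simp only [div_eq_mul_inv]
      exact (tendsto_inv_nhdsGT_zero.comp h1).const_mul_atTop hψpos
    have h3 : Tendsto (fun n => f n p) atTop (𝓝 ⊤) :=
      ENNReal.tendsto_ofReal_atTop.comp h2
    have : L p = ⊤ := h3.liminf_eq
    rw [this] at hlt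
    exact absurd hlt (lt_irrefl _)
  refine ⟨?_, key2⟩
  have hptwise : ∀ᵐ p ∂H,
      ENNReal.ofReal (ψ p / ‖D p‖ ^ 2) ≤ L p := by
    filter_upwards [key2] with p hk
    by_cases hD0 : D p = 0
    · have : ψ p / ‖D p‖ ^ 2 ≤ 0 := by
        rw [hD0]; simp only [norm_zero]
        rw [zero_pow (by norm_num : 2 ≠ 0), div_zero]
      simp [ENNReal.ofReal_of_nonpos this]
    · have habs2 : Tendsto (fun n => ‖Dn n p‖ ^ 2) atTop
          (𝓝 (‖D p‖ ^ 2)) :=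
        ((continuous_norm.tendsto (D p)).comp (hconv p)).pow 2
      have hDpos : ‖D p‖ ^ 2 ≠ 0 := by
        have h := norm_ne_zero_iff.mpr hD0
        positivity
      have h2 : Tendsto (fun n => ψ p / ‖Dn n p‖ ^ 2) atTop
          (𝓝 (ψ p / ‖D p‖ ^ 2)) :=
        tendsto_const_nhds.div habs2 hDpos
      have h3 : Tendsto (fun n => f n p) atTop
          (𝓝 (ENNReal.ofReal (ψ p / ‖D p‖ ^ 2))) :=
        (ENNReal.continuous_ofReal.tendsto _).comp h2
      exact le_of_eq h3.liminf_eq.symm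
  calc ∫⁻ p, ENNReal.ofReal (ψ p / ‖D p‖ ^ 2) ∂H
      ≤ ∫⁻ p, L p ∂H := lintegral_mono_ae hptwise
    _ ≤ ENNReal.ofReal M := hLint

lemma integrable_of_lintegral_bound (H : Measure (ℝ × ℝ)) (f : ℝ × ℝ → ℝ)
    (hfm : Measurable f) (hf0 : ∀ᵐ p ∂H, 0 ≤ f p) (M : ℝ) (hM : 0 ≤ M)
    (h : ∫⁻ p, ENNReal.ofReal (f p) ∂H ≤ ENNReal.ofReal M) :
    Integrable f H ∧ ∫ p, f p ∂H ≤ M := by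
  have hint : Integrable f H :=
    ⟨hfm.aestronglyMeasurable,
      (hasFiniteIntegral_iff_ofReal hf0).2 (lt_of_le_of_lt h ENNReal.ofReal_lt_top)⟩
  refine ⟨hint, ?_⟩
  rw [integral_eq_lintegral_of_nonneg_ae hf0 hfm.aestronglyMeasurable]
  calc (∫⁻ p, ENNReal.ofReal (f p) ∂H).toReal
      ≤ (ENNReal.ofReal M).toReal := ENNReal.toReal_mono ENNReal.ofReal_ne_top h
    _ = M := ENNReal.toReal_ofReal hM
lemma cross_div_le (s a b : ℝ) (hs : 0 ≤ s) (ha : 0 ≤ a) (hb : 0 ≤ b) :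
    s / (a * b) ≤ (s / a ^ 2 + s / b ^ 2) / 2 := by
  rcases eq_or_lt_of_le ha with ha0 | ha0
  · rw [← ha0]
    simp only [zero_mul, div_zero]
    positivity
  rcases eq_or_lt_of_le hb with hb0 | hb0
  · rw [← hb0]
    simp only [mul_zero, div_zero]
    positivity
  have e : (s / a ^ 2 + s / b ^ 2) / 2 - s / (a * b)
      = s * (a - b) ^ 2 / (2 * a ^ 2 * b ^ 2) := by
    field_simp
    ring
  have h2 : 0 ≤ s * (a - b) ^ 2 / (2 * a ^ 2 * b ^ 2) := by positivity
  linarith [e ▸ h2]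

lemma den_inv_sq_bound (m g : ℂ) (K : ℝ) (hg : ‖g‖ ≤ K)
    (hm : ‖m‖ ≤ K) (p : ℝ × ℝ) (hs : 0 ≤ p.1) (ht : 0 ≤ p.2) :
    1 / ‖den m g p‖ ^ 2 ≤
      4 + 2 * K * (p.1 / ‖den m g p‖ ^ 2
        + p.2 / ‖den m g p‖ ^ 2) := by
  set a := ‖den m g p‖ with ha
  have hK0 : 0 ≤ K := le_trans (norm_nonneg g) hg
  have ha0 : 0 ≤ a := norm_nonneg _
  have hsum : ‖↑p.1 * g + ↑p.2 * m‖
      ≤ p.1 * ‖g‖ + p.2 * ‖m‖ := by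
    refine le_trans (norm_add_le _ _) ?_
    simp only [norm_mul, Complex.norm_real, Real.norm_eq_abs, _root_.abs_of_nonneg hs, _root_.abs_of_nonneg ht, le_refl]
  by_cases hsmall : p.1 * ‖g‖ + p.2 * ‖m‖ ≤ 1/2
  · have h1 : (1:ℝ) ≤ a + (p.1 * ‖g‖ + p.2 * ‖m‖) := by
      have e : (1:ℂ) = den m g p - (↑p.1 * g + ↑p.2 * m) := by unfold den; ring
      have h2 := norm_sub_le (den m g p) (↑p.1 * g + ↑p.2 * m)
      rw [← e] at h2
      simp only [norm_one] at h2
      exact le_trans h2 (by linarith)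
    have ha2 : (1/2 : ℝ) ≤ a := by linarith
    have h3 : 1 / a ^ 2 ≤ 4 := by
      rw [div_le_iff₀ (by positivity)]
      nlinarith
    have h4 : 0 ≤ p.1 / a ^ 2 := div_nonneg hs (sq_nonneg a)
    have h5 : 0 ≤ p.2 / a ^ 2 := div_nonneg ht (sq_nonneg a)
    nlinarith
  · push_neg at hsmall
    have hk : (1:ℝ) ≤ 2 * K * p.1 + 2 * K * p.2 := by
      have e1 : p.1 * ‖g‖ ≤ p.1 * K := mul_le_mul_of_nonneg_left hg hs
      have e2 : p.2 * ‖m‖ ≤ p.2 * K := mul_le_mul_of_nonneg_left hm ht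
      linarith
    rcases eq_or_lt_of_le ha0 with haz | hap
    · rw [← haz]
      simp only [ne_eq, OfNat.ofNat_ne_zero, not_false_eq_true, zero_pow, div_zero]
      positivity
    · have h6 : 1 / a ^ 2 ≤ (2 * K * p.1 + 2 * K * p.2) / a ^ 2 := by
        apply div_le_div_of_nonneg_right hk (by positivity)
      have e2 : (2 * K * p.1 + 2 * K * p.2) / a ^ 2
          = 2 * K * (p.1 / a ^ 2 + p.2 / a ^ 2) := by ring
      rw [e2] at h6
      linarith

lemma cross_bound (H : Measure (ℝ × ℝ)) (ψ : ℝ × ℝ → ℝ) (hψm : Measurable ψ)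
    (hψ0 : ∀ᵐ p ∂H, 0 ≤ ψ p) (D1 D2 : ℝ × ℝ → ℂ) (hD1 : Measurable D1)
    (hD2 : Measurable D2) (M : ℝ)
    (h1 : Integrable (fun p => ψ p / ‖D1 p‖ ^ 2) H)
    (h2 : Integrable (fun p => ψ p / ‖D2 p‖ ^ 2) H)
    (b1 : ∫ p, ψ p / ‖D1 p‖ ^ 2 ∂H ≤ M)
    (b2 : ∫ p, ψ p / ‖D2 p‖ ^ 2 ∂H ≤ M) :
    Integrable (fun p => ψ p / (‖D1 p‖ * ‖D2 p‖)) H ∧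
      ∫ p, ψ p / (‖D1 p‖ * ‖D2 p‖) ∂H ≤ M := by
  have hdom : Integrable
      (fun p => (ψ p / ‖D1 p‖ ^ 2 + ψ p / ‖D2 p‖ ^ 2) / 2) H :=
    (h1.add h2).div_const 2
  have hpt : ∀ᵐ p ∂H, ψ p / (‖D1 p‖ * ‖D2 p‖)
      ≤ (ψ p / ‖D1 p‖ ^ 2 + ψ p / ‖D2 p‖ ^ 2) / 2 := by
    filter_upwards [hψ0] with p hp
    exact cross_div_le _ _ _ hp (norm_nonneg _) (norm_nonneg _)
  have hmeas : Measurable (fun p => ψ p / (‖D1 p‖ * ‖D2 p‖)) :=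
    hψm.div ((continuous_norm.measurable.comp hD1).mul
      (continuous_norm.measurable.comp hD2))
  have hint : Integrable (fun p => ψ p / (‖D1 p‖ * ‖D2 p‖)) H := by
    refine hdom.mono' hmeas.aestronglyMeasurable ?_
    filter_upwards [hψ0, hpt] with p hp hle
    rw [Real.norm_eq_abs, _root_.abs_of_nonneg (div_nonneg hp
      (mul_nonneg (norm_nonneg _) (norm_nonneg _)))]
    exact hle
  refine ⟨hint, ?_⟩
  calc ∫ p, ψ p / (‖D1 p‖ * ‖D2 p‖) ∂H
      ≤ ∫ p, (ψ p / ‖D1 p‖ ^ 2 + ψ p / ‖D2 p‖ ^ 2) / 2 ∂H :=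
        integral_mono_ae hint hdom hpt
    _ = ((∫ p, ψ p / ‖D1 p‖ ^ 2 ∂H)
          + ∫ p, ψ p / ‖D2 p‖ ^ 2 ∂H) / 2 := by
        rw [integral_div, integral_add h1 h2]
    _ ≤ M := by linarith

theorem stmt6 (H : Measure (ℝ × ℝ)) [IsProbabilityMeasure H]
    (hHsupp : ∀ᵐ p ∂H, 0 ≤ p.1 ∧ 0 ≤ p.2)
    (c : ℝ) (hc : 0 < c)
    (zn : ℕ → ℂ) (z : ℂ) (hzn : ∀ n, 0 < (zn n).im)
    (hz : Tendsto zn atTop (𝓝 z)) (hzim : 0 ≤ z.im) (hz0 : z ≠ 0)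
    (mn gn : ℕ → ℂ) (mt gt : ℂ)
    (hS : ∀ n, SatS H c (zn n) (mn n) (gn n))
    (hmn : Tendsto mn atTop (𝓝 mt)) (hgn : Tendsto gn atTop (𝓝 gt))
    (δ : ℝ) (hδ : 0 < δ) (hglow : ∀ n, δ ≤ ‖gn n‖)
    (M : ℝ)
    (hA1 : ∀ n, IntA1 H (mn n) (gn n) ∧ A1 H (mn n) (gn n) ≤ M)
    (hA2 : ∀ n, IntA2 H (mn n) (gn n) ∧ A2 H (mn n) (gn n) ≤ M)
    (hB1 : ∀ n, IntB H (mn n) (gn n) 1 ∧ B H (mn n) (gn n) 1 ≤ M)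
    (hB2 : ∀ n, IntB H (mn n) (gn n) 2 ∧ B H (mn n) (gn n) 2 ≤ M) :
    δ ≤ ‖gt‖ ∧
      (∀ᵐ p ∂H, den mt gt p ≠ 0) ∧
      Integrable (fun p => (den mt gt p)⁻¹) H ∧
      Integrable (fun p => (p.2 : ℂ) / den mt gt p) H ∧
      SatS H c z mt gt := by
  have hDnm : ∀ n, Measurable (den (mn n) (gn n)) := fun n => measurable_den_fun _ _
  have hDm : Measurable (den mt gt) := measurable_den_fun _ _
  have hconv : ∀ p, Tendsto (fun n => den (mn n) (gn n) p) atTop (𝓝 (den mt gt p)) :=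
    tendsto_den mn gn mt gt hmn hgn
  have hne : ∀ᵐ p ∂H, ∀ n, den (mn n) (gn n) p ≠ 0 := ae_all_iff.2 fun n => (hS n).2.1
  have habs_gn : Tendsto (fun n => ‖gn n‖) atTop (𝓝 (‖gt‖)) :=
    (continuous_norm.tendsto gt).comp hgn
  have hδgt : δ ≤ ‖gt‖ := ge_of_tendsto' habs_gn hglow
  have hgt0 : gt ≠ 0 := by
    intro h
    rw [h] at hδgt
    simp only [norm_zero] at hδgt
    linarith
  have hs_nn : ∀ᵐ p ∂H, 0 ≤ p.1 := hHsupp.mono fun p hp => hp.1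
  have ht_nn : ∀ᵐ p ∂H, 0 ≤ p.2 := hHsupp.mono fun p hp => hp.2
  have hst_nn : ∀ᵐ p ∂H, 0 ≤ p.1 * p.2 := hHsupp.mono fun p hp => mul_nonneg hp.1 hp.2
  have ht2_nn : ∀ᵐ p ∂H, 0 ≤ p.2 ^ 2 := Eventually.of_forall fun p => sq_nonneg _
  have hM0 : 0 ≤ M := by
    have hnn : 0 ≤ B H (mn 0) (gn 0) 1 := by
      unfold B
      apply integral_nonneg_of_ae
      filter_upwards [ht_nn] with p hp
      exact div_nonneg (pow_nonneg hp 1) (by positivity)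
    linarith [(hB1 0).2]
  have hA1' : ∀ n, Integrable
        (fun p : ℝ × ℝ => p.1 / ‖den (mn n) (gn n) p‖ ^ 2) H ∧
      ∫ p, p.1 / ‖den (mn n) (gn n) p‖ ^ 2 ∂H ≤ M := fun n => hA1 n
  have hA2' : ∀ n, Integrable
        (fun p : ℝ × ℝ => p.1 * p.2 / ‖den (mn n) (gn n) p‖ ^ 2) H ∧
      ∫ p, p.1 * p.2 / ‖den (mn n) (gn n) p‖ ^ 2 ∂H ≤ M := fun n => hA2 n
  have hB1' : ∀ n, Integrable
        (fun p : ℝ × ℝ => p.2 / ‖den (mn n) (gn n) p‖ ^ 2) H ∧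
      ∫ p, p.2 / ‖den (mn n) (gn n) p‖ ^ 2 ∂H ≤ M := by
    intro n
    have h := hB1 n
    unfold IntB B at h
    simpa [pow_one] using h
  have hB2' : ∀ n, Integrable
        (fun p : ℝ × ℝ => p.2 ^ 2 / ‖den (mn n) (gn n) p‖ ^ 2) H ∧
      ∫ p, p.2 ^ 2 / ‖den (mn n) (gn n) p‖ ^ 2 ∂H ≤ M := fun n => hB2 n
  have F1 := fatou_key H (fun p => p.1) measurable_fst hs_nn _ _ hDnm hDm hne hconv M
    (fun n => (hA1' n).1) (fun n => (hA1' n).2)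
  have F2 := fatou_key H (fun p => p.2) measurable_snd ht_nn _ _ hDnm hDm hne hconv M
    (fun n => (hB1' n).1) (fun n => (hB1' n).2)
  have F3 := fatou_key H (fun p => p.1 * p.2) (measurable_fst.mul measurable_snd)
    hst_nn _ _ hDnm hDm hne hconv M (fun n => (hA2' n).1) (fun n => (hA2' n).2)
  have F4 := fatou_key H (fun p => p.2 ^ 2) (measurable_snd.pow_const 2)
    ht2_nn _ _ hDnm hDm hne hconv M (fun n => (hB2' n).1) (fun n => (hB2' n).2)
  have hDne : ∀ᵐ p ∂H, den mt gt p ≠ 0 := by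
    filter_upwards [hHsupp, F1.2, F2.2] with p hp h1 h2
    intro h0
    have hs0 : p.1 = 0 := le_antisymm (h1 h0) hp.1
    have ht0 : p.2 = 0 := le_antisymm (h2 h0) hp.2
    unfold den at h0
    rw [hs0, ht0] at h0
    simp at h0
  have habsD : Measurable (fun p : ℝ × ℝ => ‖den mt gt p‖ ^ 2) :=
    (continuous_norm.measurable.comp hDm).pow_const 2
  have G1 := integrable_of_lintegral_bound H
    (fun p => p.1 / ‖den mt gt p‖ ^ 2) (measurable_fst.div habsD)
    (hs_nn.mono fun p hp => div_nonneg hp (sq_nonneg _)) M hM0 F1.1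
  have G2 := integrable_of_lintegral_bound H
    (fun p => p.2 / ‖den mt gt p‖ ^ 2) (measurable_snd.div habsD)
    (ht_nn.mono fun p hp => div_nonneg hp (sq_nonneg _)) M hM0 F2.1
  have G3 := integrable_of_lintegral_bound H
    (fun p => p.1 * p.2 / ‖den mt gt p‖ ^ 2)
    ((measurable_fst.mul measurable_snd).div habsD)
    (hst_nn.mono fun p hp => div_nonneg hp (sq_nonneg _)) M hM0 F3.1
  have G4 := integrable_of_lintegral_bound H
    (fun p => p.2 ^ 2 / ‖den mt gt p‖ ^ 2)
    ((measurable_snd.pow_const 2).div habsD)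
    (ht2_nn.mono fun p hp => div_nonneg hp (sq_nonneg _)) M hM0 F4.1
  set K : ℝ := max (max (‖gt‖) (‖mt‖)) 1 with hK
  have hKg : ‖gt‖ ≤ K := le_max_of_le_left (le_max_left _ _)
  have hKm : ‖mt‖ ≤ K := le_max_of_le_left (le_max_right _ _)
  have hdom : Integrable (fun p : ℝ × ℝ => 4 + 2 * K *
      (p.1 / ‖den mt gt p‖ ^ 2 + p.2 / ‖den mt gt p‖ ^ 2)) H :=
    (integrable_const 4).add ((G1.1.add G2.1).const_mul (2 * K))
  have hinv2 : Integrable (fun p : ℝ × ℝ => 1 / ‖den mt gt p‖ ^ 2) H := by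
    refine hdom.mono' (measurable_const.div habsD).aestronglyMeasurable ?_
    filter_upwards [hHsupp] with p hp
    rw [Real.norm_eq_abs, _root_.abs_of_nonneg (div_nonneg zero_le_one (sq_nonneg _))]
    exact den_inv_sq_bound mt gt K hKg hKm p hp.1 hp.2
  have hinvD : Integrable (fun p => (den mt gt p)⁻¹) H := by
    have hdom2 : Integrable
        (fun p : ℝ × ℝ => (1 + 1 / ‖den mt gt p‖ ^ 2) / 2) H :=
      ((integrable_const 1).add hinv2).div_const 2
    refine hdom2.mono' hDm.inv.aestronglyMeasurable ?_
    refine Eventually.of_forall fun p => ?_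
    rw [norm_inv]
    have hb : 0 ≤ ‖den mt gt p‖ := norm_nonneg _
    rcases eq_or_lt_of_le hb with h0 | h0
    · rw [← h0]
      norm_num
    · have e : 1 / ‖den mt gt p‖ ^ 2 = (‖den mt gt p‖)⁻¹ ^ 2 := by
        rw [one_div, inv_pow]
      rw [e]
      have h1 : (‖den mt gt p‖)⁻¹ > 0 := inv_pos.2 h0
      nlinarith [sq_nonneg ((‖den mt gt p‖)⁻¹ - 1)]
  have htD : Integrable (fun p => (p.2 : ℂ) / den mt gt p) H := by
    have hdom2 : Integrable
        (fun p : ℝ × ℝ => (p.2 ^ 2 / ‖den mt gt p‖ ^ 2 + 1) / 2) H :=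
      (G4.1.add (integrable_const 1)).div_const 2
    refine hdom2.mono' ((Complex.measurable_ofReal.comp measurable_snd).div
      hDm).aestronglyMeasurable ?_
    filter_upwards [hHsupp] with p hp
    rw [norm_div, Complex.norm_real, Real.norm_eq_abs,
      _root_.abs_of_nonneg hp.2]
    have hb : 0 ≤ ‖den mt gt p‖ := norm_nonneg _
    rcases eq_or_lt_of_le hb with h0 | h0
    · rw [← h0]
      simp only [div_zero]
      norm_num
    · have e : p.2 ^ 2 / ‖den mt gt p‖ ^ 2
          = (p.2 / ‖den mt gt p‖) ^ 2 := by rw [div_pow]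
      rw [e]
      nlinarith [sq_nonneg (p.2 / ‖den mt gt p‖ - 1)]
  have hcs := fun n => cross_bound H (fun p => p.1) measurable_fst hs_nn _ _
    (hDnm n) hDm M (hA1' n).1 G1.1 (hA1' n).2 G1.2
  have hct := fun n => cross_bound H (fun p => p.2) measurable_snd ht_nn _ _
    (hDnm n) hDm M (hB1' n).1 G2.1 (hB1' n).2 G2.2
  have hcst := fun n => cross_bound H (fun p => p.1 * p.2)
    (measurable_fst.mul measurable_snd) hst_nn _ _
    (hDnm n) hDm M (hA2' n).1 G3.1 (hA2' n).2 G3.2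
  have hct2 := fun n => cross_bound H (fun p => p.2 ^ 2) (measurable_snd.pow_const 2)
    ht2_nn _ _ (hDnm n) hDm M (hB2' n).1 G4.1 (hB2' n).2 G4.2
  have hinvdiff : ∀ᵐ p ∂H, ∀ n, ‖(den (mn n) (gn n) p)⁻¹ - (den mt gt p)⁻¹‖
      ≤ ‖gt - gn n‖ * (p.1 /
          (‖den (mn n) (gn n) p‖ * ‖den mt gt p‖))
        + ‖mt - mn n‖ * (p.2 /
          (‖den (mn n) (gn n) p‖ * ‖den mt gt p‖)) := by
    filter_upwards [hHsupp, hne, hDne] with p hp hn hD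
    intro n
    have hd1 : den (mn n) (gn n) p ≠ 0 := hn n
    have hq : 0 < ‖den (mn n) (gn n) p‖ * ‖den mt gt p‖ :=
      mul_pos (norm_pos_iff.mpr hd1) (norm_pos_iff.mpr hD)
    rw [inv_sub_inv hd1 hD, norm_div]
    simp only [norm_mul]
    have e : den mt gt p - den (mn n) (gn n) p
        = ↑p.1 * (gt - gn n) + ↑p.2 * (mt - mn n) := by
      unfold den; ring
    rw [e]
    have hnum : ‖↑p.1 * (gt - gn n) + ↑p.2 * (mt - mn n)‖
        ≤ p.1 * ‖gt - gn n‖ + p.2 * ‖mt - mn n‖ := by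
      refine le_trans (norm_add_le _ _) ?_
      simp only [norm_mul, Complex.norm_real, Real.norm_eq_abs, _root_.abs_of_nonneg hp.1,
        _root_.abs_of_nonneg hp.2, le_refl]
    calc ‖↑p.1 * (gt - gn n) + ↑p.2 * (mt - mn n)‖
          / (‖den (mn n) (gn n) p‖ * ‖den mt gt p‖)
        ≤ (p.1 * ‖gt - gn n‖ + p.2 * ‖mt - mn n‖)
          / (‖den (mn n) (gn n) p‖ * ‖den mt gt p‖) :=
          div_le_div_of_nonneg_right hnum hq.le
      _ = ‖gt - gn n‖ * (p.1 /
            (‖den (mn n) (gn n) p‖ * ‖den mt gt p‖))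
          + ‖mt - mn n‖ * (p.2 /
            (‖den (mn n) (gn n) p‖ * ‖den mt gt p‖)) := by
          ring
  have hg0 : Tendsto (fun n => ‖gt - gn n‖) atTop (𝓝 0) := by
    have h1 : Tendsto (fun n => gt - gn n) atTop (𝓝 0) := by
      have := (tendsto_const_nhds : Tendsto (fun _ : ℕ => gt) atTop (𝓝 gt)).sub hgn
      simpa using this
    simpa [Function.comp_def] using (continuous_norm.tendsto 0).comp h1
  have hm0 : Tendsto (fun n => ‖mt - mn n‖) atTop (𝓝 0) := by
    have h1 : Tendsto (fun n => mt - mn n) atTop (𝓝 0) := by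
      have := (tendsto_const_nhds : Tendsto (fun _ : ℕ => mt) atTop (𝓝 mt)).sub hmn
      simpa using this
    simpa [Function.comp_def] using (continuous_norm.tendsto 0).comp h1
  have hI1 : Tendsto (fun n => ∫ p, (den (mn n) (gn n) p)⁻¹ ∂H) atTop
      (𝓝 (∫ p, (den mt gt p)⁻¹ ∂H)) := by
    rw [tendsto_iff_norm_sub_tendsto_zero]
    have hbnd : ∀ n, ‖(∫ p, (den (mn n) (gn n) p)⁻¹ ∂H) - ∫ p, (den mt gt p)⁻¹ ∂H‖
        ≤ ‖gt - gn n‖ * M + ‖mt - mn n‖ * M := by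
      intro n
      rw [← integral_sub (hS n).2.2.1 hinvD]
      refine le_trans (norm_integral_le_integral_norm _) ?_
      have hle := integral_mono_ae ((hS n).2.2.1.sub hinvD).norm
        (((hcs n).1.const_mul (‖gt - gn n‖)).add
          ((hct n).1.const_mul (‖mt - mn n‖)))
        (by filter_upwards [hinvdiff] with p h; exact h n)
      refine le_trans hle ?_
      simp only [Pi.add_apply]
      rw [integral_add ((hcs n).1.const_mul _) ((hct n).1.const_mul _),
        integral_const_mul, integral_const_mul]
      exact add_le_add
        (mul_le_mul_of_nonneg_left (hcs n).2 (norm_nonneg _))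
        (mul_le_mul_of_nonneg_left (hct n).2 (norm_nonneg _))
    exact squeeze_zero (fun n => norm_nonneg _) hbnd
      (by simpa using (hg0.mul_const M).add (hm0.mul_const M))
  have hI2 : Tendsto (fun n => ∫ p, (p.2 : ℂ) / den (mn n) (gn n) p ∂H) atTop
      (𝓝 (∫ p, (p.2 : ℂ) / den mt gt p ∂H)) := by
    rw [tendsto_iff_norm_sub_tendsto_zero]
    have hbnd : ∀ n, ‖(∫ p, (p.2 : ℂ) / den (mn n) (gn n) p ∂H)
          - ∫ p, (p.2 : ℂ) / den mt gt p ∂H‖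
        ≤ ‖gt - gn n‖ * M + ‖mt - mn n‖ * M := by
      intro n
      rw [← integral_sub (hS n).2.2.2.1 htD]
      refine le_trans (norm_integral_le_integral_norm _) ?_
      have hptw : ∀ᵐ p ∂H, ‖(p.2 : ℂ) / den (mn n) (gn n) p - (p.2 : ℂ) / den mt gt p‖
          ≤ ‖gt - gn n‖ * (p.1 * p.2 /
              (‖den (mn n) (gn n) p‖ * ‖den mt gt p‖))
            + ‖mt - mn n‖ * (p.2 ^ 2 /
              (‖den (mn n) (gn n) p‖ * ‖den mt gt p‖)) := by
        filter_upwards [hinvdiff, ht_nn] with p h hp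
        have hn := h n
        have e : (p.2 : ℂ) / den (mn n) (gn n) p - (p.2 : ℂ) / den mt gt p
            = (p.2 : ℂ) * ((den (mn n) (gn n) p)⁻¹ - (den mt gt p)⁻¹) := by
          rw [div_eq_mul_inv, div_eq_mul_inv, ← mul_sub]
        rw [e, norm_mul, Complex.norm_real, Real.norm_eq_abs,
          _root_.abs_of_nonneg hp]
        calc p.2 * ‖(den (mn n) (gn n) p)⁻¹ - (den mt gt p)⁻¹‖
            ≤ p.2 * (‖gt - gn n‖ * (p.1 /
                (‖den (mn n) (gn n) p‖ * ‖den mt gt p‖))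
              + ‖mt - mn n‖ * (p.2 /
                (‖den (mn n) (gn n) p‖ * ‖den mt gt p‖))) :=
              mul_le_mul_of_nonneg_left hn hp
          _ = ‖gt - gn n‖ * (p.1 * p.2 /
                (‖den (mn n) (gn n) p‖ * ‖den mt gt p‖))
              + ‖mt - mn n‖ * (p.2 ^ 2 /
                (‖den (mn n) (gn n) p‖ * ‖den mt gt p‖)) := by
              ring
      have hle := integral_mono_ae ((hS n).2.2.2.1.sub htD).norm
        (((hcst n).1.const_mul (‖gt - gn n‖)).add
          ((hct2 n).1.const_mul (‖mt - mn n‖))) hptw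
      refine le_trans hle ?_
      simp only [Pi.add_apply]
      rw [integral_add ((hcst n).1.const_mul _) ((hct2 n).1.const_mul _),
        integral_const_mul, integral_const_mul]
      exact add_le_add
        (mul_le_mul_of_nonneg_left (hcst n).2 (norm_nonneg _))
        (mul_le_mul_of_nonneg_left (hct2 n).2 (norm_nonneg _))
    exact squeeze_zero (fun n => norm_nonneg _) hbnd
      (by simpa using (hg0.mul_const M).add (hm0.mul_const M))
  have eq1 : z * mt + (1 - (c : ℂ)) + (c : ℂ) * ∫ p, (den mt gt p)⁻¹ ∂H = 0 := by
    have hlim : Tendsto (fun n => zn n * mn n + (1 - (c : ℂ))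
        + (c : ℂ) * ∫ p, (den (mn n) (gn n) p)⁻¹ ∂H) atTop
        (𝓝 (z * mt + (1 - (c : ℂ)) + (c : ℂ) * ∫ p, (den mt gt p)⁻¹ ∂H)) :=
      ((hz.mul hmn).add tendsto_const_nhds).add (tendsto_const_nhds.mul hI1)
    exact tendsto_nhds_unique (hlim.congr fun n => (hS n).2.2.2.2.1) tendsto_const_nhds
  have hco : Tendsto (fun n => 1 / gn n) atTop (𝓝 (1 / gt)) := by
    simp only [one_div]
    exact hgn.inv₀ hgt0
  have eq2 : z + 1 / gt - (c : ℂ) * ∫ p, (p.2 : ℂ) / den mt gt p ∂H = 0 := by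
    have hlim : Tendsto (fun n => zn n + 1 / gn n
        - (c : ℂ) * ∫ p, (p.2 : ℂ) / den (mn n) (gn n) p ∂H) atTop
        (𝓝 (z + 1 / gt - (c : ℂ) * ∫ p, (p.2 : ℂ) / den mt gt p ∂H)) :=
      (hz.add hco).sub (tendsto_const_nhds.mul hI2)
    exact tendsto_nhds_unique (hlim.congr fun n => (hS n).2.2.2.2.2) tendsto_const_nhds
  exact ⟨hδgt, hDne, hinvD, htD, hgt0, hDne, hinvD, htD, eq1, eq2⟩

end
end

section
/- (Non-vanishing of the Jacobian determinant; key step in proving analyticity of the limiting density.) Assume 0 < c ≤ 1 and let x > 0 be real. Suppose (x, m, g) satisfies system (S) with Im m > 0, Im g > 0, V ≤ x, V₀ > 0, and with A₁, A₂, B₁, B₂ finite. Define the complex quantities Â_j = ∫ s·t^(j−1)/(1 + s·g + t·m)² dH(s,t) for j = 1,2 and B̂_j = ∫ t^j/(1 + s·g + t·m)² dH(s,t) for j = 1,2. Then (x − c·B̂₁)·(g⁻² − c·Â₂) − c²·Â₁·B̂₂ ≠ 0. -/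
open MeasureTheory Complex Filter Topology

noncomputable section

private lemma im_eq_zero_of_re_eq_abs {z : ℂ} (h : z.re = ‖z‖) : z.im = 0 := by
  have h2 : ‖z‖ ^ 2 = z.re * z.re + z.im * z.im := by
    rw [Complex.sq_norm, Complex.normSq_apply]
  rw [← h] at h2
  have h3 : z.im * z.im = 0 := by nlinarith
  exact mul_self_eq_zero.mp h3

set_option maxHeartbeats 2000000 in
theorem stmt9 (H : Measure (ℝ × ℝ)) [IsProbabilityMeasure H]
    (hHsupp : ∀ᵐ p ∂H, 0 ≤ p.1 ∧ 0 ≤ p.2)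
    (c : ℝ) (hc : 0 < c) (hc1 : c ≤ 1)
    (x : ℝ) (hx : 0 < x)
    (m g : ℂ) (hS : SatS H c (x : ℂ) m g)
    (hm : 0 < m.im) (hg : 0 < g.im)
    (hV : V H c m g ≤ x) (hV0 : 0 < V0 H c m g)
    (hA1 : IntA1 H m g) (hA2 : IntA2 H m g)
    (hB1 : IntB H m g 1) (hB2 : IntB H m g 2) :
    ((x : ℂ) - c * ∫ p, (p.2 : ℂ) / den m g p ^ 2 ∂H) *
        ((g ^ 2)⁻¹ - c * ∫ p, (p.1 : ℂ) * p.2 / den m g p ^ 2 ∂H) -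
      (c : ℂ) ^ 2 * (∫ p, (p.1 : ℂ) / den m g p ^ 2 ∂H) *
        (∫ p, (p.2 : ℂ) ^ 2 / den m g p ^ 2 ∂H) ≠ 0 := by
  obtain ⟨hgne, hdne, hI1, hI2, heq1, heq2⟩ := hS
  have hdmeas : Measurable (den m g) := by unfold den; fun_prop
  -- complex integrands and their integrability
  have hB1u : Integrable (fun p : ℝ × ℝ => p.2 ^ 1 / ‖den m g p‖ ^ 2) H := hB1
  have hB2u : Integrable (fun p : ℝ × ℝ => p.2 ^ 2 / ‖den m g p‖ ^ 2) H := hB2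
  have hA1u : Integrable (fun p : ℝ × ℝ => p.1 / ‖den m g p‖ ^ 2) H := hA1
  have hA2u : Integrable (fun p : ℝ × ℝ => p.1 * p.2 / ‖den m g p‖ ^ 2) H := hA2
  have hB1' : Integrable (fun p : ℝ × ℝ => p.2 / ‖den m g p‖ ^ 2) H := by
    simpa using hB1u
  have IB1c : Integrable (fun p : ℝ × ℝ => (p.2 : ℂ) / den m g p ^ 2) H := by
    refine hB1'.mono' ?_ ?_
    · exact (Measurable.div (Complex.measurable_ofReal.comp measurable_snd) (hdmeas.pow_const 2)).aestronglyMeasurable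
    · filter_upwards [hHsupp] with p hp
      simp [map_div₀, map_pow, Complex.norm_real, Real.norm_eq_abs, _root_.abs_of_nonneg hp.2]
  have IA1c : Integrable (fun p : ℝ × ℝ => (p.1 : ℂ) / den m g p ^ 2) H := by
    refine hA1u.mono' ?_ ?_
    · exact (Measurable.div (Complex.measurable_ofReal.comp measurable_fst) (hdmeas.pow_const 2)).aestronglyMeasurable
    · filter_upwards [hHsupp] with p hp
      simp [map_div₀, map_pow, Complex.norm_real, Real.norm_eq_abs, _root_.abs_of_nonneg hp.1]
  have IA2c : Integrable (fun p : ℝ × ℝ => (p.1 : ℂ) * p.2 / den m g p ^ 2) H := by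
    refine hA2u.mono' ?_ ?_
    · exact (Measurable.div ((Complex.measurable_ofReal.comp measurable_fst).mul (Complex.measurable_ofReal.comp measurable_snd))
        (hdmeas.pow_const 2)).aestronglyMeasurable
    · filter_upwards [hHsupp] with p hp
      simp [map_div₀, map_pow, map_mul, Complex.norm_real, Real.norm_eq_abs,
        _root_.abs_of_nonneg hp.1, _root_.abs_of_nonneg hp.2]
  have IB2c : Integrable (fun p : ℝ × ℝ => (p.2 : ℂ) ^ 2 / den m g p ^ 2) H := by
    refine hB2u.mono' ?_ ?_
    · exact (((Complex.measurable_ofReal.comp measurable_snd).pow_const 2).div (hdmeas.pow_const 2)).aestronglyMeasurable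
    · filter_upwards [hHsupp] with p hp
      simp [map_div₀, map_pow, Complex.norm_real, Real.norm_eq_abs, _root_.abs_of_nonneg hp.2,
        sq_abs]
  -- norm bounds
  have n1 : ‖∫ p, (p.2 : ℂ) / den m g p ^ 2 ∂H‖ ≤ B H m g 1 := by
    refine (norm_integral_le_integral_norm _).trans ?_
    unfold B
    refine integral_mono_ae IB1c.norm hB1u ?_
    filter_upwards [hHsupp] with p hp
    simp [map_div₀, map_pow, Complex.norm_real, Real.norm_eq_abs, _root_.abs_of_nonneg hp.2]
  have n2 : ‖∫ p, (p.1 : ℂ) * p.2 / den m g p ^ 2 ∂H‖ ≤ A2 H m g := by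
    refine (norm_integral_le_integral_norm _).trans ?_
    unfold A2
    refine integral_mono_ae IA2c.norm hA2u ?_
    filter_upwards [hHsupp] with p hp
    simp [map_div₀, map_pow, map_mul, Complex.norm_real, Real.norm_eq_abs,
      _root_.abs_of_nonneg hp.1, _root_.abs_of_nonneg hp.2]
  have n3 : ‖∫ p, (p.1 : ℂ) / den m g p ^ 2 ∂H‖ ≤ A1 H m g := by
    refine (norm_integral_le_integral_norm _).trans ?_
    unfold A1
    refine integral_mono_ae IA1c.norm hA1u ?_
    filter_upwards [hHsupp] with p hp
    simp [map_div₀, map_pow, Complex.norm_real, Real.norm_eq_abs, _root_.abs_of_nonneg hp.1]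
  have n4 : ‖∫ p, (p.2 : ℂ) ^ 2 / den m g p ^ 2 ∂H‖ ≤ B H m g 2 := by
    refine (norm_integral_le_integral_norm _).trans ?_
    unfold B
    refine integral_mono_ae IB2c.norm hB2u ?_
    filter_upwards [hHsupp] with p hp
    simp [map_div₀, map_pow, Complex.norm_real, Real.norm_eq_abs, _root_.abs_of_nonneg hp.2, sq_abs]
  have hA1nn : 0 ≤ A1 H m g := le_trans (norm_nonneg _) n3
  have hA2nn : 0 ≤ A2 H m g := le_trans (norm_nonneg _) n2
  have hB1nn : 0 ≤ B H m g 1 := le_trans (norm_nonneg _) n1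
  have hB2nn : 0 ≤ B H m g 2 := le_trans (norm_nonneg _) n4
  -- B2 > 0 from the imaginary part of the second equation
  have key2 : ∀ p : ℝ × ℝ, ((p.2 : ℂ) / den m g p).im
      = -(g.im * (p.1 * p.2 / ‖den m g p‖ ^ 2)
          + m.im * (p.2 ^ 2 / ‖den m g p‖ ^ 2)) := by
    intro p
    have him : (den m g p).im = p.1 * g.im + p.2 * m.im := by simp [den]
    rw [Complex.div_im, ← Complex.sq_norm, him]
    simp only [Complex.ofReal_re, Complex.ofReal_im]
    ring
  have hI2im : (∫ p, (p.2 : ℂ) / den m g p ∂H).im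
      = -(g.im * A2 H m g + m.im * B H m g 2) := by
    have hiim : ∫ p, ((p.2 : ℂ) / den m g p).im ∂H
        = (∫ p, (p.2 : ℂ) / den m g p ∂H).im := by
      simpa using integral_im hI2
    rw [← hiim]
    calc ∫ p, ((p.2 : ℂ) / den m g p).im ∂H
        = ∫ p, -(g.im * (p.1 * p.2 / ‖den m g p‖ ^ 2)
            + m.im * (p.2 ^ 2 / ‖den m g p‖ ^ 2)) ∂H := by
          exact integral_congr_ae (Eventually.of_forall key2)
      _ = -(g.im * A2 H m g + m.im * B H m g 2) := by
          rw [integral_neg, integral_add (hA2u.const_mul _) (hB2u.const_mul _),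
            integral_const_mul, integral_const_mul]
          rfl
  have hB2pos : 0 < B H m g 2 := by
    have h2im : (g⁻¹).im - c * (-(g.im * A2 H m g + m.im * B H m g 2)) = 0 := by
      have h := congrArg Complex.im heq2
      rwa [Complex.sub_im, Complex.add_im, Complex.ofReal_im, Complex.im_ofReal_mul,
        hI2im, one_div, zero_add, Complex.zero_im] at h
    have habs : (0:ℝ) < ‖g‖ ^ 2 := by
      have := norm_pos_iff.mpr hgne
      positivity
    have hident : c * m.im * B H m g 2 = g.im * V0 H c m g := by
      unfold V0
      rw [Complex.inv_im, show Complex.normSq g = ‖g‖ ^ 2 from (Complex.sq_norm g).symm]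
        at h2im
      field_simp at h2im ⊢
      nlinarith [h2im]
    nlinarith [hident, mul_pos hg hV0, mul_pos hc hm]
  -- the V ≤ x hypothesis
  have hVx : c ^ 2 * A1 H m g * B H m g 2 ≤ (x - c * B H m g 1) * V0 H c m g := by
    have := hV
    unfold V at this
    have h' : c ^ 2 * A1 H m g * B H m g 2 / V0 H c m g ≤ x - c * B H m g 1 := by linarith
    calc c ^ 2 * A1 H m g * B H m g 2
        = c ^ 2 * A1 H m g * B H m g 2 / V0 H c m g * V0 H c m g := by
          field_simp
      _ ≤ (x - c * B H m g 1) * V0 H c m g := by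
          exact mul_le_mul_of_nonneg_right h' hV0.le
  have hxc : 0 ≤ x - c * B H m g 1 := by
    nlinarith [mul_nonneg (mul_nonneg (sq_nonneg c) hA1nn) hB2nn]
  -- main argument by contradiction
  intro h0
  rw [sub_eq_zero] at h0
  set Ih1 := ∫ p, (p.2 : ℂ) / den m g p ^ 2 ∂H with hIh1
  set Ih2 := ∫ p, (p.1 : ℂ) * p.2 / den m g p ^ 2 ∂H with hIh2
  set Ih3 := ∫ p, (p.1 : ℂ) / den m g p ^ 2 ∂H with hIh3
  set Ih4 := ∫ p, (p.2 : ℂ) ^ 2 / den m g p ^ 2 ∂H with hIh4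
  have hnv : V0 H c m g ≤ ‖(g ^ 2)⁻¹ - (c : ℂ) * Ih2‖ := by
    have h1 : ‖((g : ℂ) ^ 2)⁻¹‖ - ‖(c : ℂ) * Ih2‖ ≤ ‖(g ^ 2)⁻¹ - (c : ℂ) * Ih2‖ :=
      norm_sub_norm_le _ _
    have h2 : ‖((g : ℂ) ^ 2)⁻¹‖ = (‖g‖ ^ 2)⁻¹ := by
      simp [map_inv₀, map_pow]
    have h3 : ‖(c : ℂ) * Ih2‖ ≤ c * A2 H m g := by
      rw [norm_mul, Complex.norm_real, Real.norm_eq_abs, _root_.abs_of_pos hc]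
      exact mul_le_mul_of_nonneg_left n2 hc.le
    unfold V0
    linarith
  have hprod : ‖(x : ℂ) - (c : ℂ) * Ih1‖ * ‖(g ^ 2)⁻¹ - (c : ℂ) * Ih2‖
      ≤ (x - c * B H m g 1) * V0 H c m g := by
    rw [← norm_mul, h0]
    have h1 : ‖(c : ℂ) ^ 2 * Ih3 * Ih4‖ = c ^ 2 * ‖Ih3‖ * ‖Ih4‖ := by
      simp [norm_mul, norm_pow, Complex.norm_real, Real.norm_eq_abs, _root_.abs_of_pos hc]
    rw [h1]
    calc c ^ 2 * ‖Ih3‖ * ‖Ih4‖ ≤ c ^ 2 * A1 H m g * B H m g 2 := by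
          gcongr <;> positivity
      _ ≤ (x - c * B H m g 1) * V0 H c m g := hVx
  have hule : ‖(x : ℂ) - (c : ℂ) * Ih1‖ ≤ x - c * B H m g 1 := by
    have h1 : ‖(x : ℂ) - (c : ℂ) * Ih1‖ * V0 H c m g
        ≤ (x - c * B H m g 1) * V0 H c m g :=
      le_trans (mul_le_mul_of_nonneg_left hnv (norm_nonneg _)) hprod
    exact le_of_mul_le_mul_right h1 hV0
  have hre_eq : Ih1.re = B H m g 1 := by
    have h1 : ((x : ℂ) - (c : ℂ) * Ih1).re ≤ ‖(x : ℂ) - (c : ℂ) * Ih1‖ := by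
      exact Complex.re_le_norm _
    have h2 : ((x : ℂ) - (c : ℂ) * Ih1).re = x - c * Ih1.re := by
      simp [Complex.sub_re, Complex.mul_re]
    have h3 : Ih1.re ≤ ‖Ih1‖ := by
      exact Complex.re_le_norm _
    have h1' : x - c * Ih1.re ≤ ‖(x : ℂ) - (c : ℂ) * Ih1‖ := by rw [← h2]; exact h1
    have h5 : B H m g 1 ≤ Ih1.re := by
      have hcB : c * B H m g 1 ≤ c * Ih1.re := by linarith [h1', hule]
      exact le_of_mul_le_mul_left hcB hc
    linarith [h3.trans n1, h5]
  -- equality case of Re ≤ abs forces t = 0 a.e.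
  have hFint : Integrable
      (fun p : ℝ × ℝ => p.2 / ‖den m g p‖ ^ 2
        - ((p.2 : ℂ) / den m g p ^ 2).re) H := by
    have h := IB1c.re
    refine hB1'.sub ?_
    simpa using h
  have hFzero : ∫ p, (p.2 / ‖den m g p‖ ^ 2
      - ((p.2 : ℂ) / den m g p ^ 2).re) ∂H = 0 := by
    have h := IB1c.re
    rw [integral_sub hB1' (by simpa using h)]
    have h1 : ∫ p, ((p.2 : ℂ) / den m g p ^ 2).re ∂H = Ih1.re := by
      simpa using integral_re IB1c
    have h2 : ∫ p, p.2 / ‖den m g p‖ ^ 2 ∂H = B H m g 1 := by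
      unfold B; norm_num
    rw [h1, h2, hre_eq, sub_self]
  have hFnonneg : 0 ≤ᵐ[H] fun p : ℝ × ℝ => p.2 / ‖den m g p‖ ^ 2
      - ((p.2 : ℂ) / den m g p ^ 2).re := by
    filter_upwards [hHsupp] with p hp
    have h1 : ((p.2 : ℂ) / den m g p ^ 2).re ≤ ‖(p.2 : ℂ) / den m g p ^ 2‖ := by
      exact Complex.re_le_norm _
    have h2 : ‖(p.2 : ℂ) / den m g p ^ 2‖ = p.2 / ‖den m g p‖ ^ 2 := by
      simp [map_div₀, map_pow, Complex.norm_real, Real.norm_eq_abs, _root_.abs_of_nonneg hp.2]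
    simp only [Pi.zero_apply]
    linarith [h1.trans_eq h2]
  have hFae := (integral_eq_zero_iff_of_nonneg_ae hFnonneg hFint).mp hFzero
  have ht0 : ∀ᵐ p ∂H, p.2 = 0 := by
    filter_upwards [hFae, hHsupp, hdne] with p hF hp hd
    by_contra htne
    have ht : 0 < p.2 := lt_of_le_of_ne hp.2 (Ne.symm htne)
    have hF' : p.2 / ‖den m g p‖ ^ 2 = ((p.2 : ℂ) / den m g p ^ 2).re := by
      have hF0 : p.2 / ‖den m g p‖ ^ 2
          - ((p.2 : ℂ) / den m g p ^ 2).re = 0 := hF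
      linarith
    set w : ℂ := den m g p ^ 2 with hw
    have hwne : w ≠ 0 := pow_ne_zero 2 hd
    have hre : (w⁻¹).re = ‖w⁻¹‖ := by
      have h1 : ((p.2 : ℂ) / w).re = p.2 * (w⁻¹).re := by
        rw [div_eq_mul_inv]
        exact Complex.re_ofReal_mul p.2 w⁻¹
      have h2 : ‖w⁻¹‖ = (‖den m g p‖ ^ 2)⁻¹ := by
        rw [norm_inv, hw, norm_pow]
      have h3 : p.2 * (‖den m g p‖ ^ 2)⁻¹ = p.2 * (w⁻¹).re := by
        rw [← div_eq_mul_inv]; rw [hF', h1]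
      have := mul_left_cancel₀ (ne_of_gt ht) h3
      rw [h2, ← this]
    have him0 : (w⁻¹).im = 0 := im_eq_zero_of_re_eq_abs (by rw [hre, norm_inv])
    -- so w has zero imaginary part
    have hwim : w.im = 0 := by
      have h1 : (w⁻¹).im = -w.im / Complex.normSq w := Complex.inv_im w
      have h2 : Complex.normSq w ≠ 0 := (Complex.normSq_pos.mpr hwne).ne'
      rw [him0] at h1
      field_simp at h1
      linarith [h1, zero_mul (Complex.normSq w)]
    -- but Im(den) > 0 and Re(den) would have to vanish; then Re(w) < 0, contradiction
    have hdim : 0 < (den m g p).im := by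
      have : (den m g p).im = p.1 * g.im + p.2 * m.im := by simp [den]
      rw [this]
      have := mul_nonneg hp.1 hg.le
      nlinarith [mul_pos ht hm]
    have hwim' : w.im = 2 * (den m g p).re * (den m g p).im := by
      rw [hw, sq, Complex.mul_im]; ring
    have hdre : (den m g p).re = 0 := by
      rw [hwim'] at hwim
      rcases mul_eq_zero.mp (by linarith : (den m g p).re * (den m g p).im = 0) with h | h
      · exact h
      · exact absurd h hdim.ne'
    have hwre : w.re < 0 := by
      rw [hw, sq, Complex.mul_re, hdre]
      nlinarith [hdim]
    have hinvre : (w⁻¹).re < 0 := by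
      rw [Complex.inv_re]
      exact div_neg_of_neg_of_pos hwre (Complex.normSq_pos.mpr hwne)
    have : 0 ≤ (w⁻¹).re := by rw [hre]; positivity
    linarith
  have hB2zero : B H m g 2 = 0 := by
    unfold B
    refine integral_eq_zero_of_ae ?_
    filter_upwards [ht0] with p hp
    simp [hp]
  linarith [hB2pos, hB2zero.ge]

end
end

section
/- (Divergence lemma.) Let H be a nonzero finite Borel measure on ℝ² whose (topological) support is a closed subset of the closed first quadrant {(s,t) : s ≥ 0, t ≥ 0} lying at positive distance φ > 0 from the origin. Let c > 0, k > 0, η > 0, w₀ ∈ ℝ, set U = (w₀ − η, w₀ + η), and let g, m : U → ℝ be differentiable functions with g′(w) ≥ k and m′(w) ≥ k for all w ∈ U. Suppose there exists a point (s₀, t₀) in the support of H such that s₀·g(w₀) + t₀·m(w₀) + c = 0. Then there exists w* ∈ U such that ∫ |s·g(w*) + t·m(w*) + c|⁻² dH(s,t) = ∞. -/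
open MeasureTheory Complex Filter Topology

open ENNReal in
noncomputable section

/-- The topological support of a Borel measure on `ℝ²`: the set of points all of whose
open balls have positive measure. -/
def msupport (H : Measure (ℝ × ℝ)) : Set (ℝ × ℝ) :=
  {q | ∀ ε > 0, 0 < H (Metric.ball q ε)}

section auxiliary

open ENNReal

lemma interval_close {x y a z ρ : ℝ} (h1 : z*ρ ≤ x - a) (h2 : x - a < (z+1)*ρ)
    (h3 : z*ρ ≤ y - a) (h4 : y - a < (z+1)*ρ) : |x - y| ≤ ρ := by
  rw [abs_le]; constructor <;> nlinarith

lemma mvt_incr {g m : ℝ → ℝ} {k η w0 φ : ℝ} (hk : 0 < k) (hφ : 0 < φ)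
    (hgdiff : ∀ w ∈ Set.Ioo (w0 - η) (w0 + η), DifferentiableAt ℝ g w ∧ k ≤ deriv g w)
    (hmdiff : ∀ w ∈ Set.Ioo (w0 - η) (w0 + η), DifferentiableAt ℝ m w ∧ k ≤ deriv m w)
    {s t c : ℝ} (hs : 0 ≤ s) (ht : 0 ≤ t) (hst : φ ≤ s + t)
    {a b : ℝ} (hab : a < b) (ha : w0 - η < a) (hb : b < w0 + η) :
    k * φ * (b - a) ≤ (s * g b + t * m b + c) - (s * g a + t * m a + c) := by
  set h : ℝ → ℝ := fun w => s * g w + t * m w + c with hh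
  set h' : ℝ → ℝ := fun w => s * deriv g w + t * deriv m w with hh'
  have hsub : Set.Icc a b ⊆ Set.Ioo (w0 - η) (w0 + η) := fun x hx =>
    ⟨lt_of_lt_of_le ha hx.1, lt_of_le_of_lt hx.2 hb⟩
  have hder : ∀ x ∈ Set.Ioo a b, HasDerivAt h (h' x) x := by
    intro x hx
    have hx' : x ∈ Set.Ioo (w0 - η) (w0 + η) := hsub ⟨hx.1.le, hx.2.le⟩
    exact (((hgdiff x hx').1.hasDerivAt.const_mul s).add
      ((hmdiff x hx').1.hasDerivAt.const_mul t)).add_const c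
  have hcont : ContinuousOn h (Set.Icc a b) := by
    intro x hx
    have hx' := hsub hx
    exact (((((hgdiff x hx').1.const_mul s).add
      ((hmdiff x hx').1.const_mul t)).add_const c).continuousAt).continuousWithinAt
  obtain ⟨ξ, hξ, hslope⟩ := exists_hasDerivAt_eq_slope h h' hab hcont hder
  have hξ' : ξ ∈ Set.Ioo (w0 - η) (w0 + η) := hsub ⟨hξ.1.le, hξ.2.le⟩
  have hd : k * φ ≤ h' ξ := by
    have h1 := (hgdiff ξ hξ').2
    have h2 := (hmdiff ξ hξ').2
    have : k * (s + t) ≤ h' ξ := by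
      simp only [hh']
      nlinarith [mul_le_mul_of_nonneg_left h1 hs, mul_le_mul_of_nonneg_left h2 ht]
    nlinarith
  have hba : 0 < b - a := by linarith
  have : h b - h a = h' ξ * (b - a) := by
    field_simp at hslope
    linarith [hslope]
  rw [hh] at this
  simp only at this
  nlinarith [mul_le_mul_of_nonneg_right hd hba.le]

lemma h_contOn {g m : ℝ → ℝ} {η w0 : ℝ} {k : ℝ}
    (hgdiff : ∀ w ∈ Set.Ioo (w0 - η) (w0 + η), DifferentiableAt ℝ g w ∧ k ≤ deriv g w)
    (hmdiff : ∀ w ∈ Set.Ioo (w0 - η) (w0 + η), DifferentiableAt ℝ m w ∧ k ≤ deriv m w)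
    (s t c : ℝ) {a b : ℝ} (ha : w0 - η < a) (hb : b < w0 + η) :
    ContinuousOn (fun w => s * g w + t * m w + c) (Set.Icc a b) := by
  intro x hx
  have hx' : x ∈ Set.Ioo (w0 - η) (w0 + η) := ⟨lt_of_lt_of_le ha hx.1, lt_of_le_of_lt hx.2 hb⟩
  exact (((((hgdiff x hx').1.const_mul s).add
    ((hmdiff x hx').1.const_mul t)).add_const c).continuousAt).continuousWithinAt

lemma tau_exists {g m : ℝ → ℝ} {k η w0 φ c : ℝ} (hk : 0 < k) (hφ : 0 < φ) (hη : 0 < η)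
    (hgdiff : ∀ w ∈ Set.Ioo (w0 - η) (w0 + η), DifferentiableAt ℝ g w ∧ k ≤ deriv g w)
    (hmdiff : ∀ w ∈ Set.Ioo (w0 - η) (w0 + η), DifferentiableAt ℝ m w ∧ k ≤ deriv m w)
    {s t : ℝ} (hs : 0 ≤ s) (ht : 0 ≤ t) (hst : φ ≤ s + t)
    (hsmall : |s * g w0 + t * m w0 + c| ≤ k * φ * η / 4) :
    ∃ w ∈ Set.Icc (w0 - η/2) (w0 + η/2), s * g w + t * m w + c = 0 := by
  set h : ℝ → ℝ := fun w => s * g w + t * m w + c with hh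
  have hka : 0 < k * φ * η := by positivity
  have h1 : k * φ * (η/2) ≤ h w0 - h (w0 - η/2) := by
    have := mvt_incr hk hφ hgdiff hmdiff (c := c) hs ht hst
      (a := w0 - η/2) (b := w0) (by linarith) (by linarith) (by linarith)
    simp only [hh]
    convert this using 2 <;> ring
  have h2 : k * φ * (η/2) ≤ h (w0 + η/2) - h w0 := by
    have := mvt_incr hk hφ hgdiff hmdiff (c := c) hs ht hst
      (a := w0) (b := w0 + η/2) (by linarith) (by linarith) (by linarith)
    simp only [hh]
    convert this using 2 <;> ring
  have habs := abs_le.mp hsmall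
  have hneg : h (w0 - η/2) ≤ 0 := by
    have : h w0 ≤ k * φ * η / 4 := habs.2
    linarith
  have hpos : 0 ≤ h (w0 + η/2) := by
    have : -(k * φ * η / 4) ≤ h w0 := habs.1
    linarith
  have hcont : ContinuousOn h (Set.Icc (w0 - η/2) (w0 + η/2)) :=
    h_contOn hgdiff hmdiff s t c (by linarith) (by linarith)
  have hIVT := intermediate_value_Icc (by linarith : w0 - η/2 ≤ w0 + η/2) hcont
  have h0mem : (0:ℝ) ∈ Set.Icc (h (w0 - η/2)) (h (w0 + η/2)) := ⟨hneg, hpos⟩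
  obtain ⟨w, hwmem, hw⟩ := hIVT h0mem
  exact ⟨w, hwmem, hw⟩

lemma Sj_exists {g m : ℝ → ℝ} {k η w0 : ℝ} (hη : 0 < η)
    (hgdiff : ∀ w ∈ Set.Ioo (w0 - η) (w0 + η), DifferentiableAt ℝ g w ∧ k ≤ deriv g w)
    (hmdiff : ∀ w ∈ Set.Ioo (w0 - η) (w0 + η), DifferentiableAt ℝ m w ∧ k ≤ deriv m w)
    (s t c tq : ℝ) (htq : tq ∈ Set.Icc (w0 - η/2) (w0 + η/2))
    (h0 : s * g tq + t * m tq + c = 0) :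
    ∃ j : ℕ, ∀ w : ℝ, |w - tq| ≤ 1/((j:ℝ)+1) →
      |s * g w + t * m w + c| ≤ ((j:ℝ)+1) * |w - tq| := by
  have htq' : tq ∈ Set.Ioo (w0 - η) (w0 + η) :=
    ⟨by linarith [htq.1], by linarith [htq.2]⟩
  set A : ℝ := s * deriv g tq + t * deriv m tq with hA
  have hder : HasDerivAt (fun w => s * g w + t * m w + c) A tq :=
    (((hgdiff tq htq').1.hasDerivAt.const_mul s).add
      ((hmdiff tq htq').1.hasDerivAt.const_mul t)).add_const c
  have hlo := hasDerivAt_iff_isLittleO.mp hder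
  have hev := Asymptotics.isLittleO_iff.mp hlo (c := 1) one_pos
  rw [Metric.eventually_nhds_iff] at hev
  obtain ⟨ρ, hρ0, hρ⟩ := hev
  refine ⟨⌈|A|⌉₊ + ⌈1/ρ⌉₊ + 1, fun w hw => ?_⟩
  have hcast : ((⌈|A|⌉₊ + ⌈1/ρ⌉₊ + 1 : ℕ) : ℝ) = (⌈|A|⌉₊ : ℝ) + (⌈1/ρ⌉₊ : ℝ) + 1 := by
    push_cast; ring
  have hA1 : |A| ≤ (⌈|A|⌉₊ : ℝ) := Nat.le_ceil _
  have hρ1 : 1/ρ ≤ (⌈1/ρ⌉₊ : ℝ) := Nat.le_ceil _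
  have hjpos : (0:ℝ) < ((⌈|A|⌉₊ + ⌈1/ρ⌉₊ + 1 : ℕ) : ℝ) + 1 := by positivity
  have hsmall : 1/(((⌈|A|⌉₊ + ⌈1/ρ⌉₊ + 1 : ℕ) : ℝ) + 1) < ρ := by
    rw [div_lt_iff₀ hjpos]
    rw [hcast]
    have h2 : 1 < ρ * ((1/ρ) + 1) := by
      rw [mul_add, mul_one_div, div_self hρ0.ne', mul_one]; linarith
    calc (1:ℝ) < ρ * ((1/ρ) + 1) := h2
      _ ≤ ρ * ((⌈|A|⌉₊ : ℝ) + (⌈1/ρ⌉₊ : ℝ) + 1 + 1) := by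
          apply mul_le_mul_of_nonneg_left _ hρ0.le
          have : (0:ℝ) ≤ (⌈|A|⌉₊ : ℝ) := Nat.cast_nonneg _
          linarith
  have hdw : dist w tq < ρ := by
    rw [Real.dist_eq]
    exact lt_of_le_of_lt hw hsmall
  have hb := hρ hdw
  simp only [h0, Real.norm_eq_abs, smul_eq_mul, one_mul] at hb
  have habs : |s * g w + t * m w + c| ≤ |A| * |w - tq| + |w - tq| := by
    have h3 : |(w - tq) * A| = |A| * |w - tq| := by rw [abs_mul]; ring
    calc |s * g w + t * m w + c|
        = |(s * g w + t * m w + c - 0 - (w - tq) * A) + (w - tq) * A| := by ring_nf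
      _ ≤ |s * g w + t * m w + c - 0 - (w - tq) * A| + |(w - tq) * A| := abs_add_le _ _
      _ ≤ |w - tq| + |A| * |w - tq| := by rw [h3]; exact add_le_add_left hb _
      _ = |A| * |w - tq| + |w - tq| := by ring
  refine le_trans habs ?_
  rw [hcast]
  have h4 : (0:ℝ) ≤ |w - tq| := abs_nonneg _
  nlinarith [Nat.cast_nonneg ⌈1/ρ⌉₊ (α := ℝ)]

lemma density_point (H : Measure (ℝ × ℝ)) [IsFiniteMeasure H] (τ : ℝ × ℝ → ℝ)
    (Sg : Set (ℝ × ℝ)) (hSgpos : 0 < H Sg) {η w0 Jr : ℝ} (hη : 0 < η) (hJr0 : 0 < Jr)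
    (hτI : ∀ q ∈ Sg, τ q ∈ Set.Icc (w0 - η/2) (w0 + η/2)) :
    ∃ w₁ ∈ Set.Icc (w0 - η/2) (w0 + η/2), ∀ n : ℕ, ∃ ρ : ℝ, 0 < ρ ∧ ρ ≤ 1/Jr ∧
      (n : ℝ≥0∞) * ENNReal.ofReal (ρ^2) < H {q ∈ Sg | |τ q - w₁| ≤ ρ} := by
  classical
  by_contra hcon
  push_neg at hcon
  set I : Set ℝ := Set.Icc (w0 - η/2) (w0 + η/2) with hI
  set In : ℕ → Set ℝ := fun n => {w | w ∈ I ∧ ∀ ρ : ℝ, 0 < ρ → ρ ≤ 1/Jr →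
      H {q ∈ Sg | |τ q - w| ≤ ρ} ≤ (n : ℝ≥0∞) * ENNReal.ofReal (ρ^2)} with hIn
  obtain ⟨n, hE⟩ : ∃ n : ℕ, 0 < H {q ∈ Sg | τ q ∈ In n} := by
    by_contra hno
    push_neg at hno
    have h1 : Sg ⊆ ⋃ n : ℕ, {q ∈ Sg | τ q ∈ In n} := by
      intro q hq
      obtain ⟨n, hn⟩ := hcon (τ q) (hτI q hq)
      exact Set.mem_iUnion.mpr ⟨n, hq, hτI q hq, hn⟩
    have h2 : H Sg ≤ ∑' n : ℕ, H {q ∈ Sg | τ q ∈ In n} :=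
      le_trans (measure_mono h1) (measure_iUnion_le _)
    have h3 : ∑' n : ℕ, H {q ∈ Sg | τ q ∈ In n} = 0 := by
      simp only [ENNReal.tsum_eq_zero]
      exact fun n => le_antisymm (hno n) zero_le
    rw [h3] at h2
    exact absurd (le_antisymm h2 zero_le) hSgpos.ne'
  set E : Set (ℝ × ℝ) := {q ∈ Sg | τ q ∈ In n} with hEdef
  have hEne : H E ≠ ⊤ := measure_ne_top H E
  set ε' : ℝ := (H E).toReal with hε'
  have hε'pos : 0 < ε' := ENNReal.toReal_pos hE.ne' hEne
  set X : ℝ := (n : ℝ) * (η + 1) with hX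
  have hX0 : 0 ≤ X := by positivity
  set ρ : ℝ := min (1/Jr) (min 1 (ε' / (X + 1))) with hρdef
  have hρ0 : 0 < ρ := lt_min (by positivity) (lt_min one_pos (by positivity))
  have hρJ : ρ ≤ 1/Jr := min_le_left _ _
  have hρ1 : ρ ≤ 1 := le_trans (min_le_right _ _) (min_le_left _ _)
  have hρε : ρ ≤ ε' / (X + 1) := le_trans (min_le_right _ _) (min_le_right _ _)
  clear_value ρ
  clear hρdef
  set a : ℝ := w0 - η/2 with ha
  set M : ℕ := ⌊η/ρ⌋₊ + 1 with hM
  set C : ℕ → Set (ℝ × ℝ) := fun i =>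
    if h : ∃ q ∈ E, ⌊(τ q - a)/ρ⌋₊ = i then {q ∈ Sg | |τ q - τ h.choose| ≤ ρ} else ∅ with hC
  have hrange : ∀ q ∈ E, 0 ≤ τ q - a ∧ τ q - a ≤ η := by
    intro q hq
    have h1 : τ q ∈ I := hq.2.1
    constructor
    · have := h1.1; simp only [ha]; linarith
    · have := h1.2; simp only [ha]; linarith
  have hfloor : ∀ x : ℝ, 0 ≤ x → ∀ i : ℕ, ⌊x/ρ⌋₊ = i → (i:ℝ) * ρ ≤ x ∧ x < ((i:ℝ)+1) * ρ := by
    intro x hx i hi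
    have h1 : (i:ℝ) ≤ x/ρ ∧ x/ρ < i+1 := by
      have := (Nat.floor_eq_iff (by positivity : (0:ℝ) ≤ x/ρ)).mp hi
      exact ⟨this.1, this.2⟩
    constructor
    · calc (i:ℝ) * ρ ≤ (x/ρ) * ρ := mul_le_mul_of_nonneg_right h1.1 hρ0.le
        _ = x := by field_simp
    · calc x = (x/ρ) * ρ := by field_simp
        _ < ((i:ℝ)+1) * ρ := mul_lt_mul_of_pos_right h1.2 hρ0
  have hcov : E ⊆ ⋃ i ∈ Finset.range M, C i := by
    intro q hq
    have hq0 := hrange q hq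
    set i := ⌊(τ q - a)/ρ⌋₊ with hidef
    have hiM : i < M := by
      have : i ≤ ⌊η/ρ⌋₊ := Nat.floor_mono (by gcongr; exact hq0.2)
      omega
    refine Set.mem_biUnion (Finset.mem_range.mpr hiM) ?_
    have hex : ∃ q' ∈ E, ⌊(τ q' - a)/ρ⌋₊ = i := ⟨q, hq, rfl⟩
    simp only [hC, dif_pos hex]
    refine ⟨hq.1, ?_⟩
    obtain ⟨hq'E, hq'i⟩ := hex.choose_spec
    have hx := hfloor (τ q - a) hq0.1 i rfl
    have hy := hfloor (τ hex.choose - a) (hrange _ hq'E).1 i hq'i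
    obtain ⟨z, h1, h2, h3, h4⟩ : ∃ z : ℝ, z * ρ ≤ τ q - a ∧ τ q - a < (z+1) * ρ ∧
        z * ρ ≤ τ hex.choose - a ∧ τ hex.choose - a < (z+1) * ρ :=
      ⟨(i:ℝ), hx.1, hx.2, hy.1, hy.2⟩
    exact interval_close h1 h2 h3 h4
  have hbound : ∀ i : ℕ, H (C i) ≤ (n : ℝ≥0∞) * ENNReal.ofReal (ρ^2) := by
    intro i
    by_cases hex : ∃ q ∈ E, ⌊(τ q - a)/ρ⌋₊ = i
    · simp only [hC, dif_pos hex]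
      have hq'E := hex.choose_spec.1
      have hIn' : τ hex.choose ∈ In n := hq'E.2
      exact hIn'.2 ρ hρ0 hρJ
    · simp only [hC, dif_neg hex, measure_empty]
      exact zero_le
  have hsum : H E ≤ (M : ℝ≥0∞) * ((n : ℝ≥0∞) * ENNReal.ofReal (ρ^2)) := by
    calc H E ≤ H (⋃ i ∈ Finset.range M, C i) := measure_mono hcov
      _ ≤ ∑ i ∈ Finset.range M, H (C i) := measure_biUnion_finset_le _ _
      _ ≤ ∑ _i ∈ Finset.range M, (n : ℝ≥0∞) * ENNReal.ofReal (ρ^2) :=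
          Finset.sum_le_sum (fun i _ => hbound i)
      _ = (M : ℝ≥0∞) * ((n : ℝ≥0∞) * ENNReal.ofReal (ρ^2)) := by
          rw [Finset.sum_const, Finset.card_range, nsmul_eq_mul]
  have heq : (M : ℝ≥0∞) * ((n : ℝ≥0∞) * ENNReal.ofReal (ρ^2)) =
      ENNReal.ofReal ((M : ℝ) * ((n : ℝ) * ρ^2)) := by
    rw [ENNReal.ofReal_mul (Nat.cast_nonneg M), ENNReal.ofReal_mul (Nat.cast_nonneg n),
      ENNReal.ofReal_natCast, ENNReal.ofReal_natCast]
  have hreal : (M : ℝ) * ((n : ℝ) * ρ^2) < ε' := by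
    have hMρ : (M : ℝ) * ρ ≤ η + 1 := by
      have h1 : (⌊η/ρ⌋₊ : ℝ) ≤ η/ρ := Nat.floor_le (by positivity)
      have h2 : (M : ℝ) = (⌊η/ρ⌋₊ : ℝ) + 1 := by simp [hM]
      have h3 : (M : ℝ) * ρ ≤ (η/ρ + 1) * ρ := by
        rw [h2]; exact mul_le_mul_of_nonneg_right (by linarith) hρ0.le
      have h4 : (η/ρ + 1) * ρ = η + ρ := by field_simp
      linarith
    have h5 : (X + 1) * ρ ≤ ε' := by
      rw [mul_comm]
      exact (le_div_iff₀ (by positivity : (0:ℝ) < X + 1)).mp hρε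
    have h6 : (M : ℝ) * ((n : ℝ) * ρ^2) = (n : ℝ) * ((M:ℝ) * ρ) * ρ := by ring
    have h7 : (n : ℝ) * ((M:ℝ) * ρ) * ρ ≤ X * ρ := by
      have : (n:ℝ) * ((M:ℝ)*ρ) ≤ X := by
        rw [hX]; exact mul_le_mul_of_nonneg_left hMρ (Nat.cast_nonneg n)
      exact mul_le_mul_of_nonneg_right this hρ0.le
    have h8 : X * ρ < (X + 1) * ρ := by nlinarith
    linarith
  have : H E < H E := by
    calc H E ≤ ENNReal.ofReal ((M : ℝ) * ((n : ℝ) * ρ^2)) := heq ▸ hsum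
      _ < ENNReal.ofReal ε' := (ENNReal.ofReal_lt_ofReal_iff hε'pos).mpr hreal
      _ = H E := ENNReal.ofReal_toReal hEne
  exact lt_irrefl _ this

lemma final_step (H : Measure (ℝ × ℝ)) [IsFiniteMeasure H] (g m : ℝ → ℝ) (c w₁ Jr : ℝ)
    (hJr0 : 0 < Jr) (τ : ℝ × ℝ → ℝ) (Sg : Set (ℝ × ℝ))
    (hSgbd : ∀ q ∈ Sg, ∀ w : ℝ, |w - τ q| ≤ 1/Jr →
      |q.1 * g w + q.2 * m w + c| ≤ Jr * |w - τ q|)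
    (hkey : ∀ n : ℕ, ∃ ρ : ℝ, 0 < ρ ∧ ρ ≤ 1/Jr ∧
      (n : ℝ≥0∞) * ENNReal.ofReal (ρ^2) < H {q ∈ Sg | |τ q - w₁| ≤ ρ}) :
    ∫⁻ q, (ENNReal.ofReal ((q.1 * g w₁ + q.2 * m w₁ + c) ^ 2))⁻¹ ∂H = ⊤ := by
  set f : ℝ × ℝ → ℝ≥0∞ := fun q => (ENNReal.ofReal ((q.1 * g w₁ + q.2 * m w₁ + c) ^ 2))⁻¹
    with hf
  have hfm : AEMeasurable f H := by
    have : Measurable f :=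
      ((((measurable_fst.mul_const (g w₁)).add (measurable_snd.mul_const (m w₁))).add_const
        c).pow_const 2).ennreal_ofReal.inv
    exact this.aemeasurable
  have ha0 : ENNReal.ofReal (Jr^2) ≠ 0 := by
    simp only [ne_eq, ENNReal.ofReal_eq_zero, not_le]
    positivity
  have hat : ENNReal.ofReal (Jr^2) ≠ ⊤ := ENNReal.ofReal_ne_top
  have hstep : ∀ n : ℕ, (n : ℝ≥0∞) * (ENNReal.ofReal (Jr^2))⁻¹ ≤ ∫⁻ q, f q ∂H := by
    intro n
    obtain ⟨ρ, hρ0, hρJ, hρH⟩ := hkey n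
    set a : ℝ≥0∞ := ENNReal.ofReal (Jr^2) with haa
    set b : ℝ≥0∞ := ENNReal.ofReal (ρ^2) with hbb
    have hb0 : b ≠ 0 := by
      simp only [hbb, ne_eq, ENNReal.ofReal_eq_zero, not_le]; positivity
    have hbt : b ≠ ⊤ := ENNReal.ofReal_ne_top
    set ε : ℝ≥0∞ := (ENNReal.ofReal (Jr^2 * ρ^2))⁻¹ with hε
    have hsub : {q ∈ Sg | |τ q - w₁| ≤ ρ} ⊆ {q | ε ≤ f q} := by
      intro q hq
      obtain ⟨hqS, hqd⟩ := hq
      have h1 : |w₁ - τ q| ≤ 1/Jr := by rw [abs_sub_comm]; exact le_trans hqd hρJ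
      have h2 := hSgbd q hqS w₁ h1
      have h3 : |q.1 * g w₁ + q.2 * m w₁ + c| ≤ Jr * ρ := by
        refine le_trans h2 (mul_le_mul_of_nonneg_left ?_ hJr0.le)
        rw [abs_sub_comm]; exact hqd
      have h4 : (q.1 * g w₁ + q.2 * m w₁ + c)^2 ≤ Jr^2 * ρ^2 := by
        nlinarith [_root_.sq_abs (q.1 * g w₁ + q.2 * m w₁ + c),
          abs_nonneg (q.1 * g w₁ + q.2 * m w₁ + c)]
      show ε ≤ f q
      exact ENNReal.inv_le_inv' (ENNReal.ofReal_le_ofReal h4)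
    have hεeq : ε = a⁻¹ * b⁻¹ := by
      rw [hε, ENNReal.ofReal_mul (by positivity), ENNReal.mul_inv (Or.inl ha0) (Or.inl hat)]
    calc (n : ℝ≥0∞) * a⁻¹ = ε * ((n : ℝ≥0∞) * b) := by
          rw [hεeq]
          rw [show a⁻¹ * b⁻¹ * ((n : ℝ≥0∞) * b) = (n : ℝ≥0∞) * a⁻¹ * (b⁻¹ * b) by ring,
            ENNReal.inv_mul_cancel hb0 hbt, mul_one]
      _ ≤ ε * H {q ∈ Sg | |τ q - w₁| ≤ ρ} := mul_le_mul_right hρH.le ε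
      _ ≤ ε * H {q | ε ≤ f q} := mul_le_mul_right (measure_mono hsub) ε
      _ ≤ ∫⁻ q, f q ∂H := mul_meas_ge_le_lintegral₀ hfm ε
  by_contra hne
  set L : ℝ≥0∞ := ∫⁻ q, f q ∂H with hL
  have hcinv0 : (ENNReal.ofReal (Jr^2))⁻¹ ≠ 0 := ENNReal.inv_ne_zero.mpr hat
  have hcinvt : (ENNReal.ofReal (Jr^2))⁻¹ ≠ ⊤ := ENNReal.inv_ne_top.mpr ha0
  set c₀ : ℝ := ((ENNReal.ofReal (Jr^2))⁻¹).toReal with hc₀def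
  have hc₀ : 0 < c₀ := ENNReal.toReal_pos hcinv0 hcinvt
  obtain ⟨n, hn⟩ := exists_nat_gt (L.toReal / c₀)
  have h5 : (n : ℝ) * c₀ ≤ L.toReal := by
    have h6 := ENNReal.toReal_mono hne (hstep n)
    rwa [ENNReal.toReal_mul, ENNReal.toReal_natCast] at h6
  have h7 : L.toReal < (n : ℝ) * c₀ := by
    rw [div_lt_iff₀ hc₀] at hn
    linarith
  linarith

lemma msupport_compl_null (H : Measure (ℝ × ℝ)) : H (msupport H)ᶜ = 0 := by
  apply measure_null_of_locally_null
  intro x hx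
  simp only [msupport, Set.mem_compl_iff, Set.mem_setOf_eq, not_forall] at hx
  obtain ⟨ε, hε, hball⟩ := hx
  refine ⟨Metric.ball x ε, mem_nhdsWithin_of_mem_nhds (Metric.ball_mem_nhds x hε), ?_⟩
  exact le_antisymm (not_lt.mp hball) zero_le

end auxiliary

theorem stmt10 (H : Measure (ℝ × ℝ)) [IsFiniteMeasure H] (hH0 : H ≠ 0)
    (φ : ℝ) (hφ : 0 < φ)
    (hquad : msupport H ⊆ {q : ℝ × ℝ | 0 ≤ q.1 ∧ 0 ≤ q.2})
    (hdist : ∀ q ∈ msupport H, φ ≤ ‖q‖)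
    (c k η w0 : ℝ) (hc : 0 < c) (hk : 0 < k) (hη : 0 < η)
    (g m : ℝ → ℝ)
    (hgdiff : ∀ w ∈ Set.Ioo (w0 - η) (w0 + η), DifferentiableAt ℝ g w ∧ k ≤ deriv g w)
    (hmdiff : ∀ w ∈ Set.Ioo (w0 - η) (w0 + η), DifferentiableAt ℝ m w ∧ k ≤ deriv m w)
    (q0 : ℝ × ℝ) (hq0 : q0 ∈ msupport H)
    (hzero : q0.1 * g w0 + q0.2 * m w0 + c = 0) :
    ∃ w ∈ Set.Ioo (w0 - η) (w0 + η),
      ∫⁻ q, (ENNReal.ofReal ((q.1 * g w + q.2 * m w + c) ^ 2))⁻¹ ∂H = ⊤ := by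
  classical
  set V : ℝ := |g w0| + |m w0| with hV
  have hV0 : 0 ≤ V := by positivity
  have hV1 : (0:ℝ) < V + 1 := by positivity
  set r : ℝ := k * φ * η / (4 * (V + 1)) with hr
  have hr0 : 0 < r := by positivity
  have hrV : r * (V + 1) = k * φ * η / 4 := by
    rw [hr]; field_simp
  set I : Set ℝ := Set.Icc (w0 - η/2) (w0 + η/2) with hI
  have hIU : I ⊆ Set.Ioo (w0 - η) (w0 + η) := by
    intro x hx
    exact ⟨by linarith [hx.1], by linarith [hx.2]⟩
  set D : Set (ℝ × ℝ) := msupport H ∩ Metric.closedBall q0 r with hD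
  -- basic facts about points of D
  have hDfacts : ∀ q ∈ D, 0 ≤ q.1 ∧ 0 ≤ q.2 ∧ φ ≤ q.1 + q.2 ∧
      |q.1 * g w0 + q.2 * m w0 + c| ≤ k * φ * η / 4 := by
    intro q hq
    obtain ⟨hqm, hqb⟩ := hq
    obtain ⟨h1, h2⟩ := hquad hqm
    have hsum : φ ≤ q.1 + q.2 := by
      refine le_trans (hdist q hqm) ?_
      rw [Prod.norm_def]
      refine max_le ?_ ?_
      · rw [Real.norm_eq_abs, _root_.abs_of_nonneg h1]; linarith
      · rw [Real.norm_eq_abs, _root_.abs_of_nonneg h2]; linarith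
    have hd1 : |q.1 - q0.1| ≤ r := by
      rw [Metric.mem_closedBall, dist_eq_norm] at hqb
      calc |q.1 - q0.1| = ‖(q - q0).1‖ := by simp [Prod.fst_sub, Real.norm_eq_abs]
        _ ≤ ‖q - q0‖ := norm_fst_le _
        _ ≤ r := hqb
    have hd2 : |q.2 - q0.2| ≤ r := by
      rw [Metric.mem_closedBall, dist_eq_norm] at hqb
      calc |q.2 - q0.2| = ‖(q - q0).2‖ := by simp [Prod.snd_sub, Real.norm_eq_abs]
        _ ≤ ‖q - q0‖ := norm_snd_le _
        _ ≤ r := hqb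
    refine ⟨h1, h2, hsum, ?_⟩
    have heq : q.1 * g w0 + q.2 * m w0 + c =
        (q.1 - q0.1) * g w0 + (q.2 - q0.2) * m w0 := by
      linear_combination hzero
    rw [heq]
    calc |(q.1 - q0.1) * g w0 + (q.2 - q0.2) * m w0|
        ≤ |(q.1 - q0.1) * g w0| + |(q.2 - q0.2) * m w0| := abs_add_le _ _
      _ = |q.1 - q0.1| * |g w0| + |q.2 - q0.2| * |m w0| := by rw [abs_mul, abs_mul]
      _ ≤ r * |g w0| + r * |m w0| := by
          have := abs_nonneg (g w0); have := abs_nonneg (m w0)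
          gcongr
      _ = r * V := by rw [hV]; ring
      _ ≤ k * φ * η / 4 := by nlinarith
  -- existence of a zero τ q
  have htau_ex : ∀ q ∈ D, ∃ w, w ∈ I ∧ q.1 * g w + q.2 * m w + c = 0 := by
    intro q hq
    obtain ⟨h1, h2, h3, h4⟩ := hDfacts q hq
    obtain ⟨w, hw1, hw2⟩ := tau_exists hk hφ hη hgdiff hmdiff h1 h2 h3 h4
    exact ⟨w, hw1, hw2⟩
  set τ : (ℝ × ℝ) → ℝ := fun q =>
    if h : ∃ w, w ∈ I ∧ q.1 * g w + q.2 * m w + c = 0 then h.choose else w0 with hτ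
  have hτspec : ∀ q ∈ D, τ q ∈ I ∧ q.1 * g (τ q) + q.2 * m (τ q) + c = 0 := by
    intro q hq
    have h := htau_ex q hq
    simp only [hτ, dif_pos h]
    exact h.choose_spec
  -- the sets S j
  set S : ℕ → Set (ℝ × ℝ) := fun j => {q ∈ D | ∀ w : ℝ, |w - τ q| ≤ 1/((j:ℝ)+1) →
      |q.1 * g w + q.2 * m w + c| ≤ ((j:ℝ)+1) * |w - τ q|} with hS
  have hDcup : D ⊆ ⋃ j, S j := by
    intro q hq
    obtain ⟨hτI', hτ0⟩ := hτspec q hq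
    obtain ⟨j, hj⟩ := Sj_exists hη hgdiff hmdiff q.1 q.2 c (τ q) hτI' hτ0
    exact Set.mem_iUnion.mpr ⟨j, hq, hj⟩
  -- positive measure
  have hcompl : H (msupport H)ᶜ = 0 := msupport_compl_null H
  set D' : Set (ℝ × ℝ) := msupport H ∩ Metric.ball q0 r with hD'
  have hD'D : D' ⊆ D := Set.inter_subset_inter_right _ Metric.ball_subset_closedBall
  have hD'pos : 0 < H D' := by
    have h0 : 0 < H (Metric.ball q0 r) := hq0 r hr0
    have h1 : H (Metric.ball q0 r) ≤
        H (Metric.ball q0 r ∩ msupport H) + H (Metric.ball q0 r \ msupport H) :=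
      measure_le_inter_add_diff H _ _
    have h2 : H (Metric.ball q0 r \ msupport H) = 0 :=
      measure_mono_null (fun x hx => hx.2) hcompl
    rw [h2, add_zero] at h1
    rw [hD', Set.inter_comm]
    exact lt_of_lt_of_le h0 h1
  obtain ⟨j, hSjpos⟩ : ∃ j, 0 < H (S j ∩ D') := by
    by_contra hcon
    push_neg at hcon
    have h1 : D' ⊆ ⋃ j, (S j ∩ D') := by
      intro q hq
      obtain ⟨j, hj⟩ := Set.mem_iUnion.mp (hDcup (hD'D hq))
      exact Set.mem_iUnion.mpr ⟨j, hj, hq⟩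
    have h2 : H D' ≤ ∑' j, H (S j ∩ D') := le_trans (measure_mono h1) (measure_iUnion_le _)
    have h3 : ∑' j : ℕ, H (S j ∩ D') = 0 := by
      simp only [ENNReal.tsum_eq_zero]
      exact fun j => le_antisymm (hcon j) zero_le
    rw [h3] at h2
    exact absurd (le_antisymm h2 zero_le) hD'pos.ne'
  have hJr0 : (0:ℝ) < (j:ℝ) + 1 := by positivity
  have hτI : ∀ q ∈ S j ∩ D', τ q ∈ Set.Icc (w0 - η/2) (w0 + η/2) :=
    fun q hq => (hτspec q hq.1.1).1
  obtain ⟨w₁, hw₁I, hkey⟩ :=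
    density_point H τ (S j ∩ D') hSjpos hη hJr0 hτI
  have hSgbd : ∀ q ∈ S j ∩ D', ∀ w : ℝ, |w - τ q| ≤ 1/((j:ℝ)+1) →
      |q.1 * g w + q.2 * m w + c| ≤ ((j:ℝ)+1) * |w - τ q| :=
    fun q hq => hq.1.2
  refine ⟨w₁, hIU hw₁I, ?_⟩
  exact final_step H g m c w₁ ((j:ℝ)+1) hJr0 τ (S j ∩ D') hSgbd hkey

end
end

section
/- (Real m if and only if real g.) Let c > 0, let x ∈ ℝ with x ≠ 0, and suppose (x, m, g) satisfies system (S) with Im m ≥ 0, Im g ≥ 0, V₀ > 0, A₂ < ∞, and 0 < B₂ < ∞. Then Im m = 0 if and only if Im g = 0. -/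
open MeasureTheory Complex Filter Topology

noncomputable section

theorem stmt11 (H : Measure (ℝ × ℝ)) [IsProbabilityMeasure H]
    (hHsupp : ∀ᵐ p ∂H, 0 ≤ p.1 ∧ 0 ≤ p.2)
    (c : ℝ) (hc : 0 < c)
    (x : ℝ) (hx : x ≠ 0)
    (m g : ℂ) (hS : SatS H c (x : ℂ) m g)
    (hm : 0 ≤ m.im) (hg : 0 ≤ g.im)
    (hV0 : 0 < V0 H c m g)
    (hA2 : IntA2 H m g) (hB2 : IntB H m g 2) (hB2pos : 0 < B H m g 2) :
    m.im = 0 ↔ g.im = 0 := by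
  obtain ⟨hgne, hae, hint1, hint2, heq1, heq2⟩ := hS
  unfold IntA2 at hA2
  unfold IntB at hB2
  have hpt : ∀ p : ℝ × ℝ, ((p.2 : ℂ) / den m g p).im
      = -(g.im * (p.1 * p.2 / ‖den m g p‖ ^ 2)
          + m.im * (p.2 ^ 2 / ‖den m g p‖ ^ 2)) := by
    intro p
    rw [Complex.div_im, ← Complex.sq_norm]
    simp [den]
    ring
  have hIim : (∫ p, (p.2 : ℂ) / den m g p ∂H).im
      = -(g.im * A2 H m g + m.im * B H m g 2) := by
    have h1 : (∫ p, (p.2 : ℂ) / den m g p ∂H).im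
        = ∫ p, ((p.2 : ℂ) / den m g p).im ∂H := (integral_im hint2).symm
    rw [h1]
    calc ∫ p, ((p.2:ℂ)/den m g p).im ∂H
        = ∫ p, -(g.im * (p.1 * p.2 / ‖den m g p‖ ^ 2)
            + m.im * (p.2 ^ 2 / ‖den m g p‖ ^ 2)) ∂H := by
          simp only [hpt]
      _ = -(g.im * A2 H m g + m.im * B H m g 2) := by
          rw [integral_neg, integral_add (hA2.const_mul _) (hB2.const_mul _),
            integral_const_mul, integral_const_mul]
          rfl
  have him := congrArg Complex.im heq2
  simp only [Complex.add_im, Complex.sub_im, Complex.ofReal_im, one_div,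
    Complex.inv_im, Complex.mul_im, Complex.ofReal_re, hIim, Complex.zero_im] at him
  have hgsq : Complex.normSq g = ‖g‖ ^ 2 := (Complex.sq_norm g).symm
  have hgpos : (0:ℝ) < ‖g‖ ^ 2 := pow_pos (norm_pos_iff.mpr hgne) 2
  have key : g.im * V0 H c m g = c * B H m g 2 * m.im := by
    rw [hgsq] at him
    unfold V0
    field_simp at him ⊢
    nlinarith [him]
  constructor
  · intro h
    have : g.im * V0 H c m g = 0 := by rw [key, h]; ring
    rcases mul_eq_zero.mp this with h' | h'
    · exact h'
    · exact absurd h' (ne_of_gt hV0)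
  · intro h
    have h2 : c * B H m g 2 * m.im = 0 := by rw [← key, h]; ring
    have : c * B H m g 2 ≠ 0 := ne_of_gt (mul_pos hc hB2pos)
    exact (mul_eq_zero.mp h2).resolve_left this

end
end

section
/- (Uniqueness of m for a given g in the reduced equation.) Let H be a Borel probability measure on [0,∞)×[0,∞), let c > 0, and let g ∈ ℂ with g ≠ 0. Suppose m₁, m₂ ∈ ℂ are such that for i = 1, 2: 1 + s·g + t·mᵢ ≠ 0 for H-almost every (s,t), the equation c·g²·∫ s dH(s,t)/(1 + s·g + t·mᵢ) + mᵢ − g = 0 holds, and c·∫ s·t/|1 + s·g + t·mᵢ|² dH(s,t) < 1/|g|². Then m₁ = m₂. -/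
open MeasureTheory Complex Filter Topology

noncomputable section

theorem stmt12 (H : Measure (ℝ × ℝ)) [IsProbabilityMeasure H]
    (hHsupp : ∀ᵐ p ∂H, 0 ≤ p.1 ∧ 0 ≤ p.2)
    (c : ℝ) (hc : 0 < c)
    (g : ℂ) (hg : g ≠ 0) (m1 m2 : ℂ)
    (hne1 : ∀ᵐ p ∂H, den m1 g p ≠ 0)
    (hne2 : ∀ᵐ p ∂H, den m2 g p ≠ 0)
    (hint1 : Integrable (fun p => (p.1 : ℂ) / den m1 g p) H)
    (hint2 : Integrable (fun p => (p.1 : ℂ) / den m2 g p) H)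
    (heq1 : c * g ^ 2 * (∫ p, (p.1 : ℂ) / den m1 g p ∂H) + m1 - g = 0)
    (heq2 : c * g ^ 2 * (∫ p, (p.1 : ℂ) / den m2 g p ∂H) + m2 - g = 0)
    (hA1 : IntA2 H m1 g) (hA2 : IntA2 H m2 g)
    (hlt1 : c * A2 H m1 g < (‖g‖ ^ 2)⁻¹)
    (hlt2 : c * A2 H m2 g < (‖g‖ ^ 2)⁻¹) :
    m1 = m2 := by
  by_contra hne
  have hd : m1 - m2 ≠ 0 := sub_ne_zero.mpr hne
  set f : ℝ × ℝ → ℂ := fun p => ((p.1 : ℂ) * (p.2 : ℂ)) / (den m1 g p * den m2 g p) with hf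
  have hae : (fun p => (p.1 : ℂ) / den m2 g p - (p.1 : ℂ) / den m1 g p)
      =ᵐ[H] (fun p => (m1 - m2) * f p) := by
    filter_upwards [hne1, hne2] with p h1 h2
    simp only [hf, den] at *
    field_simp
    ring
  have hdf : Integrable (fun p => (m1 - m2) * f p) H := (hint2.sub hint1).congr hae
  have hfint : Integrable f H := by
    have := hdf.const_mul (m1 - m2)⁻¹
    refine this.congr (Eventually.of_forall fun p => ?_)
    field_simp
  have hint_eq : (∫ p, (p.1 : ℂ) / den m2 g p ∂H) - (∫ p, (p.1 : ℂ) / den m1 g p ∂H)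
      = (m1 - m2) * ∫ p, f p ∂H := by
    rw [← integral_sub hint2 hint1, integral_congr_ae hae, integral_const_mul]
  have key : (c : ℂ) * g ^ 2 * ∫ p, f p ∂H = 1 := by
    have h : (m1 - m2) * ((c : ℂ) * g ^ 2 * ∫ p, f p ∂H) = (m1 - m2) * 1 := by
      have := hint_eq
      have e1 : (c : ℂ) * g ^ 2 * (∫ p, (p.1 : ℂ) / den m1 g p ∂H) = g - m1 := by
        linear_combination heq1
      have e2 : (c : ℂ) * g ^ 2 * (∫ p, (p.1 : ℂ) / den m2 g p ∂H) = g - m2 := by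
        linear_combination heq2
      linear_combination -((c : ℂ) * g ^ 2) * this + e2 - e1
    exact mul_left_cancel₀ hd h
  set G : ℝ := ‖g‖ ^ 2 with hG
  have hGpos : 0 < G := pow_pos (norm_pos_iff.mpr hg) 2
  have habs : c * G * ‖∫ p, f p ∂H‖ = 1 := by
    have := congrArg (‖·‖) key
    simpa [norm_mul, norm_pow, Complex.norm_real, Real.norm_eq_abs, abs_of_pos hc, hG, mul_assoc] using this
  have hbound : ∀ᵐ p ∂H, ‖f p‖ ≤
      (p.1 * p.2 / ‖den m1 g p‖ ^ 2 + p.1 * p.2 / ‖den m2 g p‖ ^ 2) / 2 := by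
    filter_upwards [hne1, hne2, hHsupp] with p h1 h2 hsupp
    have ha : 0 < ‖den m1 g p‖ := norm_pos_iff.mpr h1
    have hb : 0 < ‖den m2 g p‖ := norm_pos_iff.mpr h2
    have hst : 0 ≤ p.1 * p.2 := mul_nonneg hsupp.1 hsupp.2
    set a := ‖den m1 g p‖
    set b := ‖den m2 g p‖
    have : ‖f p‖ = p.1 * p.2 / (a * b) := by
      simp only [hf, norm_div, norm_mul, Complex.norm_real, Real.norm_eq_abs, _root_.abs_of_nonneg hsupp.1,
        _root_.abs_of_nonneg hsupp.2]
      rfl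
    rw [this]
    have hkey : p.1 * p.2 / a ^ 2 + p.1 * p.2 / b ^ 2 - 2 * (p.1 * p.2 / (a * b))
        = p.1 * p.2 * (a⁻¹ - b⁻¹) ^ 2 := by
      field_simp
      ring
    have hnn : 0 ≤ p.1 * p.2 * (a⁻¹ - b⁻¹) ^ 2 := mul_nonneg hst (sq_nonneg _)
    linarith
  have hA1' : Integrable (fun p : ℝ × ℝ => p.1 * p.2 / ‖den m1 g p‖ ^ 2) H := hA1
  have hA2' : Integrable (fun p : ℝ × ℝ => p.1 * p.2 / ‖den m2 g p‖ ^ 2) H := hA2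
  have hle : ‖∫ p, f p ∂H‖ ≤ (A2 H m1 g + A2 H m2 g) / 2 := by
    calc ‖∫ p, f p ∂H‖ ≤ ∫ p, ‖f p‖ ∂H := by
          simpa using norm_integral_le_integral_norm f (μ := H)
      _ ≤ ∫ p, (p.1 * p.2 / ‖den m1 g p‖ ^ 2
            + p.1 * p.2 / ‖den m2 g p‖ ^ 2) / 2 ∂H := by
          refine integral_mono_ae ?_ ((hA1'.add hA2').div_const 2) hbound
          simpa using hfint.norm
      _ = (A2 H m1 g + A2 H m2 g) / 2 := by
          rw [integral_div, integral_add hA1' hA2']; rfl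
  have hGG : G * G⁻¹ = 1 := mul_inv_cancel₀ (ne_of_gt hGpos)
  nlinarith [mul_le_mul_of_nonneg_left hle (le_of_lt (mul_pos hc hGpos)),
    mul_lt_mul_of_pos_left hlt1 hGpos, mul_lt_mul_of_pos_left hlt2 hGpos]

end
end

section
/- (Tightness and weak convergence via approximating sequences in Lévy distance.) Let {F_n} be a sequence of probability distribution functions on ℝ. Suppose that for each ε > 0 there exists a tight sequence of probability distribution functions {F_{n,ε}}_n, such that for each δ > 0 there is an ε = ε(δ) > 0 with limsup_n L(F_{n,ε(δ)}, F_n) < δ. Then the sequence {F_n} is tight. Moreover, if for each ε > 0 the sequence F_{n,ε} converges weakly to a distribution function F_ε as n → ∞, then F_n converges weakly to some distribution function F, and F_{ε(δ)} converges weakly to F as δ → 0. -/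
open MeasureTheory Filter Topology

noncomputable section

/-- A probability distribution function on `ℝ`: monotone, right-continuous, with limits
`0` at `−∞` and `1` at `+∞`. -/
def IsDF (F : ℝ → ℝ) : Prop :=
  Monotone F ∧ (∀ x, ContinuousWithinAt F (Set.Ici x) x) ∧
    Tendsto F atBot (𝓝 0) ∧ Tendsto F atTop (𝓝 1)

/-- The Lévy distance between two distribution functions. -/
def levyDist (F G : ℝ → ℝ) : ℝ :=
  sInf {d : ℝ | 0 < d ∧ ∀ x, G (x - d) - d ≤ F x ∧ F x ≤ G (x + d) + d}

/-- Tightness of a sequence of distribution functions. -/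
def TightSeq (F : ℕ → ℝ → ℝ) : Prop :=
  ∀ θ > 0, ∃ x > 0, ∀ n, 1 - θ < F n x - F n (-x)

/-- Weak convergence of a sequence of distribution functions to a function `G`:
convergence at every continuity point of `G`. -/
def WeakConvSeq (F : ℕ → ℝ → ℝ) (G : ℝ → ℝ) : Prop :=
  ∀ x, ContinuousAt G x → Tendsto (fun n => F n x) atTop (𝓝 (G x))

namespace Stmt15Aux

lemma df_nonneg {F : ℝ → ℝ} (h : IsDF F) (x : ℝ) : 0 ≤ F x :=
  le_of_tendsto h.2.2.1 (eventually_atBot.2 ⟨x, fun _ hy => h.1 hy⟩)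

lemma df_le_one {F : ℝ → ℝ} (h : IsDF F) (x : ℝ) : F x ≤ 1 :=
  ge_of_tendsto h.2.2.2 (eventually_atTop.2 ⟨x, fun _ hy => h.1 hy⟩)

lemma two_mem {F G : ℝ → ℝ} (hF : IsDF F) (hG : IsDF G) :
    (2:ℝ) ∈ {d : ℝ | 0 < d ∧ ∀ x, G (x - d) - d ≤ F x ∧ F x ≤ G (x + d) + d} := by
  refine ⟨two_pos, fun x => ⟨?_, ?_⟩⟩
  · have := df_le_one hG (x - 2); have := df_nonneg hF x; linarith
  · have := df_nonneg hG (x + 2); have := df_le_one hF x; linarith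

lemma levy_nonneg {F G : ℝ → ℝ} (hF : IsDF F) (hG : IsDF G) : 0 ≤ levyDist F G :=
  le_csInf ⟨2, two_mem hF hG⟩ fun _ hy => hy.1.le

lemma levy_le_two {F G : ℝ → ℝ} (hF : IsDF F) (hG : IsDF G) : levyDist F G ≤ 2 :=
  csInf_le ⟨0, fun _ hy => hy.1.le⟩ (two_mem hF hG)

lemma levy_mem {F G : ℝ → ℝ} (hF : IsDF F) (hG : IsDF G) {d : ℝ}
    (hd : levyDist F G < d) :
    ∀ x, G (x - d) - d ≤ F x ∧ F x ≤ G (x + d) + d := by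
  obtain ⟨d', ⟨hd'pos, hd'⟩, hlt⟩ :=
    exists_lt_of_csInf_lt ⟨2, two_mem hF hG⟩ hd
  intro x
  refine ⟨?_, ?_⟩
  · have h1 := (hd' x).1
    have : G (x - d) ≤ G (x - d') := hG.1 (by linarith)
    linarith
  · have h2 := (hd' x).2
    have : G (x + d') ≤ G (x + d) := hG.1 (by linarith)
    linarith

/-- On any interval a monotone real function has a continuity point. -/
lemma exists_cont {f : ℝ → ℝ} (hf : Monotone f) {a b : ℝ} (hab : a < b) :
    ∃ c, a < c ∧ c < b ∧ ContinuousAt f c := by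
  have hd : Dense {x : ℝ | ¬ ContinuousAt f x}ᶜ :=
    (hf.countable_not_continuousAt).dense_compl ℝ
  obtain ⟨c, hc, hca, hcb⟩ := hd.exists_between hab
  exact ⟨c, hca, hcb, not_not.1 hc⟩

end Stmt15Aux

open Stmt15Aux

theorem stmt15 (F : ℕ → ℝ → ℝ) (hF : ∀ n, IsDF (F n))
    (Fa : ℝ → ℕ → ℝ → ℝ)
    (hFa : ∀ ε > (0 : ℝ), (∀ n, IsDF (Fa ε n)) ∧ TightSeq (Fa ε))
    (ε : ℝ → ℝ)
    (hε : ∀ δ > (0 : ℝ), 0 < ε δ ∧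
      Filter.limsup (fun n => levyDist (Fa (ε δ) n) (F n)) atTop < δ) :
    TightSeq F ∧
      ∀ Flim : ℝ → ℝ → ℝ,
        (∀ e > (0 : ℝ), IsDF (Flim e) ∧ WeakConvSeq (Fa e) (Flim e)) →
        ∃ G : ℝ → ℝ, IsDF G ∧ WeakConvSeq F G ∧
          ∀ x, ContinuousAt G x →
            Tendsto (fun δ => Flim (ε δ) x) (𝓝[>] (0 : ℝ)) (𝓝 (G x)) := by
  classical
  have hF0 : ∀ n x, 0 ≤ F n x := fun n x => df_nonneg (hF n) x
  have hF1 : ∀ n x, F n x ≤ 1 := fun n x => df_le_one (hF n) x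
  -- The key sandwich obtained from the Lévy-distance hypothesis.
  have key : ∀ δ > (0:ℝ), ∃ d, 0 < d ∧ d < δ ∧
      ∀ᶠ n in atTop, ∀ y,
        Fa (ε δ) n (y - d) - d ≤ F n y ∧ F n y ≤ Fa (ε δ) n (y + d) + d := by
    intro δ hδ
    obtain ⟨hεpos, hlim⟩ := hε δ hδ
    have hFaDF := (hFa (ε δ) hεpos).1
    have hnn : (0:ℝ) ≤ limsup (fun n => levyDist (Fa (ε δ) n) (F n)) atTop := by
      refine le_limsup_of_frequently_le (Frequently.of_forall fun n => ?_) ?_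
      · exact levy_nonneg (hFaDF n) (hF n)
      · exact isBoundedUnder_of ⟨2, fun n => levy_le_two (hFaDF n) (hF n)⟩
    obtain ⟨d, hd1, hd2⟩ := exists_between hlim
    refine ⟨d, lt_of_le_of_lt hnn hd1, hd2, ?_⟩
    have hev : ∀ᶠ n in atTop, levyDist (Fa (ε δ) n) (F n) < d :=
      eventually_lt_of_limsup_lt hd1
        (isBoundedUnder_of ⟨2, fun n => levy_le_two (hFaDF n) (hF n)⟩)
    filter_upwards [hev] with n hn y
    have hm := levy_mem (hFaDF n) (hF n) hn
    constructor
    · have h1 := (hm (y - d)).2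
      have h2 : y - d + d = y := by ring
      rw [h2] at h1
      linarith
    · have h1 := (hm (y + d)).1
      have h2 : y + d - d = y := by ring
      rw [h2] at h1
      linarith
  -- Tightness of F.
  have tight : TightSeq F := by
    intro θ hθ
    have hδ : (0:ℝ) < θ/4 := by linarith
    obtain ⟨d, hd0, hdlt, hev⟩ := key (θ/4) hδ
    obtain ⟨N, hN⟩ := eventually_atTop.1 hev
    have hεp := (hε (θ/4) hδ).1
    obtain ⟨x0, hx0pos, hx0⟩ := (hFa (ε (θ/4)) hεp).2 (θ/2) (by linarith)
    have hFaM : ∀ n, Monotone (Fa (ε (θ/4)) n) := fun n => ((hFa _ hεp).1 n).1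
    have hsmall : ∀ᶠ x in atTop, ∀ n ∈ Finset.range N, 1 - θ < F n x - F n (-x) := by
      rw [Filter.eventually_all_finset]
      intro n _
      have h1 : Tendsto (fun x => F n x - F n (-x)) atTop (𝓝 (1 - 0)) :=
        (hF n).2.2.2.sub ((hF n).2.2.1.comp tendsto_neg_atTop_atBot)
      rw [sub_zero] at h1
      exact h1.eventually (eventually_gt_nhds (by linarith))
    obtain ⟨x, hx⟩ := (hsmall.and ((eventually_ge_atTop (x0 + d)).and
      (eventually_gt_atTop 0))).exists
    refine ⟨x, hx.2.2, fun n => ?_⟩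
    rcases lt_or_ge n N with h | h
    · exact hx.1 n (Finset.mem_range.2 h)
    · have hs := hN n h
      have h1 : Fa (ε (θ/4)) n x0 - d ≤ F n x := by
        have h3 := (hs x).1
        have h2 : Fa (ε (θ/4)) n x0 ≤ Fa (ε (θ/4)) n (x - d) :=
          hFaM n (by linarith [hx.2.1])
        linarith
      have h2 : F n (-x) ≤ Fa (ε (θ/4)) n (-x0) + d := by
        have h3 := (hs (-x)).2
        have h4 : Fa (ε (θ/4)) n (-x + d) ≤ Fa (ε (θ/4)) n (-x0) :=
          hFaM n (by linarith [hx.2.1])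
        linarith
      have := hx0 n
      linarith
  refine ⟨tight, ?_⟩
  intro Flim hFlim
  -- upper and lower limit functions
  set u : ℝ → ℝ := fun x => limsup (fun n => F n x) atTop with hu
  set l : ℝ → ℝ := fun x => liminf (fun n => F n x) atTop with hl
  have bddU : ∀ x, IsBoundedUnder (· ≤ ·) atTop (fun n => F n x) :=
    fun x => isBoundedUnder_of ⟨1, fun n => hF1 n x⟩
  have bddL : ∀ x, IsBoundedUnder (· ≥ ·) atTop (fun n => F n x) :=
    fun x => isBoundedUnder_of ⟨0, fun n => hF0 n x⟩
  have u_mono : Monotone u := fun x y hxy =>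
    limsup_le_limsup (Eventually.of_forall fun n => (hF n).1 hxy)
      ((bddL x).isCoboundedUnder_le) (bddU y)
  have l_mono : Monotone l := fun x y hxy =>
    liminf_le_liminf (Eventually.of_forall fun n => (hF n).1 hxy)
      (bddL x) ((bddU y).isCoboundedUnder_ge)
  have u_nonneg : ∀ x, 0 ≤ u x := fun x =>
    le_limsup_of_frequently_le (Frequently.of_forall fun n => hF0 n x) (bddU x)
  have u_le_one : ∀ x, u x ≤ 1 := fun x =>
    limsup_le_of_le ((bddL x).isCoboundedUnder_le) (Eventually.of_forall fun n => hF1 n x)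
  have l_le_u : ∀ x, l x ≤ u x := fun x => liminf_le_limsup (bddU x) (bddL x)
  have hFlimDF : ∀ δ, 0 < δ → IsDF (Flim (ε δ)) := fun δ hδ => (hFlim (ε δ) (hε δ hδ).1).1
  have hFlimW : ∀ δ, 0 < δ → WeakConvSeq (Fa (ε δ)) (Flim (ε δ)) :=
    fun δ hδ => (hFlim (ε δ) (hε δ hδ).1).2
  have hFaM : ∀ δ, 0 < δ → ∀ n, Monotone (Fa (ε δ) n) :=
    fun δ hδ n => ((hFa (ε δ) (hε δ hδ).1).1 n).1
  -- the two key inequalities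
  have keyU : ∀ δ, 0 < δ → ∀ x, u x ≤ Flim (ε δ) (x + 2*δ) + δ := by
    intro δ hδ x
    obtain ⟨d, hd0, hdδ, hev⟩ := key δ hδ
    obtain ⟨c, hc1, hc2, hc3⟩ := exists_cont (hFlimDF δ hδ).1
      (show x + d < x + 2*δ by linarith)
    have hconv : Tendsto (fun n => Fa (ε δ) n c + d) atTop (𝓝 (Flim (ε δ) c + d)) :=
      (hFlimW δ hδ c hc3).add_const d
    have hle : ∀ᶠ n in atTop, F n x ≤ Fa (ε δ) n c + d := by
      filter_upwards [hev] with n hn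
      have h1 := (hn x).2
      have h2 : Fa (ε δ) n (x + d) ≤ Fa (ε δ) n c := hFaM δ hδ n hc1.le
      linarith
    have h3 : u x ≤ Flim (ε δ) c + d := by
      have h5 := limsup_le_limsup hle ((bddL x).isCoboundedUnder_le)
        hconv.isBoundedUnder_le
      rwa [hconv.limsup_eq] at h5
    have h4 : Flim (ε δ) c ≤ Flim (ε δ) (x + 2*δ) := (hFlimDF δ hδ).1 hc2.le
    linarith
  have keyL : ∀ δ, 0 < δ → ∀ x, Flim (ε δ) (x - 2*δ) - δ ≤ l x := by
    intro δ hδ x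
    obtain ⟨d, hd0, hdδ, hev⟩ := key δ hδ
    obtain ⟨c, hc1, hc2, hc3⟩ := exists_cont (hFlimDF δ hδ).1
      (show x - 2*δ < x - d by linarith)
    have hconv : Tendsto (fun n => Fa (ε δ) n c - d) atTop (𝓝 (Flim (ε δ) c - d)) :=
      (hFlimW δ hδ c hc3).sub_const d
    have hle : ∀ᶠ n in atTop, Fa (ε δ) n c - d ≤ F n x := by
      filter_upwards [hev] with n hn
      have h1 := (hn x).1
      have h2 : Fa (ε δ) n c ≤ Fa (ε δ) n (x - d) := hFaM δ hδ n hc2.le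
      linarith
    have h3 : Flim (ε δ) c - d ≤ l x := by
      have h5 := liminf_le_liminf hle hconv.isBoundedUnder_ge
        ((bddU x).isCoboundedUnder_ge)
      rwa [hconv.liminf_eq] at h5
    have h4 : Flim (ε δ) (x - 2*δ) ≤ Flim (ε δ) c := (hFlimDF δ hδ).1 hc1.le
    linarith
  -- u x ≤ l y whenever x < y
  have ul : ∀ x y : ℝ, x < y → u x ≤ l y := by
    intro x y hxy
    refine le_of_forall_pos_le_add fun t ht => ?_
    set δ := min ((y - x)/4) (t/2) with hδdef
    have hδ0 : 0 < δ := lt_min (by linarith) (by linarith)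
    have h1 := keyU δ hδ0 x
    have h2 := keyL δ hδ0 (x + 4*δ)
    have h3 : x + 4*δ - 2*δ = x + 2*δ := by ring
    rw [h3] at h2
    have h4 : l (x + 4*δ) ≤ l y := l_mono (by
      have : δ ≤ (y - x)/4 := min_le_left _ _
      linarith)
    have h5 : 2*δ ≤ t := by
      have : δ ≤ t/2 := min_le_right _ _
      linarith
    linarith
  -- the candidate limit distribution function
  set G : ℝ → ℝ := fun x => sInf (u '' Set.Ioi x) with hGdef
  have Gne : ∀ x : ℝ, (u '' Set.Ioi x).Nonempty :=
    fun x => ⟨u (x+1), ⟨x+1, by simp, rfl⟩⟩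
  have Gbdd : ∀ x : ℝ, BddBelow (u '' Set.Ioi x) := by
    intro x
    refine ⟨0, ?_⟩
    rintro v ⟨y, _, rfl⟩
    exact u_nonneg y
  have G_le_u : ∀ x y : ℝ, x < y → G x ≤ u y :=
    fun x y h => csInf_le (Gbdd x) ⟨y, h, rfl⟩
  have u_le_G : ∀ x, u x ≤ G x := by
    intro x
    refine le_csInf (Gne x) ?_
    rintro v ⟨y, hy, rfl⟩
    exact u_mono (le_of_lt hy)
  have G_mono : Monotone G := by
    intro x y hxy
    refine le_csInf (Gne y) ?_
    rintro v ⟨z, hz, rfl⟩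
    exact csInf_le (Gbdd x) ⟨z, lt_of_le_of_lt hxy hz, rfl⟩
  have G_le_l : ∀ x y : ℝ, x < y → G x ≤ l y := by
    intro x y h
    obtain ⟨z, hz1, hz2⟩ := exists_between h
    exact (G_le_u x z hz1).trans (ul z y hz2)
  have G_nonneg : ∀ x, 0 ≤ G x := by
    intro x
    refine le_csInf (Gne x) ?_
    rintro v ⟨y, _, rfl⟩
    exact u_nonneg y
  have G_le_one : ∀ x, G x ≤ 1 :=
    fun x => (G_le_u x (x+1) (by linarith)).trans (u_le_one _)
  -- right continuity of G
  have G_rc : ∀ x, ContinuousWithinAt G (Set.Ici x) x := by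
    intro x
    rw [ContinuousWithinAt]
    refine tendsto_order.2 ⟨fun a ha => ?_, fun c hc => ?_⟩
    · filter_upwards [eventually_mem_nhdsWithin] with y hy
      exact lt_of_lt_of_le ha (G_mono hy)
    · have hc' : sInf (u '' Set.Ioi x) < c := hc
      obtain ⟨v, ⟨y, hy, rfl⟩, hv⟩ := exists_lt_of_csInf_lt (Gne x) hc'
      obtain ⟨z, hz1, hz2⟩ := exists_between (Set.mem_Ioi.1 hy)
      have hmem : Set.Ico x z ∈ 𝓝[≥] x := Ico_mem_nhdsGE_of_mem ⟨le_refl x, hz1⟩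
      filter_upwards [hmem] with w hw
      exact lt_of_le_of_lt (G_le_u w y (lt_trans hw.2 hz2)) hv
  -- limits of G at ±∞
  have G_atBot : Tendsto G atBot (𝓝 0) := by
    refine tendsto_order.2 ⟨fun a ha => ?_, fun c hc => ?_⟩
    · exact Eventually.of_forall fun y => lt_of_lt_of_le ha (G_nonneg y)
    · obtain ⟨x0, hx0pos, hx0⟩ := tight (c/2) (by linarith)
      have hub : u (-x0) ≤ c/2 := by
        refine limsup_le_of_le ((bddL _).isCoboundedUnder_le)
          (Eventually.of_forall fun n => ?_)
        have := hx0 n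
        have := hF1 n x0
        linarith
      filter_upwards [eventually_lt_atBot (-x0 - 1)] with y hy
      have : G y ≤ u (-x0) := G_le_u y (-x0) (by linarith)
      linarith
  have G_atTop : Tendsto G atTop (𝓝 1) := by
    refine tendsto_order.2 ⟨fun a ha => ?_, fun c hc => ?_⟩
    · obtain ⟨x0, hx0pos, hx0⟩ := tight ((1-a)/2) (by linarith)
      have hlb : 1 - (1-a)/2 ≤ l x0 := by
        refine le_liminf_of_le ((bddU _).isCoboundedUnder_ge)
          (Eventually.of_forall fun n => ?_)
        have := hx0 n
        have := hF0 n (-x0)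
        linarith
      filter_upwards [eventually_gt_atTop x0] with y hy
      have : l x0 ≤ G y := (l_le_u x0).trans ((u_le_G x0).trans (G_mono hy.le))
      linarith
    · exact Eventually.of_forall fun y => lt_of_le_of_lt (G_le_one y) hc
  -- weak convergence of F to G
  have weak : WeakConvSeq F G := by
    intro x hx
    have h1 : u x ≤ G x := u_le_G x
    have h2 : G x ≤ l x := by
      refine le_of_forall_lt fun a ha => ?_
      have h3 : ∀ᶠ w in 𝓝[<] x, a < G w :=
        (hx.eventually (eventually_gt_nhds ha)).filter_mono nhdsWithin_le_nhds
      obtain ⟨w, haw, hwx⟩ := (h3.and eventually_mem_nhdsWithin).exists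
      exact lt_of_lt_of_le haw (G_le_l w x hwx)
    exact tendsto_of_le_liminf_of_limsup_le h2 h1 (bddU x) (bddL x)
  refine ⟨G, ⟨G_mono, G_rc, G_atBot, G_atTop⟩, weak, ?_⟩
  -- convergence of the approximating limits
  intro x hx
  have hlow : ∀ δ : ℝ, δ ∈ Set.Ioi (0:ℝ) → G (x - 3*δ) - δ ≤ Flim (ε δ) x := by
    intro δ hδ
    have h1 := keyU δ hδ (x - 2*δ)
    have h3 : x - 2*δ + 2*δ = x := by ring
    rw [h3] at h1
    have h2 : G (x - 3*δ) ≤ u (x - 2*δ) := G_le_u _ _ (by linarith [Set.mem_Ioi.1 hδ])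
    have hδ' : (0:ℝ) < δ := hδ
    linarith
  have hhigh : ∀ δ : ℝ, δ ∈ Set.Ioi (0:ℝ) → Flim (ε δ) x ≤ G (x + 2*δ) + δ := by
    intro δ hδ
    have h1 := keyL δ hδ (x + 2*δ)
    have h3 : x + 2*δ - 2*δ = x := by ring
    rw [h3] at h1
    have h2 : l (x + 2*δ) ≤ G (x + 2*δ) := (l_le_u _).trans (u_le_G _)
    linarith
  have hid : Tendsto (fun δ : ℝ => δ) (𝓝[>] (0:ℝ)) (𝓝 0) :=
    tendsto_id.mono_right nhdsWithin_le_nhds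
  have hxm : Tendsto (fun δ : ℝ => x - 3*δ) (𝓝[>] (0:ℝ)) (𝓝 x) := by
    have hcont : Tendsto (fun δ : ℝ => x - 3*δ) (𝓝 (0:ℝ)) (𝓝 (x - 3*0)) :=
      Continuous.tendsto (continuous_const.sub (continuous_const.mul continuous_id)) 0
    rw [show x - 3*(0:ℝ) = x by ring] at hcont
    exact hcont.mono_left nhdsWithin_le_nhds
  have hxp : Tendsto (fun δ : ℝ => x + 2*δ) (𝓝[>] (0:ℝ)) (𝓝 x) := by
    have hcont : Tendsto (fun δ : ℝ => x + 2*δ) (𝓝 (0:ℝ)) (𝓝 (x + 2*0)) :=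
      Continuous.tendsto (continuous_const.add (continuous_const.mul continuous_id)) 0
    rw [show x + 2*(0:ℝ) = x by ring] at hcont
    exact hcont.mono_left nhdsWithin_le_nhds
  have hlowlim : Tendsto (fun δ : ℝ => G (x - 3*δ) - δ) (𝓝[>] (0:ℝ)) (𝓝 (G x)) := by
    have := (hx.tendsto.comp hxm).sub hid
    rwa [sub_zero] at this
  have hhighlim : Tendsto (fun δ : ℝ => G (x + 2*δ) + δ) (𝓝[>] (0:ℝ)) (𝓝 (G x)) := by
    have := (hx.tendsto.comp hxp).add hid
    rwa [add_zero] at this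
  refine tendsto_of_tendsto_of_tendsto_of_le_of_le' hlowlim hhighlim ?_ ?_
  · filter_upwards [eventually_mem_nhdsWithin] with δ hδ
    exact hlow δ hδ
  · filter_upwards [eventually_mem_nhdsWithin] with δ hδ
    exact hhigh δ hδ

end
end

section
/- (Almost sure convergence of the truncated second moments.) For each n let N = N(n) with n/N → c > 0 as n → ∞, and let {x_{ij}^{(n)} : 1 ≤ i ≤ n, 1 ≤ j ≤ N} be, for each n, independent complex random variables with mean 0 and E|x_{ij}^{(n)}|² = 1. Let η_n > 0 be a sequence with η_n → 0, η_n·√n → ∞, and (1/(n·N·η_n²))·Σ_{i,j} E(|x_{ij}^{(n)}|²·1{|x_{ij}^{(n)}| ≥ η_n·√n}) → 0 as n → ∞. Then, almost surely, (n·N)⁻¹·Σ_{i≤n, j≤N} |x_{ij}^{(n)}|²·1{|x_{ij}^{(n)}| < η_n·√n} → 1 as n → ∞. -/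
open MeasureTheory Complex Filter Topology

noncomputable section

section Stmt17AuxSection
open ProbabilityTheory

namespace Stmt17Aux

variable {Ω : Type} [MeasurableSpace Ω] {P : Measure Ω} [IsProbabilityMeasure P]

lemma nonempty_omega (P : Measure Ω) [IsProbabilityMeasure P] : Nonempty Ω := by
  by_contra h
  rw [not_nonempty_iff] at h
  have h1 : (P Set.univ) = 1 := measure_univ
  rw [Set.univ_eq_empty_iff.mpr h, measure_empty] at h1
  exact zero_ne_one h1

lemma integrable_of_abs_le {f : Ω → ℝ} (hf : Measurable f) {C : ℝ} (h : ∀ ω, |f ω| ≤ C) :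
    Integrable f P :=
  (integrable_const C).mono' hf.aestronglyMeasurable
    (Filter.Eventually.of_forall fun ω => by simpa [Real.norm_eq_abs] using h ω)

variable {ι : Type*} {Z : ι → Ω → ℝ} {C : ℝ}

omit [MeasurableSpace Ω] in
lemma abs_sum_le (s : Finset ι) (hC : ∀ i ω, |Z i ω| ≤ C) (ω : Ω) :
    |∑ i ∈ s, Z i ω| ≤ s.card * C :=
  (Finset.abs_sum_le_sum_abs _ _).trans (by
    calc ∑ i ∈ s, |Z i ω| ≤ ∑ i ∈ s, C := Finset.sum_le_sum fun i _ => hC i ω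
      _ = s.card * C := by simp [mul_comm])

lemma integral_sum_sq (hme : ∀ i, Measurable (Z i))
    (hind : iIndepFun Z P)
    (hmean : ∀ i, ∫ ω, Z i ω ∂P = 0)
    (hC : ∀ i ω, |Z i ω| ≤ C) (s : Finset ι) :
    ∫ ω, (∑ i ∈ s, Z i ω)^2 ∂P = ∑ i ∈ s, ∫ ω, (Z i ω)^2 ∂P := by
  classical
  have hΩ : Nonempty Ω := nonempty_omega P
  induction s using Finset.induction_on with
  | empty => simp
  | @insert k s hk ih =>
    have hC0 : 0 ≤ C := le_trans (_root_.abs_nonneg _) (hC k (Classical.arbitrary Ω))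
    set S : Ω → ℝ := fun ω => ∑ i ∈ s, Z i ω with hS
    have hSme : Measurable S := Finset.measurable_sum s fun i _ => hme i
    have hSb : ∀ ω, |S ω| ≤ s.card * C := abs_sum_le s hC
    have hZk : Integrable (Z k) P := integrable_of_abs_le (hme k) (hC k)
    have hZk2 : Integrable (fun ω => (Z k ω)^2) P := by
      refine integrable_of_abs_le ((hme k).pow_const 2) (C := C^2) fun ω => ?_
      rw [_root_.abs_pow]
      exact pow_le_pow_left₀ (_root_.abs_nonneg _) (hC k ω) 2
    have hS2 : Integrable (fun ω => (S ω)^2) P := by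
      refine integrable_of_abs_le (hSme.pow_const 2) (C := (s.card * C)^2) fun ω => ?_
      rw [_root_.abs_pow]
      exact pow_le_pow_left₀ (_root_.abs_nonneg _) (hSb ω) 2
    have hZkS : Integrable (fun ω => Z k ω * S ω) P := by
      refine integrable_of_abs_le ((hme k).mul hSme) (C := C * (s.card * C)) fun ω => ?_
      rw [_root_.abs_mul]
      exact mul_le_mul (hC k ω) (hSb ω) (_root_.abs_nonneg _) hC0
    have hindep : IndepFun S (Z k) P := by
      have h := hind.indepFun_finsetSum_of_notMem hme hk
      have : (∑ j ∈ s, Z j) = S := by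
        funext ω; simp [hS, Finset.sum_apply]
      rwa [this] at h
    have hcross : ∫ ω, Z k ω * S ω ∂P = 0 := by
      have := hindep.integral_fun_mul_eq_mul_integral hSme.aestronglyMeasurable (hme k).aestronglyMeasurable
      have h2 : ∫ ω, Z k ω * S ω ∂P = ∫ ω, S ω * Z k ω ∂P := by
        congr 1; funext ω; ring
      rw [h2, this, hmean k, mul_zero]
    have hexp : ∀ ω, (∑ i ∈ insert k s, Z i ω)^2
        = (Z k ω)^2 + (2 * (Z k ω * S ω) + (S ω)^2) := by
      intro ω; rw [Finset.sum_insert hk]; ring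
    rw [Finset.sum_insert hk, ← ih]
    calc ∫ ω, (∑ i ∈ insert k s, Z i ω)^2 ∂P
        = ∫ ω, ((Z k ω)^2 + (2 * (Z k ω * S ω) + (S ω)^2)) ∂P := by
          exact integral_congr_ae (Filter.Eventually.of_forall hexp)
      _ = (∫ ω, (Z k ω)^2 ∂P) + ((∫ ω, 2 * (Z k ω * S ω) ∂P) + ∫ ω, (S ω)^2 ∂P) := by
          have h3 : Integrable (fun ω => 2 * (Z k ω * S ω) + (S ω)^2) P :=
            (hZkS.const_mul 2).add hS2
          rw [integral_add hZk2 h3, integral_add (hZkS.const_mul 2) hS2]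
      _ = (∫ ω, (Z k ω)^2 ∂P) + ∫ ω, (S ω)^2 ∂P := by
          rw [integral_const_mul, hcross]; ring

end Stmt17Aux

section FourthMoment

variable [Nonempty Ω]

lemma Stmt17Aux.integrable_pow_mul_pow {Ω : Type} [MeasurableSpace Ω] {P : Measure Ω}
    [IsProbabilityMeasure P] {f g : Ω → ℝ} (hf : Measurable f) (hg : Measurable g)
    {Cf Cg : ℝ} (hCf0 : 0 ≤ Cf) (hCg0 : 0 ≤ Cg)
    (hCf : ∀ ω, |f ω| ≤ Cf) (hCg : ∀ ω, |g ω| ≤ Cg) (p q : ℕ) :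
    Integrable (fun ω => (f ω)^p * (g ω)^q) P := by
  refine Stmt17Aux.integrable_of_abs_le ((hf.pow_const p).mul (hg.pow_const q))
    (C := Cf^p * Cg^q) fun ω => ?_
  rw [_root_.abs_mul, _root_.abs_pow, _root_.abs_pow]
  exact mul_le_mul (pow_le_pow_left₀ (_root_.abs_nonneg _) (hCf ω) p)
    (pow_le_pow_left₀ (_root_.abs_nonneg _) (hCg ω) q)
    (pow_nonneg (_root_.abs_nonneg _) q) (pow_nonneg hCf0 p)

lemma Stmt17Aux.integral_sum_pow_four_le {Ω : Type} [MeasurableSpace Ω] {P : Measure Ω}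
    [IsProbabilityMeasure P] {ι : Type*} {Z : ι → Ω → ℝ} {C : ℝ}
    (hme : ∀ i, Measurable (Z i))
    (hind : ProbabilityTheory.iIndepFun Z P)
    (hmean : ∀ i, ∫ ω, Z i ω ∂P = 0)
    (hC : ∀ i ω, |Z i ω| ≤ C) (s : Finset ι) :
    ∫ ω, (∑ i ∈ s, Z i ω)^4 ∂P
      ≤ 6 * (∑ i ∈ s, ∫ ω, (Z i ω)^2 ∂P)^2 + ∑ i ∈ s, ∫ ω, (Z i ω)^4 ∂P := by
  classical
  have hΩ : Nonempty Ω := Stmt17Aux.nonempty_omega P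
  induction s using Finset.induction_on with
  | empty => simp
  | @insert k s hk ih =>
    have hC0 : 0 ≤ C := le_trans (_root_.abs_nonneg _) (hC k (Classical.arbitrary Ω))
    set S : Ω → ℝ := fun ω => ∑ i ∈ s, Z i ω with hS
    have hSme : Measurable S := Finset.measurable_sum s fun i _ => hme i
    set D : ℝ := s.card * C with hD
    have hD0 : 0 ≤ D := mul_nonneg (Nat.cast_nonneg _) hC0
    have hSb : ∀ ω, |S ω| ≤ D := Stmt17Aux.abs_sum_le s hC
    -- integrability of all the monomials
    have hint : ∀ p q : ℕ, Integrable (fun ω => (S ω)^p * (Z k ω)^q) P := fun p q =>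
      Stmt17Aux.integrable_pow_mul_pow hSme (hme k) hD0 hC0 hSb (hC k) p q
    have hZint : ∀ i, Integrable (Z i) P := fun i =>
      Stmt17Aux.integrable_of_abs_le (hme i) (hC i)
    -- independence of S and Z k
    have hSk : ProbabilityTheory.IndepFun S (Z k) P := by
      have h := hind.indepFun_finsetSum_of_notMem hme hk
      have h2 : (∑ j ∈ s, Z j) = S := by funext ω; simp [hS, Finset.sum_apply]
      rwa [h2] at h
    have hmul : ∀ p q : ℕ, ∫ ω, (S ω)^p * (Z k ω)^q ∂P
        = (∫ ω, (S ω)^p ∂P) * ∫ ω, (Z k ω)^q ∂P := by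
      intro p q
      have h := (hSk.comp (measurable_id.pow_const p) (measurable_id.pow_const q)).integral_fun_mul_eq_mul_integral
        ((hSme.pow_const p).aestronglyMeasurable) (((hme k).pow_const q).aestronglyMeasurable)
      simpa [Function.comp] using h
    have hSmean : ∫ ω, S ω ∂P = 0 := by
      have : ∫ ω, S ω ∂P = ∑ i ∈ s, ∫ ω, Z i ω ∂P :=
        integral_finset_sum s fun i _ => hZint i
      rw [this]
      exact Finset.sum_eq_zero fun i _ => hmean i
    have hE3 : ∫ ω, (S ω)^3 * Z k ω ∂P = 0 := by
      have := hmul 3 1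
      simp only [pow_one] at this
      rw [this, hmean k, mul_zero]
    have hE1 : ∫ ω, S ω * (Z k ω)^3 ∂P = 0 := by
      have := hmul 1 3
      simp only [pow_one] at this
      rw [this, hSmean, zero_mul]
    have hE22 : ∫ ω, (S ω)^2 * (Z k ω)^2 ∂P
        = (∫ ω, (S ω)^2 ∂P) * ∫ ω, (Z k ω)^2 ∂P := hmul 2 2
    -- expansion
    have hexp : ∀ ω, (∑ i ∈ insert k s, Z i ω)^4
        = (S ω)^4 + (4 * ((S ω)^3 * Z k ω) + (6 * ((S ω)^2 * (Z k ω)^2)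
          + (4 * (S ω * (Z k ω)^3) + (Z k ω)^4))) := by
      intro ω; rw [Finset.sum_insert hk]; ring
    have hS4 : Integrable (fun ω => (S ω)^4) P := by
      have := hint 4 0; simpa using this
    have hZ4 : Integrable (fun ω => (Z k ω)^4) P := by
      have := hint 0 4; simpa using this
    have h31 : Integrable (fun ω => (S ω)^3 * Z k ω) P := by
      have := hint 3 1; simpa using this
    have h13 : Integrable (fun ω => S ω * (Z k ω)^3) P := by
      have := hint 1 3; simpa using this
    have h22 : Integrable (fun ω => (S ω)^2 * (Z k ω)^2) P := hint 2 2
    have hi4 : Integrable (fun ω => 4 * (S ω * (Z k ω)^3) + (Z k ω)^4) P :=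
      (h13.const_mul 4).add hZ4
    have hi3 : Integrable (fun ω => 6 * ((S ω)^2 * (Z k ω)^2)
        + (4 * (S ω * (Z k ω)^3) + (Z k ω)^4)) P := (h22.const_mul 6).add hi4
    have hi2 : Integrable (fun ω => 4 * ((S ω)^3 * Z k ω) + (6 * ((S ω)^2 * (Z k ω)^2)
        + (4 * (S ω * (Z k ω)^3) + (Z k ω)^4))) P := (h31.const_mul 4).add hi3
    have hval : ∫ ω, (∑ i ∈ insert k s, Z i ω)^4 ∂P
        = ∫ ω, (S ω)^4 ∂P + 6 * ((∫ ω, (S ω)^2 ∂P) * ∫ ω, (Z k ω)^2 ∂P)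
          + ∫ ω, (Z k ω)^4 ∂P := by
      rw [integral_congr_ae (Filter.Eventually.of_forall hexp)]
      rw [integral_add hS4 hi2, integral_add (h31.const_mul 4) hi3,
        integral_add (h22.const_mul 6) hi4, integral_add (h13.const_mul 4) hZ4,
        integral_const_mul, integral_const_mul, integral_const_mul, hE3, hE1, hE22]
      ring
    have hSsq : ∫ ω, (S ω)^2 ∂P = ∑ i ∈ s, ∫ ω, (Z i ω)^2 ∂P :=
      Stmt17Aux.integral_sum_sq hme hind hmean hC s
    set V : ℝ := ∑ i ∈ s, ∫ ω, (Z i ω)^2 ∂P with hV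
    set F : ℝ := ∑ i ∈ s, ∫ ω, (Z i ω)^4 ∂P with hF
    have hV0 : 0 ≤ V := Finset.sum_nonneg fun i _ =>
      integral_nonneg fun ω => sq_nonneg _
    have hq0 : 0 ≤ ∫ ω, (Z k ω)^2 ∂P := integral_nonneg fun ω => sq_nonneg _
    rw [Finset.sum_insert hk, Finset.sum_insert hk, hval, hSsq]
    have hih : ∫ ω, (S ω)^4 ∂P ≤ 6 * V^2 + F := ih
    nlinarith [sq_nonneg (∫ ω, (Z k ω)^2 ∂P), sq_nonneg V]

end FourthMoment

end Stmt17AuxSection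

set_option maxHeartbeats 1000000 in

theorem stmt17
    (c : ℝ) (hc : 0 < c)
    (N : ℕ → ℕ)
    (hN : Tendsto (fun n : ℕ => (n : ℝ) / (N n : ℝ)) atTop (𝓝 c))
    (Ω : Type) [MeasurableSpace Ω] (P : Measure Ω) [IsProbabilityMeasure P]
    (x : (n : ℕ) → Fin n → Fin (N n) → Ω → ℂ)
    (hmeas : ∀ n i j, Measurable (x n i j))
    (hindep : ∀ n, ProbabilityTheory.iIndepFun
      (fun (ij : Fin n × Fin (N n)) ω => x n ij.1 ij.2 ω) P)
    (hmean : ∀ n i j, ∫ ω, x n i j ω ∂P = 0)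
    (hvar : ∀ n i j, ∫ ω, ‖x n i j ω‖ ^ 2 ∂P = 1)
    (η : ℕ → ℝ) (hηpos : ∀ n, 0 < η n)
    (hη0 : Tendsto η atTop (𝓝 0))
    (hηsqrt : Tendsto (fun n : ℕ => η n * Real.sqrt n) atTop atTop)
    (hLind : Tendsto (fun n : ℕ =>
      (1 / ((n : ℝ) * (N n : ℝ) * η n ^ 2)) * ∑ i : Fin n, ∑ j : Fin (N n),
        ∫ ω, (if η n * Real.sqrt n ≤ ‖x n i j ω‖
          then ‖x n i j ω‖ ^ 2 else 0) ∂P) atTop (𝓝 0)) :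
    ∀ᵐ ω ∂P, Tendsto (fun n : ℕ =>
      (1 / ((n : ℝ) * (N n : ℝ))) * ∑ i : Fin n, ∑ j : Fin (N n),
        (if ‖x n i j ω‖ < η n * Real.sqrt n
          then ‖x n i j ω‖ ^ 2 else 0)) atTop (𝓝 1) := by
  classical
  -- abbreviations
  obtain ⟨a, hadef⟩ : ∃ a : ℕ → ℝ, ∀ n, a n = η n * Real.sqrt n := ⟨_, fun _ => rfl⟩
  have ha0 : ∀ n, 0 ≤ a n := fun n => by
    rw [hadef]; exact mul_nonneg (hηpos n).le (Real.sqrt_nonneg _)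
  obtain ⟨Y, hYdef⟩ : ∃ Y : (n : ℕ) → Fin n → Fin (N n) → Ω → ℝ,
      ∀ n i j ω, Y n i j ω = if ‖x n i j ω‖ < a n
        then ‖x n i j ω‖ ^ 2 else 0 := ⟨_, fun _ _ _ _ => rfl⟩
  have hxm : ∀ n i j, Measurable fun ω => ‖x n i j ω‖ := fun n i j =>
    continuous_norm.measurable.comp (hmeas n i j)
  have hYme : ∀ n i j, Measurable (Y n i j) := by
    intro n i j
    have h : Y n i j = fun ω => if ‖x n i j ω‖ < a n
        then ‖x n i j ω‖ ^ 2 else 0 := funext fun ω => hYdef n i j ω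
    rw [h]
    exact Measurable.ite (measurableSet_lt (hxm n i j) measurable_const)
      ((hxm n i j).pow_const 2) measurable_const
  have hY0 : ∀ n i j ω, 0 ≤ Y n i j ω := by
    intro n i j ω; rw [hYdef]; split
    · exact sq_nonneg _
    · exact le_refl 0
  have hYa : ∀ n i j ω, Y n i j ω ≤ (a n) ^ 2 := by
    intro n i j ω; rw [hYdef]; split
    · next h => exact pow_le_pow_left₀ (norm_nonneg _) h.le 2
    · exact sq_nonneg _
  have hYx : ∀ n i j ω, Y n i j ω ≤ ‖x n i j ω‖ ^ 2 := by
    intro n i j ω; rw [hYdef]; split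
    · exact le_refl _
    · exact sq_nonneg _
  have hxint : ∀ n i j, Integrable (fun ω => ‖x n i j ω‖ ^ 2) P := by
    intro n i j
    by_contra h
    have h1 := hvar n i j
    rw [integral_undef h] at h1
    exact zero_ne_one h1
  have hYint : ∀ n i j, Integrable (Y n i j) P := by
    intro n i j
    refine (hxint n i j).mono (hYme n i j).aestronglyMeasurable
      (Filter.Eventually.of_forall fun ω => ?_)
    rw [Real.norm_eq_abs, Real.norm_eq_abs, _root_.abs_of_nonneg (hY0 n i j ω),
      _root_.abs_of_nonneg (sq_nonneg _)]
    exact hYx n i j ω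
  -- the tail integrals
  obtain ⟨t, htdef⟩ : ∃ t : (n : ℕ) → Fin n → Fin (N n) → ℝ, ∀ n i j,
      t n i j = ∫ ω, (if a n ≤ ‖x n i j ω‖
        then ‖x n i j ω‖ ^ 2 else 0) ∂P := ⟨_, fun _ _ _ => rfl⟩
  obtain ⟨m, hmdef⟩ : ∃ m : (n : ℕ) → Fin n → Fin (N n) → ℝ, ∀ n i j,
      m n i j = ∫ ω, Y n i j ω ∂P := ⟨_, fun _ _ _ => rfl⟩
  have hY'int : ∀ n i j, Integrable (fun ω => if a n ≤ ‖x n i j ω‖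
      then ‖x n i j ω‖ ^ 2 else 0) P := by
    intro n i j
    refine (hxint n i j).mono (Measurable.ite (measurableSet_le measurable_const (hxm n i j))
      ((hxm n i j).pow_const 2) measurable_const).aestronglyMeasurable
      (Filter.Eventually.of_forall fun ω => ?_)
    have h0 : (0:ℝ) ≤ if a n ≤ ‖x n i j ω‖
        then ‖x n i j ω‖ ^ 2 else 0 := by
      split
      · exact sq_nonneg _
      · exact le_refl 0
    rw [Real.norm_eq_abs, Real.norm_eq_abs, _root_.abs_of_nonneg h0,
      _root_.abs_of_nonneg (sq_nonneg _)]
    split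
    · exact le_refl _
    · exact sq_nonneg _
  have hmt : ∀ n i j, m n i j + t n i j = 1 := by
    intro n i j
    rw [hmdef, htdef, ← integral_add (hYint n i j) (hY'int n i j), ← hvar n i j]
    refine integral_congr_ae (Filter.Eventually.of_forall fun ω => ?_)
    show Y n i j ω + (if a n ≤ ‖x n i j ω‖
      then ‖x n i j ω‖ ^ 2 else 0) = ‖x n i j ω‖ ^ 2
    rw [hYdef]
    by_cases h : ‖x n i j ω‖ < a n
    · simp [h, not_le.mpr h]
    · simp [h, not_lt.mp h]
  have hm0 : ∀ n i j, 0 ≤ m n i j := fun n i j => by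
    rw [hmdef]; exact integral_nonneg (hY0 n i j)
  have hm1 : ∀ n i j, m n i j ≤ 1 := fun n i j => by
    rw [hmdef, ← hvar n i j]
    exact integral_mono (hYint n i j) (hxint n i j) (hYx n i j)
  -- the centered variables
  obtain ⟨Z, hZdef⟩ : ∃ Z : (n : ℕ) → Fin n × Fin (N n) → Ω → ℝ,
      ∀ n ij ω, Z n ij ω = Y n ij.1 ij.2 ω - m n ij.1 ij.2 := ⟨_, fun _ _ _ => rfl⟩
  have hZme : ∀ n ij, Measurable (Z n ij) := by
    intro n ij
    have h : Z n ij = fun ω => Y n ij.1 ij.2 ω - m n ij.1 ij.2 :=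
      funext fun ω => hZdef n ij ω
    rw [h]
    exact (hYme n ij.1 ij.2).sub measurable_const
  have hZint : ∀ n ij, Integrable (Z n ij) P := by
    intro n ij
    have h : Z n ij = fun ω => Y n ij.1 ij.2 ω - m n ij.1 ij.2 :=
      funext fun ω => hZdef n ij ω
    rw [h]
    exact (hYint n ij.1 ij.2).sub (integrable_const _)
  have hZmean : ∀ n ij, ∫ ω, Z n ij ω ∂P = 0 := by
    intro n ij
    have h : ∫ ω, Z n ij ω ∂P = ∫ ω, (Y n ij.1 ij.2 ω - m n ij.1 ij.2) ∂P :=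
      integral_congr_ae (Filter.Eventually.of_forall fun ω => by rw [hZdef])
    rw [h, integral_sub (hYint n ij.1 ij.2) (integrable_const _), integral_const,
      ← hmdef]
    simp
  have hZind : ∀ n, ProbabilityTheory.iIndepFun (Z n) P := by
    intro n
    have h := (hindep n).comp
      (fun ij (z : ℂ) => (if ‖z‖ < a n then ‖z‖ ^ 2 else 0)
        - m n ij.1 ij.2)
      (fun ij => (Measurable.ite (measurableSet_lt continuous_norm.measurable
        measurable_const) (continuous_norm.measurable.pow_const 2)
        measurable_const).sub measurable_const)
    have h2 : (fun ij => (fun (z : ℂ) => (if ‖z‖ < a n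
        then ‖z‖ ^ 2 else 0) - m n ij.1 ij.2) ∘ (fun ω => x n ij.1 ij.2 ω))
        = Z n := by
      funext ij ω
      simp only [Function.comp_apply]
      rw [hZdef, hYdef]
    rwa [h2] at h
  have hZbd : ∀ n ij ω, |Z n ij ω| ≤ (a n) ^ 2 + 1 := by
    intro n ij ω
    rw [hZdef]
    rw [abs_le]
    constructor
    · have := hY0 n ij.1 ij.2 ω
      have := hm1 n ij.1 ij.2
      have := sq_nonneg (a n)
      linarith
    · have := hYa n ij.1 ij.2 ω
      have := hm0 n ij.1 ij.2
      linarith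
  -- integrability of powers of Z
  have hZsqint : ∀ n ij, Integrable (fun ω => (Z n ij ω)^2) P := by
    intro n ij
    refine Stmt17Aux.integrable_of_abs_le ((hZme n ij).pow_const 2)
      (C := ((a n)^2+1)^2) fun ω => ?_
    rw [_root_.abs_pow]
    exact pow_le_pow_left₀ (_root_.abs_nonneg _) (hZbd n ij ω) 2
  have hZ4int : ∀ n ij, Integrable (fun ω => (Z n ij ω)^4) P := by
    intro n ij
    refine Stmt17Aux.integrable_of_abs_le ((hZme n ij).pow_const 4)
      (C := ((a n)^2+1)^4) fun ω => ?_
    rw [_root_.abs_pow]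
    exact pow_le_pow_left₀ (_root_.abs_nonneg _) (hZbd n ij ω) 4
  have hYsqint : ∀ n i j, Integrable (fun ω => (Y n i j ω)^2) P := by
    intro n i j
    refine Stmt17Aux.integrable_of_abs_le ((hYme n i j).pow_const 2)
      (C := ((a n)^2)^2) fun ω => ?_
    rw [_root_.abs_pow]
    refine pow_le_pow_left₀ (_root_.abs_nonneg _) ?_ 2
    rw [_root_.abs_of_nonneg (hY0 n i j ω)]
    exact hYa n i j ω
  -- second moment bound
  have hq : ∀ n ij, ∫ ω, (Z n ij ω)^2 ∂P ≤ (a n)^2 := by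
    intro n ij
    obtain ⟨i, j⟩ := ij
    have e0 : ∀ ω, (Z n (i,j) ω)^2
        = (Y n i j ω)^2 - (2 * m n i j) * Y n i j ω + (m n i j)^2 := by
      intro ω
      have h := hZdef n (i,j) ω
      simp only at h
      rw [h]; ring
    have e1 : ∫ ω, (Z n (i,j) ω)^2 ∂P
        = ∫ ω, (Y n i j ω)^2 ∂P - (2 * m n i j) * m n i j + (m n i j)^2 := by
      have i1 : Integrable (fun ω => (Y n i j ω)^2 - (2 * m n i j) * Y n i j ω) P :=
        (hYsqint n i j).sub ((hYint n i j).const_mul _)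
      rw [integral_congr_ae (Filter.Eventually.of_forall e0),
        integral_add i1 (integrable_const _),
        integral_sub (hYsqint n i j) ((hYint n i j).const_mul _), integral_const_mul,
        integral_const, ← hmdef]
      simp
    have e2 : ∫ ω, (Y n i j ω)^2 ∂P ≤ (a n)^2 * m n i j := by
      rw [hmdef, ← integral_const_mul]
      refine integral_mono (hYsqint n i j) ((hYint n i j).const_mul _) fun ω => ?_
      have h1 := hYa n i j ω
      have h2 := hY0 n i j ω
      nlinarith
    rw [e1]
    nlinarith [hm0 n i j, hm1 n i j, sq_nonneg (a n)]
  -- fourth moment bound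
  have hq4 : ∀ n ij, ∫ ω, (Z n ij ω)^4 ∂P ≤ ((a n)^2+1)^2 * (a n)^2 := by
    intro n ij
    have e1 : ∫ ω, (Z n ij ω)^4 ∂P ≤ ∫ ω, ((a n)^2+1)^2 * (Z n ij ω)^2 ∂P := by
      refine integral_mono (hZ4int n ij) ((hZsqint n ij).const_mul _) fun ω => ?_
      have h2 : (Z n ij ω)^2 ≤ ((a n)^2+1)^2 := by
        rw [← _root_.sq_abs]
        exact pow_le_pow_left₀ (_root_.abs_nonneg _) (hZbd n ij ω) 2
      nlinarith [sq_nonneg (Z n ij ω)]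
    rw [integral_const_mul] at e1
    refine e1.trans ?_
    refine mul_le_mul_of_nonneg_left (hq n ij) ?_
    positivity
  -- fourth moment of the full sum
  have hT4 : ∀ n, ∫ ω, (∑ ij : Fin n × Fin (N n), Z n ij ω)^4 ∂P
      ≤ 6 * (((n:ℝ) * (N n)) * (a n)^2)^2
        + ((n:ℝ) * (N n)) * (((a n)^2+1)^2 * (a n)^2) := by
    intro n
    refine (Stmt17Aux.integral_sum_pow_four_le (hZme n) (hZind n) (hZmean n) (hZbd n)
      Finset.univ).trans ?_
    have hcard : ((Finset.univ : Finset (Fin n × Fin (N n))).card : ℝ)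
        = (n : ℝ) * (N n : ℝ) := by
      simp [Finset.card_univ]
    have h1 : ∑ ij : Fin n × Fin (N n), ∫ ω, (Z n ij ω)^2 ∂P
        ≤ ((n:ℝ)*(N n)) * (a n)^2 := by
      calc ∑ ij : Fin n × Fin (N n), ∫ ω, (Z n ij ω)^2 ∂P
          ≤ ∑ _ij : Fin n × Fin (N n), (a n)^2 :=
            Finset.sum_le_sum fun ij _ => hq n ij
        _ = ((n:ℝ)*(N n)) * (a n)^2 := by
            rw [Finset.sum_const, nsmul_eq_mul, hcard]
    have h1' : 0 ≤ ∑ ij : Fin n × Fin (N n), ∫ ω, (Z n ij ω)^2 ∂P :=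
      Finset.sum_nonneg fun ij _ => integral_nonneg fun ω => sq_nonneg _
    have h2 : ∑ ij : Fin n × Fin (N n), ∫ ω, (Z n ij ω)^4 ∂P
        ≤ ((n:ℝ)*(N n)) * (((a n)^2+1)^2 * (a n)^2) := by
      calc ∑ ij : Fin n × Fin (N n), ∫ ω, (Z n ij ω)^4 ∂P
          ≤ ∑ _ij : Fin n × Fin (N n), ((a n)^2+1)^2 * (a n)^2 :=
            Finset.sum_le_sum fun ij _ => hq4 n ij
        _ = ((n:ℝ)*(N n)) * (((a n)^2+1)^2 * (a n)^2) := by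
            rw [Finset.sum_const, nsmul_eq_mul, hcard]
    have h3 := pow_le_pow_left₀ h1' h1 2
    linarith
  -- eventual regime facts
  have hev1 : ∀ᶠ n : ℕ in atTop, 1 ≤ (a n)^2 := by
    filter_upwards [hηsqrt.eventually_ge_atTop 1] with n hn
    rw [← hadef] at hn
    nlinarith
  have hev2 : ∀ᶠ n : ℕ in atTop, η n ≤ 1 :=
    hη0.eventually (eventually_le_nhds zero_lt_one)
  have hev3 : ∀ᶠ n : ℕ in atTop, (n:ℝ) / (N n) ∈ Set.Ioo (c/2) (3*c/2) :=
    hN (Ioo_mem_nhds (by linarith) (by linarith))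
  have hNfacts : ∀ n : ℕ, (n:ℝ) / (N n) ∈ Set.Ioo (c/2) (3*c/2) →
      (0:ℝ) < (N n : ℝ) ∧ (1:ℝ) ≤ (N n : ℝ) ∧ (n:ℝ) < 3*c/2 * (N n : ℝ) := by
    intro n hn
    have hNpos : (0:ℝ) < (N n : ℝ) := by
      rcases eq_or_lt_of_le (Nat.cast_nonneg (N n) : (0:ℝ) ≤ (N n : ℝ)) with h | h
      · exfalso
        rw [← h, div_zero] at hn
        have := hn.1
        linarith
      · exact h
    have h1N : (1:ℝ) ≤ (N n : ℝ) := by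
      have := Nat.cast_pos.mp hNpos
      exact_mod_cast this
    exact ⟨hNpos, h1N, (div_lt_iff₀ hNpos).mp hn.2⟩
  -- Borel-Cantelli step
  have key : ∀ ε : ℝ, 0 < ε → ∀ᵐ ω ∂P, ∀ᶠ n : ℕ in atTop,
      |∑ ij : Fin n × Fin (N n), Z n ij ω| < ε * ((n:ℝ) * (N n)) := by
    intro ε hε
    have hcheb : ∀ᶠ n : ℕ in atTop,
        (P {ω | ε * ((n:ℝ)*(N n)) ≤ |∑ ij : Fin n × Fin (N n), Z n ij ω|}).toReal
        ≤ (23 * c^2 / ε^4) * (1 / (n:ℝ)^2) := by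
      filter_upwards [hev1, hev2, hev3, eventually_ge_atTop 1] with n h1 h2 h3 h4
      obtain ⟨hNpos, h1N, hvw0⟩ := hNfacts n h3
      have hv1 : (1:ℝ) ≤ (n:ℝ) := by exact_mod_cast h4
      have hTme : Measurable (fun ω => ∑ ij : Fin n × Fin (N n), Z n ij ω) :=
        Finset.measurable_sum _ (fun ij _ => hZme n ij)
      have hTbd : ∀ ω, |∑ ij : Fin n × Fin (N n), Z n ij ω|
          ≤ ((Finset.univ : Finset (Fin n × Fin (N n))).card : ℝ) * ((a n)^2+1) :=
        Stmt17Aux.abs_sum_le _ (hZbd n)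
      have hT4int : Integrable (fun ω => (∑ ij : Fin n × Fin (N n), Z n ij ω)^4) P := by
        refine Stmt17Aux.integrable_of_abs_le (hTme.pow_const 4)
          (C := (((Finset.univ : Finset (Fin n × Fin (N n))).card : ℝ) * ((a n)^2+1))^4)
          fun ω => ?_
        rw [_root_.abs_pow]
        exact pow_le_pow_left₀ (_root_.abs_nonneg _) (hTbd ω) 4
      have hb : 0 < ε * ((n:ℝ)*(N n)) := by positivity
      have hmar := mul_meas_ge_le_integral_of_nonneg (μ := P)
        (f := fun ω => (∑ ij : Fin n × Fin (N n), Z n ij ω)^4)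
        (Filter.Eventually.of_forall fun ω => by positivity) hT4int ((ε*((n:ℝ)*(N n)))^4)
      have hsub : {ω | ε*((n:ℝ)*(N n)) ≤ |∑ ij : Fin n × Fin (N n), Z n ij ω|}
          ⊆ {ω | (ε*((n:ℝ)*(N n)))^4 ≤ (∑ ij : Fin n × Fin (N n), Z n ij ω)^4} := by
        intro ω hω
        simp only [Set.mem_setOf_eq] at hω ⊢
        calc (ε*((n:ℝ)*(N n)))^4 ≤ |∑ ij : Fin n × Fin (N n), Z n ij ω|^4 :=
              pow_le_pow_left₀ hb.le hω 4
          _ = (∑ ij : Fin n × Fin (N n), Z n ij ω)^4 := by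
              rw [_root_.pow_abs]
              exact _root_.abs_of_nonneg (by positivity)
      have hmono : (P {ω | ε*((n:ℝ)*(N n)) ≤ |∑ ij : Fin n × Fin (N n), Z n ij ω|}).toReal
          ≤ (P {ω | (ε*((n:ℝ)*(N n)))^4
            ≤ (∑ ij : Fin n × Fin (N n), Z n ij ω)^4}).toReal :=
        ENNReal.toReal_mono (measure_ne_top P _) (measure_mono hsub)
      have hp1 : (P {ω | ε*((n:ℝ)*(N n)) ≤ |∑ ij : Fin n × Fin (N n), Z n ij ω|}).toReal
          ≤ (6 * (((n:ℝ) * (N n)) * (a n)^2)^2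
            + ((n:ℝ) * (N n)) * (((a n)^2+1)^2 * (a n)^2)) / (ε*((n:ℝ)*(N n)))^4 := by
        rw [le_div_iff₀ (by positivity)]
        calc (P {ω | ε*((n:ℝ)*(N n)) ≤ |∑ ij : Fin n × Fin (N n), Z n ij ω|}).toReal
              * (ε*((n:ℝ)*(N n)))^4
            ≤ (P {ω | (ε*((n:ℝ)*(N n)))^4
                ≤ (∑ ij : Fin n × Fin (N n), Z n ij ω)^4}).toReal
              * (ε*((n:ℝ)*(N n)))^4 :=
              mul_le_mul_of_nonneg_right hmono (by positivity)
          _ = (ε*((n:ℝ)*(N n)))^4 * (P {ω | (ε*((n:ℝ)*(N n)))^4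
                ≤ (∑ ij : Fin n × Fin (N n), Z n ij ω)^4}).toReal := mul_comm _ _
          _ ≤ ∫ ω, (∑ ij : Fin n × Fin (N n), Z n ij ω)^4 ∂P := hmar
          _ ≤ _ := hT4 n
      refine hp1.trans ?_
      -- now pure arithmetic
      have hα1 : 1 ≤ (a n)^2 := h1
      have hα0 : (0:ℝ) ≤ (a n)^2 := sq_nonneg _
      have hαv : (a n)^2 ≤ (n:ℝ) := by
        have he : (a n)^2 = η n^2 * (n:ℝ) := by
          rw [hadef, mul_pow, Real.sq_sqrt (Nat.cast_nonneg n)]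
        rw [he]
        have hη2 : η n^2 ≤ 1 := by nlinarith [(hηpos n).le]
        have h0n : (0:ℝ) ≤ (n:ℝ) := Nat.cast_nonneg n
        nlinarith [mul_le_mul_of_nonneg_right hη2 h0n]
      have hv2w : (n:ℝ)^2 ≤ 9*c^2/4 * (N n : ℝ)^2 := by
        have h := mul_self_le_mul_self (Nat.cast_nonneg n : (0:ℝ) ≤ (n:ℝ)) hvw0.le
        nlinarith [h]
      rw [div_le_iff₀ (by positivity)]
      have hRHS : (23*c^2/ε^4 * (1/(n:ℝ)^2)) * (ε*((n:ℝ)*(N n)))^4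
          = 23*c^2 * (n:ℝ)^2 * (N n : ℝ)^4 := by
        field_simp
      rw [hRHS]
      have hα2 : ((a n)^2)^2 ≤ (n:ℝ)^2 := pow_le_pow_left₀ hα0 hαv 2
      have hα3 : ((a n)^2)^3 ≤ (n:ℝ)^3 := pow_le_pow_left₀ hα0 hαv 3
      have haux : ((a n)^2+1)^2 * (a n)^2 ≤ 4 * ((a n)^2)^3 := by
        nlinarith [sq_nonneg ((a n)^2 - 1), hα0, hα1]
      have b1 : 6 * (((n:ℝ) * (N n)) * (a n)^2)^2 ≤ (27/2)*c^2*(n:ℝ)^2*(N n:ℝ)^4 := by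
        calc 6 * (((n:ℝ) * (N n)) * (a n)^2)^2
            = 6*(n:ℝ)^2*(N n:ℝ)^2 * ((a n)^2)^2 := by ring
          _ ≤ 6*(n:ℝ)^2*(N n:ℝ)^2 * (n:ℝ)^2 :=
              mul_le_mul_of_nonneg_left hα2 (by positivity)
          _ ≤ 6*(n:ℝ)^2*(N n:ℝ)^2 * (9*c^2/4*(N n:ℝ)^2) :=
              mul_le_mul_of_nonneg_left hv2w (by positivity)
          _ = (27/2)*c^2*(n:ℝ)^2*(N n:ℝ)^4 := by ring
      have b2 : ((n:ℝ) * (N n)) * (((a n)^2+1)^2 * (a n)^2)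
          ≤ 9*c^2*(n:ℝ)^2*(N n:ℝ)^4 := by
        have s1 : ((n:ℝ) * (N n)) * (((a n)^2+1)^2 * (a n)^2)
            ≤ ((n:ℝ) * (N n)) * (4 * ((a n)^2)^3) :=
          mul_le_mul_of_nonneg_left haux (by positivity)
        have s2 : ((n:ℝ) * (N n)) * (4 * ((a n)^2)^3) ≤ ((n:ℝ) * (N n)) * (4 * (n:ℝ)^3) :=
          mul_le_mul_of_nonneg_left (by linarith) (by positivity)
        have s3 : ((n:ℝ) * (N n)) * (4 * (n:ℝ)^3) = 4 * (n:ℝ)^2 * (n:ℝ)^2 * (N n:ℝ) := by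
          ring
        have s4 : 4 * (n:ℝ)^2 * (n:ℝ)^2 * (N n:ℝ)
            ≤ 4 * (n:ℝ)^2 * (9*c^2/4 * (N n:ℝ)^2) * (N n:ℝ) := by
          have h := mul_le_mul_of_nonneg_left hv2w
            (by positivity : (0:ℝ) ≤ 4*(n:ℝ)^2)
          exact mul_le_mul_of_nonneg_right h (Nat.cast_nonneg (N n))
        have hw34 : (N n:ℝ)^3 ≤ (N n:ℝ)^4 := by
          calc (N n:ℝ)^3 = (N n:ℝ)^3 * 1 := by ring
            _ ≤ (N n:ℝ)^3 * (N n:ℝ) :=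
                mul_le_mul_of_nonneg_left h1N (by positivity)
            _ = (N n:ℝ)^4 := by ring
        have s5 : 4 * (n:ℝ)^2 * (9*c^2/4 * (N n:ℝ)^2) * (N n:ℝ)
            ≤ 9*c^2*(n:ℝ)^2*(N n:ℝ)^4 := by
          calc 4 * (n:ℝ)^2 * (9*c^2/4 * (N n:ℝ)^2) * (N n:ℝ)
              = 9*c^2*(n:ℝ)^2 * (N n:ℝ)^3 := by ring
            _ ≤ 9*c^2*(n:ℝ)^2 * (N n:ℝ)^4 :=
                mul_le_mul_of_nonneg_left hw34 (by positivity)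
            _ = 9*c^2*(n:ℝ)^2*(N n:ℝ)^4 := by ring
        linarith
      have hfin0 : (0:ℝ) ≤ c^2*(n:ℝ)^2*(N n:ℝ)^4 := by positivity
      linarith
    set A : ℕ → Set Ω := fun n =>
      {ω | ε * ((n:ℝ)*(N n)) ≤ |∑ ij : Fin n × Fin (N n), Z n ij ω|} with hA
    have hpnn : ∀ n, 0 ≤ (P (A n)).toReal := fun n => ENNReal.toReal_nonneg
    have hsumm : Summable (fun n => (P (A n)).toReal) := by
      refine summable_of_isBigO_nat (g := fun n : ℕ => 1/(n:ℝ)^2)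
        (Real.summable_one_div_nat_pow.mpr one_lt_two) ?_
      rw [Asymptotics.isBigO_iff]
      refine ⟨23*c^2/ε^4, ?_⟩
      filter_upwards [hcheb] with n h1
      rw [Real.norm_eq_abs, Real.norm_eq_abs, _root_.abs_of_nonneg (hpnn n),
        _root_.abs_of_nonneg (by positivity : (0:ℝ) ≤ 1/(n:ℝ)^2)]
      exact h1
    have htsum : (∑' n, P (A n)) ≠ ⊤ := by
      have h1 : ∀ n, P (A n) = ENNReal.ofReal ((P (A n)).toReal) := fun n =>
        (ENNReal.ofReal_toReal (measure_ne_top P _)).symm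
      rw [tsum_congr h1, ← ENNReal.ofReal_tsum_of_nonneg hpnn hsumm]
      exact ENNReal.ofReal_ne_top
    filter_upwards [MeasureTheory.ae_eventually_notMem htsum] with ω hω
    filter_upwards [hω] with n hn
    simp only [hA, Set.mem_setOf_eq] at hn
    exact not_le.mp hn
  -- the deterministic part: the expectation tends to 1
  obtain ⟨μs, hμdef⟩ : ∃ μs : ℕ → ℝ, ∀ n, μs n
      = (1/((n:ℝ)*(N n))) * ∑ i : Fin n, ∑ j : Fin (N n), m n i j := ⟨_, fun _ => rfl⟩
  have hμ : Tendsto μs atTop (𝓝 1) := by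
    have h2 : Tendsto (fun n => η n^2) atTop (𝓝 0) := by
      have := hη0.pow 2
      simpa using this
    have h3 : Tendsto (fun n : ℕ => ((1 / ((n : ℝ) * (N n : ℝ) * η n ^ 2)) *
        ∑ i : Fin n, ∑ j : Fin (N n), t n i j)) atTop (𝓝 0) := by
      have he : (fun n : ℕ => (1 / ((n : ℝ) * (N n : ℝ) * η n ^ 2)) *
          ∑ i : Fin n, ∑ j : Fin (N n), t n i j)
          = (fun n : ℕ => (1 / ((n : ℝ) * (N n : ℝ) * η n ^ 2)) *
            ∑ i : Fin n, ∑ j : Fin (N n), ∫ ω, (if η n * Real.sqrt n ≤ ‖x n i j ω‖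
              then ‖x n i j ω‖ ^ 2 else 0) ∂P) := by
        funext n
        congr 1
        refine Finset.sum_congr rfl fun i _ => Finset.sum_congr rfl fun j _ => ?_
        rw [htdef, hadef]
      rw [he]
      exact hLind
    have hL : Tendsto (fun n => 1 - η n^2 * ((1 / ((n : ℝ) * (N n : ℝ) * η n ^ 2)) *
        ∑ i : Fin n, ∑ j : Fin (N n), t n i j)) atTop (𝓝 1) := by
      have := (tendsto_const_nhds (x := (1:ℝ)) (f := atTop)).sub (h2.mul h3)
      simpa using this
    refine hL.congr' ?_
    filter_upwards [hev3, eventually_ge_atTop 1] with n h3' h4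
    obtain ⟨hNpos, h1N, _⟩ := hNfacts n h3'
    have hv1 : (1:ℝ) ≤ (n:ℝ) := by exact_mod_cast h4
    have hn0 : (n:ℝ) ≠ 0 := by positivity
    have hN0 : (N n : ℝ) ≠ 0 := hNpos.ne'
    have hηn : η n ≠ 0 := (hηpos n).ne'
    have hsum : ∑ i : Fin n, ∑ j : Fin (N n), m n i j
        = (n:ℝ)*(N n) - ∑ i : Fin n, ∑ j : Fin (N n), t n i j := by
      have hone : ∀ i j, m n i j = 1 - t n i j := fun i j => by linarith [hmt n i j]
      calc ∑ i : Fin n, ∑ j : Fin (N n), m n i j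
          = ∑ i : Fin n, ∑ j : Fin (N n), (1 - t n i j) :=
            Finset.sum_congr rfl fun i _ => Finset.sum_congr rfl fun j _ => hone i j
        _ = ∑ i : Fin n, ((N n : ℝ) - ∑ j : Fin (N n), t n i j) := by
            refine Finset.sum_congr rfl fun i _ => ?_
            rw [Finset.sum_sub_distrib]
            simp
        _ = (n:ℝ)*(N n) - ∑ i : Fin n, ∑ j : Fin (N n), t n i j := by
            rw [Finset.sum_sub_distrib]
            simp [mul_comm]
    rw [hμdef, hsum]
    field_simp
  -- assembling
  have hae : ∀ᵐ ω ∂P, ∀ k : ℕ, ∀ᶠ n : ℕ in atTop,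
      |∑ ij : Fin n × Fin (N n), Z n ij ω| < (1/((k:ℝ)+1)) * ((n:ℝ) * (N n)) :=
    ae_all_iff.mpr fun k => key (1/((k:ℝ)+1)) (by positivity)
  filter_upwards [hae] with ω hω
  have hdecomp : ∀ n : ℕ, (1/((n:ℝ)*(N n))) * (∑ i : Fin n, ∑ j : Fin (N n),
      (if ‖x n i j ω‖ < η n * Real.sqrt n
        then ‖x n i j ω‖ ^ 2 else 0))
      = μs n + (1/((n:ℝ)*(N n))) * ∑ ij : Fin n × Fin (N n), Z n ij ω := by
    intro n
    have h1 : ∑ ij : Fin n × Fin (N n), Z n ij ω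
        = (∑ i : Fin n, ∑ j : Fin (N n), Y n i j ω)
          - ∑ i : Fin n, ∑ j : Fin (N n), m n i j := by
      calc ∑ ij : Fin n × Fin (N n), Z n ij ω
          = ∑ ij : Fin n × Fin (N n), (Y n ij.1 ij.2 ω - m n ij.1 ij.2) :=
            Finset.sum_congr rfl fun ij _ => hZdef n ij ω
        _ = ∑ ij : Fin n × Fin (N n), Y n ij.1 ij.2 ω
            - ∑ ij : Fin n × Fin (N n), m n ij.1 ij.2 := Finset.sum_sub_distrib _ _
        _ = _ := by rw [Fintype.sum_prod_type, Fintype.sum_prod_type]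
    have h3 : ∑ i : Fin n, ∑ j : Fin (N n), (if ‖x n i j ω‖ < η n * Real.sqrt n
        then ‖x n i j ω‖ ^ 2 else 0) = ∑ i : Fin n, ∑ j : Fin (N n), Y n i j ω :=
      Finset.sum_congr rfl fun i _ => Finset.sum_congr rfl fun j _ =>
        by rw [hYdef, hadef]
    rw [h3, h1, hμdef]
    ring
  refine (tendsto_congr hdecomp).mpr ?_
  have hT0 : Tendsto (fun n : ℕ => (1/((n:ℝ)*(N n)))
      * ∑ ij : Fin n × Fin (N n), Z n ij ω) atTop (𝓝 0) := by
    rw [NormedAddCommGroup.tendsto_nhds_zero]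
    intro ε hε
    obtain ⟨k, hk⟩ := exists_nat_one_div_lt hε
    filter_upwards [hω k, hev3, eventually_ge_atTop 1] with n h1 h3 h4
    obtain ⟨hNpos, h1N, _⟩ := hNfacts n h3
    have hv1 : (1:ℝ) ≤ (n:ℝ) := by exact_mod_cast h4
    have hvw : (0:ℝ) < (n:ℝ)*(N n) := by positivity
    rw [Real.norm_eq_abs, _root_.abs_mul,
      _root_.abs_of_nonneg (by positivity : (0:ℝ) ≤ 1/((n:ℝ)*(N n)))]
    have h5 : 1/((n:ℝ)*(N n)) * |∑ ij : Fin n × Fin (N n), Z n ij ω|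
        < 1/((n:ℝ)*(N n)) * ((1/((k:ℝ)+1)) * ((n:ℝ)*(N n))) :=
      mul_lt_mul_of_pos_left h1 (by positivity)
    have h6 : 1/((n:ℝ)*(N n)) * ((1/((k:ℝ)+1)) * ((n:ℝ)*(N n))) = 1/((k:ℝ)+1) := by
      field_simp
    rw [h6] at h5
    exact h5.trans hk
  have hfin := hμ.add hT0
  simpa using hfin


end
end
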